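/- arXiv:1805.02136 — 6 statements merged into one kernel-verified Lean document; each statement's English description precedes it below -/
import Mathlib

section
/- Let ε > 0 and let L ≥ 3 be an integer with 2ε < 1/L. Then ⌈log(1/(Lε))⌉ + 2L − 4 ≤ N*(ε, 1/L, L) ≤ ⌈log(1/(Lε))⌉ + 2L. -/
open Set

/-- A learner strategy of length `N` with seed space `Fin Y` (representing `{1,…,𝒴}`):
query functions mapping previous responses and the seed to a query in `[0,1)`,
and an estimation function mapping all responses and the seed to an estimate in `[0,1)`. -/
structure Strategy (N Y : ℕ) where
  query : (k : Fin N) → (Fin (k : ℕ) → Bool) → Fin Y → ℝ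
  estimate : (Fin N → Bool) → Fin Y → ℝ
  query_mem : ∀ k h y, query k h y ∈ Set.Ico (0 : ℝ) 1
  estimate_mem : ∀ r y, estimate r y ∈ Set.Ico (0 : ℝ) 1

namespace Strategy

variable {N Y : ℕ}

/-- The first `k` responses when the true value is `x` and the seed is `y`:
`r_k = 1` iff `x ≥ q_k`. -/
noncomputable def resps (φ : Strategy N Y) (x : ℝ) (y : Fin Y) : (k : ℕ) → Fin k → Bool
  | 0 => Fin.elim0
  | k + 1 => fun i =>
      if h : (i : ℕ) < k then resps φ x y k ⟨i, h⟩
      else if hk : k < N then decide (φ.query ⟨k, hk⟩ (resps φ x y k) y ≤ x)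
      else false

/-- The query sequence `q̄(x,y)`. -/
noncomputable def queries (φ : Strategy N Y) (x : ℝ) (y : Fin Y) : Fin N → ℝ :=
  fun k => φ.query k (resps φ x y (k : ℕ)) y

/-- The learner's estimate `x̂(x,y)`. -/
noncomputable def estim (φ : Strategy N Y) (x : ℝ) (y : Fin Y) : ℝ :=
  φ.estimate (resps φ x y N) y

/-- `Q(x)`: the set of query sequences that can arise when the true value is `x`. -/
def Q (φ : Strategy N Y) (x : ℝ) : Set (Fin N → ℝ) :=
  {q | ∃ y : Fin Y, φ.queries x y = q}

/-- The information set `I(q̄)` of the adversary. -/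
def infoSet (φ : Strategy N Y) (q : Fin N → ℝ) : Set ℝ :=
  {x | x ∈ Set.Ico (0 : ℝ) 1 ∧ q ∈ φ.Q x}

/-- The accuracy constraint with parameter `ε`. -/
def Accurate (ε : ℝ) (φ : Strategy N Y) : Prop :=
  ∀ x ∈ Set.Ico (0 : ℝ) 1, ∀ y : Fin Y, |φ.estim x y - x| ≤ ε / 2

end Strategy

/-- `E` is `(δ,L)`-coverable: `E` is contained in the union of `L` closed intervals
of length at most `δ` each. -/
def Coverable (δ : ℝ) (L : ℕ) (E : Set ℝ) : Prop :=
  ∃ a b : Fin L → ℝ, (∀ j, b j - a j ≤ δ) ∧ E ⊆ ⋃ j, Set.Icc (a j) (b j)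

/-- The `δ`-cover number `C_δ(E)`: the least positive `L` such that `E` is `(δ,L)`-coverable. -/
noncomputable def coverNumber (δ : ℝ) (E : Set ℝ) : ℕ :=
  sInf {L : ℕ | 0 < L ∧ Coverable δ L E}

/-- An `(ε,δ,L)`-private learner strategy. -/
def IsPrivate (ε δ : ℝ) (L : ℕ) {N Y : ℕ} (φ : Strategy N Y) : Prop :=
  φ.Accurate ε ∧ ∀ x ∈ Set.Ico (0 : ℝ) 1, ∀ q ∈ φ.Q x, L ≤ coverNumber δ (φ.infoSet q)

/-- `N*(ε,δ,L)`: the least length for which an `(ε,δ,L)`-private strategy exists. -/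
noncomputable def Nstar (ε δ : ℝ) (L : ℕ) : ℕ :=
  sInf {N : ℕ | ∃ Y : ℕ, 0 < Y ∧ ∃ φ : Strategy N Y, IsPrivate ε δ L φ}


namespace PrivLearn
open Strategy

variable {N Y : ℕ} (φ : Strategy N Y)

lemma resps_succ (x : ℝ) (y : Fin Y) (k : ℕ) :
    φ.resps x y (k+1) = Fin.snoc (φ.resps x y k)
      (if hk : k < N then decide (φ.query ⟨k, hk⟩ (φ.resps x y k) y ≤ x) else false) := by
  funext i
  induction i using Fin.lastCases with
  | last =>
      rw [Fin.snoc_last]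
      show (if h : (k:ℕ) < k then _ else _) = _
      rw [dif_neg (lt_irrefl k)]
  | cast j =>
      rw [Fin.snoc_castSucc]
      show (if h : (j:ℕ) < k then φ.resps x y k ⟨j, h⟩ else _) = _
      rw [dif_pos j.isLt]

lemma resps_restrict (x : ℝ) (y : Fin Y) {k k' : ℕ} (h : k ≤ k') (i : Fin k) :
    φ.resps x y k' ⟨(i:ℕ), lt_of_lt_of_le i.isLt h⟩ = φ.resps x y k i := by
  induction k' with
  | zero => exact absurd (lt_of_lt_of_le i.isLt h) (Nat.not_lt_zero _)
  | succ m ih =>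
      rcases Nat.eq_or_lt_of_le h with rfl | hlt
      · rfl
      · have hk : k ≤ m := Nat.lt_succ_iff.mp hlt
        rw [resps_succ]
        have him : (i:ℕ) < m := lt_of_lt_of_le i.isLt hk
        have : (⟨(i:ℕ), lt_of_lt_of_le i.isLt h⟩ : Fin (m+1)) = Fin.castSucc ⟨(i:ℕ), him⟩ := rfl
        rw [this, Fin.snoc_castSucc]
        exact ih hk

/-- Lockstep execution lemma: if at every step, equal histories force equal responses,
then the full executions coincide. -/
lemma exec_eq (x x' : ℝ) (y : Fin Y)
    (H : ∀ (k : ℕ) (hk : k < N), φ.resps x y k = φ.resps x' y k →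
      decide (φ.query ⟨k,hk⟩ (φ.resps x y k) y ≤ x)
        = decide (φ.query ⟨k,hk⟩ (φ.resps x y k) y ≤ x')) :
    ∀ k, φ.resps x y k = φ.resps x' y k := by
  intro k
  induction k with
  | zero => funext i; exact i.elim0
  | succ m ih =>
      rw [resps_succ, resps_succ, ← ih]
      by_cases hm : m < N
      · rw [dif_pos hm, dif_pos hm, H m hm ih]
      · rw [dif_neg hm, dif_neg hm]

lemma queries_eq_of_exec (x x' : ℝ) (y : Fin Y)
    (h : ∀ k, φ.resps x y k = φ.resps x' y k) : φ.queries x y = φ.queries x' y := by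
  funext k; unfold Strategy.queries; rw [h]

lemma estim_eq_of_exec (x x' : ℝ) (y : Fin Y)
    (h : ∀ k, φ.resps x y k = φ.resps x' y k) : φ.estim x y = φ.estim x' y := by
  unfold Strategy.estim; rw [h]

/-- Cell lemma: if `u ≤ e < v`, every query value of `e`'s execution avoids `(u,v)`,
and `u ≤ x' < v`, then `x'` has the same execution as `e`. -/
lemma exec_eq_of_cell (e x' u v : ℝ) (y : Fin Y)
    (he : u ≤ e ∧ e < v) (hx' : u ≤ x' ∧ x' < v)
    (hq : ∀ k : Fin N, φ.queries e y k ≤ u ∨ v ≤ φ.queries e y k) :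
    ∀ k, φ.resps e y k = φ.resps x' y k := by
  apply exec_eq
  intro k hk _
  have hqk := hq ⟨k, hk⟩
  have : φ.queries e y ⟨k, hk⟩ = φ.query ⟨k,hk⟩ (φ.resps e y k) y := rfl
  rw [this] at hqk
  rcases hqk with h1 | h2
  · simp only [decide_eq_decide]
    constructor <;> intro <;> linarith [he.1, hx'.1]
  · simp only [decide_eq_decide]
    constructor <;> intro <;> linarith [he.2, hx'.2]

lemma coverable_grid {L : ℕ} (hL : 0 < L) {E : Set ℝ} (hE : E ⊆ Set.Ico 0 1) :
    Coverable (1/L) L E := by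
  refine ⟨fun j => (j:ℝ)/L, fun j => ((j:ℝ)+1)/L, fun j => by ring_nf; simp, ?_⟩
  intro x hx
  obtain ⟨hx0, hx1⟩ := hE hx
  have hL0 : (0:ℝ) < L := by exact_mod_cast hL
  have hxL : (L:ℝ) * x < L := by nlinarith
  have hn : ⌊(L:ℝ)*x⌋₊ < L := by
    apply Nat.floor_lt (by positivity) |>.mpr
    exact_mod_cast hxL
  refine Set.mem_iUnion.mpr ⟨⟨⌊(L:ℝ)*x⌋₊, hn⟩, ?_⟩
  constructor
  · have := Nat.floor_le (show (0:ℝ) ≤ (L:ℝ)*x by positivity)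
    rw [div_le_iff₀ hL0]; linarith
  · have := Nat.lt_succ_floor ((L:ℝ)*x)
    rw [le_div_iff₀ hL0]
    push_cast at this ⊢
    linarith

lemma le_of_coverable {δ : ℝ} {E : Set ℝ} {L K : ℕ}
    (hL : L ≤ coverNumber δ E) (hK : 0 < K) (hc : Coverable δ K E) : L ≤ K :=
  le_trans hL (Nat.sInf_le ⟨hK, hc⟩)

lemma sliver_cover_bound {L : ℕ} (hL : 0 < L) {ε : ℝ} (hε : 0 < ε)
    {E : Set ℝ}
    (hE : ∀ j : ℕ, j < L → ∀ γ : ℝ, 0 < γ → γ ≤ ε → (((j:ℝ)+1)/L - γ) ∈ E)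
    {K : ℕ} (hK0 : 0 < K) (hcov : Coverable (1/L) K E) : L ≤ K := by
  obtain ⟨a, b, hlen, hsub⟩ := hcov
  have hLpos : (0:ℝ) < L := by exact_mod_cast hL
  have key : ∀ j : Fin L, ∃ i : Fin K, a i < ((j:ℝ)+1)/L ∧ ((j:ℝ)+1)/L ≤ b i := by
    intro j
    have hne : (Finset.univ : Finset (Fin K)).Nonempty := ⟨⟨0, hK0⟩, Finset.mem_univ _⟩
    set X : ℝ := (((j:ℕ):ℝ)+1)/L with hX
    set c : ℝ := Finset.univ.inf' hne (fun i => if b i < X then X - b i else ε) with hc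
    have hcpos : 0 < c := by
      rw [hc, Finset.lt_inf'_iff]
      intro i _
      by_cases hbi : b i < X
      · rw [if_pos hbi]; linarith
      · rw [if_neg hbi]; exact hε
    have hγpos : 0 < (min ε c)/2 := by
      apply div_pos _ (by norm_num)
      exact lt_min hε hcpos
    have hγε : (min ε c)/2 ≤ ε := by
      have : min ε c ≤ ε := min_le_left _ _
      linarith
    have hP : X - (min ε c)/2 ∈ E := hE j j.isLt _ hγpos hγε
    obtain ⟨S, ⟨i, rfl⟩, hPS⟩ := hsub hP
    refine ⟨i, ?_, ?_⟩
    · calc a i ≤ X - (min ε c)/2 := hPS.1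
        _ < X := by linarith
    · by_contra hbi
      push_neg at hbi
      have hle : c ≤ X - b i := by
        have h2 := Finset.inf'_le (f := fun i => if b i < X then X - b i else ε)
          (h := Finset.mem_univ i)
        rw [if_pos hbi] at h2
        exact h2
      have h3 : (min ε c)/2 < c := by
        have : min ε c ≤ c := min_le_right _ _
        linarith
      have : b i < X - (min ε c)/2 := by linarith
      linarith [hPS.2]
  choose g hg1 hg2 using key
  have hginj : Function.Injective g := by
    intro j j' heq
    have habs : ∀ p q : Fin L, (p:ℕ) < (q:ℕ) → g p = g q → False := by
      intro p q hpq hgeq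
      have h1 := hg1 p
      have h2 := hg2 q
      have h3 := hlen (g q)
      rw [hgeq] at h1
      have hcast : ((p:ℕ):ℝ) + 1 ≤ ((q:ℕ):ℝ) := by exact_mod_cast hpq
      have hmono : (((p:ℕ):ℝ)+1)/L ≤ ((q:ℕ):ℝ)/L := by gcongr
      have hsplit : (((q:ℕ):ℝ)+1)/L = ((q:ℕ):ℝ)/L + 1/L := by ring
      linarith
    rcases lt_trichotomy ((j:ℕ)) ((j':ℕ)) with hlt | heqn | hgt
    · exact absurd (habs j j' hlt heq) (fun h => h)
    · exact Fin.ext heqn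
    · exact absurd (habs j' j hgt heq.symm) (fun h => h)
  calc L = Fintype.card (Fin L) := (Fintype.card_fin L).symm
    _ ≤ Fintype.card (Fin K) := Fintype.card_le_of_injective g hginj
    _ = K := Fintype.card_fin K

lemma le_coverNumber_of_slivers {L : ℕ} (hL : 0 < L) {ε : ℝ} (hε : 0 < ε)
    {E : Set ℝ} (hE1 : E ⊆ Set.Ico 0 1)
    (hE : ∀ j : ℕ, j < L → ∀ γ : ℝ, 0 < γ → γ ≤ ε → (((j:ℝ)+1)/L - γ) ∈ E) :
    L ≤ coverNumber (1/L) E := by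
  have hLmem : L ∈ {K : ℕ | 0 < K ∧ Coverable (1/L) K E} := ⟨hL, coverable_grid hL hE1⟩
  have hmem := Nat.sInf_mem ⟨L, hLmem⟩
  exact sliver_cover_bound hL hε hE hmem.1 hmem.2

/-- partial binary expansion sum -/
noncomputable def lowsum (u : ℕ → Bool) (t : ℕ) : ℝ :=
  ∑ r ∈ Finset.range t, (if u r then ((1:ℝ)/2)^(r+1) else 0)

lemma lowsum_nonneg (u : ℕ → Bool) (t : ℕ) : 0 ≤ lowsum u t := by
  apply Finset.sum_nonneg; intro r _; positivity

lemma lowsum_succ (u : ℕ → Bool) (t : ℕ) :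
    lowsum u (t+1) = lowsum u t + (if u t then ((1:ℝ)/2)^(t+1) else 0) :=
  Finset.sum_range_succ _ _

lemma lowsum_le (u : ℕ → Bool) (t : ℕ) : lowsum u t ≤ 1 - ((1:ℝ)/2)^t := by
  induction t with
  | zero => simp [lowsum]
  | succ m ih =>
      rw [lowsum_succ]
      have h1 : (if u m then ((1:ℝ)/2)^(m+1) else 0) ≤ ((1:ℝ)/2)^(m+1) := by
        split
        · exact le_refl _
        · positivity
      have h2 : ((1:ℝ)/2)^(m+1) = ((1:ℝ)/2)^m / 2 := by ring
      nlinarith [pow_pos (show (0:ℝ) < 1/2 by norm_num) m]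

lemma lowsum_congr {u u' : ℕ → Bool} {t : ℕ} (h : ∀ r < t, u r = u' r) :
    lowsum u t = lowsum u' t := by
  unfold lowsum
  apply Finset.sum_congr rfl
  intro r hr
  rw [h r (Finset.mem_range.mp hr)]

/-- The canonical transcript: queries as a function of a "trajectory interval" `j₀`
and a bit pattern `u`. -/
noncomputable def Tq (L : ℕ) (ε : ℝ) (j₀ : ℕ) (u : ℕ → Bool) (k : ℕ) : ℝ :=
  if k < L - 1 then ((k:ℝ)+1)/L
  else if k < 2*L - 1 then (((k - (L-1) : ℕ):ℝ)+1)/L - ε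
  else ((j₀:ℝ) + lowsum u (k - (2*L-1)) + ((1:ℝ)/2)^((k - (2*L-1))+1))/L

lemma Tq_phase1 (L : ℕ) (ε : ℝ) (j₀ : ℕ) (u : ℕ → Bool) {k : ℕ} (hk : k < L - 1) :
    Tq L ε j₀ u k = ((k:ℝ)+1)/L := if_pos hk

lemma Tq_phase2 (L : ℕ) (ε : ℝ) (j₀ : ℕ) (u : ℕ → Bool) {k : ℕ}
    (hk1 : ¬ k < L - 1) (hk2 : k < 2*L - 1) :
    Tq L ε j₀ u k = (((k - (L-1) : ℕ):ℝ)+1)/L - ε := by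
  unfold Tq; rw [if_neg hk1, if_pos hk2]

lemma Tq_phase3 (L : ℕ) (ε : ℝ) (j₀ : ℕ) (u : ℕ → Bool) {k : ℕ}
    (hk2 : ¬ k < 2*L - 1) (hL : 3 ≤ L) :
    Tq L ε j₀ u k = ((j₀:ℝ) + lowsum u (k - (2*L-1)) + ((1:ℝ)/2)^((k - (2*L-1))+1))/L := by
  unfold Tq
  rw [if_neg (by omega), if_neg hk2]

lemma Tq_indep (L : ℕ) (ε : ℝ) (j₀ j₁ : ℕ) (u u' : ℕ → Bool) {k : ℕ} (hk : k < 2*L-1) :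
    Tq L ε j₀ u k = Tq L ε j₁ u' k := by
  unfold Tq
  by_cases h1 : k < L - 1
  · rw [if_pos h1, if_pos h1]
  · rw [if_neg h1, if_neg h1, if_pos hk, if_pos hk]

lemma Tq_congr_u (L : ℕ) (ε : ℝ) (j₀ : ℕ) {u u' : ℕ → Bool} {k : ℕ}
    (h : ∀ r < k - (2*L-1), u r = u' r) : Tq L ε j₀ u k = Tq L ε j₀ u' k := by
  unfold Tq
  by_cases h1 : k < L - 1
  · rw [if_pos h1, if_pos h1]
  · rw [if_neg h1, if_neg h1]
    by_cases h2 : k < 2*L-1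
    · rw [if_pos h2, if_pos h2]
    · rw [if_neg h2, if_neg h2, lowsum_congr h]

/-- extend a finite history to `ℕ → Bool` by `false` -/
def extendH {n : ℕ} (h : Fin n → Bool) : ℕ → Bool :=
  fun i => if hi : i < n then h ⟨i, hi⟩ else false

def istar (L : ℕ) (g : ℕ → Bool) : ℕ :=
  ((Finset.range (L-1)).filter (fun i => g i = true)).card

def sliverbit (L : ℕ) (g : ℕ → Bool) : Bool := g (L - 1 + istar L g)

lemma istar_lt (L : ℕ) (hL : 3 ≤ L) (g : ℕ → Bool) : istar L g < L :=
  lt_of_le_of_lt (le_trans (Finset.card_filter_le _ _) (by rw [Finset.card_range])) (by omega)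

lemma istar_congr (L : ℕ) {g g' : ℕ → Bool} (h : ∀ i < L - 1, g i = g' i) :
    istar L g = istar L g' := by
  unfold istar
  congr 1
  apply Finset.filter_congr
  intro i hi
  rw [h i (Finset.mem_range.mp hi)]

lemma sliverbit_congr (L : ℕ) {g g' : ℕ → Bool} (hL : 3 ≤ L)
    (h : ∀ i < 2*L - 1, g i = g' i) : sliverbit L g = sliverbit L g' := by
  unfold sliverbit
  have h1 : istar L g = istar L g' := istar_congr L (fun i hi => h i (by omega))
  rw [h1]
  exact h _ (by have h2 := istar_lt L hL g'; omega)


lemma istar_floor (L : ℕ) (hL : 3 ≤ L) (x : ℝ) (hx : x ∈ Set.Ico (0:ℝ) 1)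
    {g : ℕ → Bool} (hg : ∀ i < L - 1, g i = decide (((i:ℝ)+1)/L ≤ x)) :
    istar L g = ⌊(L:ℝ)*x⌋₊ := by
  have hL0 : (0:ℝ) < L := by exact_mod_cast Nat.pos_of_ne_zero (by omega)
  have hfl : ⌊(L:ℝ)*x⌋₊ < L := by
    apply (Nat.floor_lt (mul_nonneg hL0.le hx.1)).mpr
    have : (L:ℝ)*x < L := by nlinarith [hx.1, hx.2]
    exact_mod_cast this
  unfold istar
  have : (Finset.range (L-1)).filter (fun i => g i = true)
      = Finset.range ⌊(L:ℝ)*x⌋₊ := by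
    ext i
    simp only [Finset.mem_filter, Finset.mem_range]
    constructor
    · rintro ⟨hi, hgi⟩
      rw [hg i hi, decide_eq_true_eq] at hgi
      have : ((i:ℝ)+1) ≤ (L:ℝ)*x := by
        rw [div_le_iff₀ hL0] at hgi; linarith
      have : (i+1 : ℕ) ≤ ⌊(L:ℝ)*x⌋₊ := Nat.le_floor (by exact_mod_cast this)
      omega
    · intro hi
      have hi' : i < L - 1 := by omega
      refine ⟨hi', ?_⟩
      rw [hg i hi', decide_eq_true_eq]
      have h1 : (i+1 : ℕ) ≤ ⌊(L:ℝ)*x⌋₊ := by omega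
      have h2 : ((i:ℝ)+1) ≤ (L:ℝ)*x := by
        have := Nat.floor_le (mul_nonneg hL0.le hx.1)
        have h3 : ((i+1:ℕ):ℝ) ≤ (⌊(L:ℝ)*x⌋₊ : ℝ) := by exact_mod_cast h1
        push_cast at h3
        linarith
      rw [div_le_iff₀ hL0]; linarith
  rw [this, Finset.card_range]

section Construction

variable (L M : ℕ) (ε : ℝ)

/-- seed space -/
abbrev SeedT (L M : ℕ) := Fin L × (Fin M → Bool)

noncomputable def seedEquiv (L M : ℕ) : SeedT L M ≃ Fin (Fintype.card (SeedT L M)) :=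
  Fintype.equivFin _

noncomputable def jfY (y : Fin (Fintype.card (SeedT L M))) : ℕ :=
  (((seedEquiv L M).symm y).1 : ℕ)

noncomputable def wY (y : Fin (Fintype.card (SeedT L M))) : ℕ → Bool :=
  fun r => if hr : r < M then ((seedEquiv L M).symm y).2 ⟨r, hr⟩ else false

lemma jfY_lt (y : Fin (Fintype.card (SeedT L M))) (hL : 0 < L) : jfY L M y < L :=
  (((seedEquiv L M).symm y).1).isLt

-- the replicated-bisection strategy
open Classical in
noncomputable def phi : Strategy (2*L-1+M) (Fintype.card (SeedT L M)) where
  query k h y :=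
    if (3 ≤ L ∧ 0 < ε ∧ 2*ε < 1/L) then
      Tq L ε
        (if sliverbit L (extendH h) = true then jfY L M y else istar L (extendH h))
        (fun r => if sliverbit L (extendH h) = true then wY L M y r
                  else extendH h (2*L-1+r))
        (k : ℕ)
    else 0
  estimate h y :=
    if (3 ≤ L ∧ 0 < ε ∧ 2*ε < 1/L) then
      (if sliverbit L (extendH h) = true then ((istar L (extendH h) : ℝ)+1)/L - ε/2
       else ((istar L (extendH h) : ℝ) + lowsum (fun r => extendH h (2*L-1+r)) M
             + ((1:ℝ)/2)^(M+1))/L)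
    else 0
  query_mem := by
    intro k h y
    split
    case isFalse => exact ⟨le_refl 0, zero_lt_one⟩
    rename_i hyp
    obtain ⟨hL, hε, hεδ⟩ := hyp
    have hL0 : (0:ℝ) < L := by exact_mod_cast Nat.pos_of_ne_zero (by omega)
    have hLinv : (1:ℝ)/L ≤ 1 := by
      rw [div_le_one hL0]; exact_mod_cast by omega
    set j₀ := (if sliverbit L (extendH h) = true then jfY L M y else istar L (extendH h)) with hj
    have hj₀ : j₀ < L := by
      rw [hj]; split
      · exact jfY_lt L M y (by omega)
      · exact istar_lt L hL _
    set u := (fun r => if sliverbit L (extendH h) = true then wY L M y r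
                else extendH h (2*L-1+r)) with hu
    unfold Tq
    by_cases h1 : (k:ℕ) < L - 1
    · rw [if_pos h1]
      constructor
      · positivity
      · rw [div_lt_one hL0]
        have : ((k:ℕ):ℝ) + 1 ≤ ((L:ℕ):ℝ) - 1 := by
          have : (k:ℕ) + 1 ≤ L - 1 := h1
          have h2 : ((k:ℕ)+1 : ℕ) ≤ (L-1 : ℕ) := h1
          have h3 : (((k:ℕ)+1 : ℕ) : ℝ) ≤ ((L-1:ℕ):ℝ) := by exact_mod_cast h2
          push_cast [Nat.cast_sub (by omega : 1 ≤ L)] at h3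
          push_cast
          linarith
        linarith
    · rw [if_neg h1]
      by_cases h2 : (k:ℕ) < 2*L-1
      · rw [if_pos h2]
        have hje : ((k:ℕ) - (L-1) : ℕ) ≤ L - 1 := by omega
        constructor
        · have : (1:ℝ) ≤ (((k:ℕ) - (L-1) : ℕ):ℝ) + 1 := by
            have := Nat.cast_nonneg (α := ℝ) ((k:ℕ) - (L-1)); linarith
          have hd : (1:ℝ)/L ≤ ((((k:ℕ) - (L-1) : ℕ):ℝ)+1)/L := by gcongr
          linarith
        · have : ((((k:ℕ) - (L-1) : ℕ)):ℝ) + 1 ≤ (L:ℝ) := by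
            have : (((k:ℕ) - (L-1) : ℕ)) + 1 ≤ L := by omega
            exact_mod_cast this
          have : ((((k:ℕ) - (L-1) : ℕ):ℝ)+1)/L ≤ 1 := by
            rw [div_le_one hL0]; linarith
          linarith
      · rw [if_neg h2]
        set t := (k:ℕ) - (2*L-1) with ht
        have hls := lowsum_nonneg u t
        have hlsu := lowsum_le u t
        have hpow : (0:ℝ) < ((1:ℝ)/2)^(t+1) := by positivity
        have hpow2 : ((1:ℝ)/2)^(t+1) < ((1:ℝ)/2)^t := by
          rw [pow_succ]
          nlinarith [pow_pos (show (0:ℝ) < 1/2 by norm_num) t]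
        constructor
        · positivity
        · rw [div_lt_one hL0]
          have hjr : ((j₀:ℕ):ℝ) + 1 ≤ (L:ℝ) := by exact_mod_cast hj₀
          nlinarith [pow_pos (show (0:ℝ) < 1/2 by norm_num) t]
  estimate_mem := by
    intro h y
    split
    case isFalse => exact ⟨le_refl 0, zero_lt_one⟩
    rename_i hyp
    obtain ⟨hL, hε, hεδ⟩ := hyp
    have hL0 : (0:ℝ) < L := by exact_mod_cast Nat.pos_of_ne_zero (by omega)
    have hi := istar_lt L hL (extendH h)
    have hir : ((istar L (extendH h) : ℕ):ℝ) + 1 ≤ (L:ℝ) := by exact_mod_cast hi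
    split
    · constructor
      · have h1 : (1:ℝ) ≤ ((istar L (extendH h) : ℕ):ℝ) + 1 := by
          have := Nat.cast_nonneg (α := ℝ) (istar L (extendH h)); linarith
        have hd : (1:ℝ)/L ≤ (((istar L (extendH h) : ℕ):ℝ)+1)/L := by gcongr
        have hd2 : (1:ℝ)/L > 2*ε := hεδ
        have : ε > 0 := hε
        linarith
      · have : (((istar L (extendH h) : ℕ):ℝ)+1)/L ≤ 1 := by
          rw [div_le_one hL0]; linarith
        linarith
    · set w := istar L (extendH h)
      set ls := lowsum (fun r => extendH h (2*L-1+r)) M with hls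
      have h1 := lowsum_nonneg (fun r => extendH h (2*L-1+r)) M
      have h2 := lowsum_le (fun r => extendH h (2*L-1+r)) M
      have hpow : (0:ℝ) < ((1:ℝ)/2)^(M+1) := by positivity
      have hpow2 : ((1:ℝ)/2)^(M+1) < ((1:ℝ)/2)^M := by
        rw [pow_succ]
        nlinarith [pow_pos (show (0:ℝ) < 1/2 by norm_num) M]
      constructor
      · positivity
      · rw [div_lt_one hL0]
        nlinarith [pow_pos (show (0:ℝ) < 1/2 by norm_num) M]

end Construction

lemma resps_self (x : ℝ) (y : Fin Y) {k : ℕ} (hk : k < N) :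
    φ.resps x y (k+1) ⟨k, Nat.lt_succ_self k⟩
      = decide (φ.query ⟨k, hk⟩ (φ.resps x y k) y ≤ x) := by
  show (if h : k < k then _ else if hk' : k < N then _ else _) = _
  rw [dif_neg (lt_irrefl k), dif_pos hk]

section Execution

variable (L M : ℕ) (ε : ℝ)

lemma phi_query (hL : 3 ≤ L) (hε : 0 < ε) (hεδ : 2*ε < 1/L)
    (k : Fin (2*L-1+M)) (h : Fin (k:ℕ) → Bool) (y : Fin (Fintype.card (SeedT L M))) :
    (phi L M ε).query k h y
      = Tq L ε
        (if sliverbit L (extendH h) = true then jfY L M y else istar L (extendH h))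
        (fun r => if sliverbit L (extendH h) = true then wY L M y r
          else extendH h (2*L-1+r)) (k : ℕ) := by
  show (if _ then _ else _) = _
  rw [if_pos ⟨hL, hε, hεδ⟩]

lemma phi_estimate (hL : 3 ≤ L) (hε : 0 < ε) (hεδ : 2*ε < 1/L)
    (h : Fin (2*L-1+M) → Bool) (y : Fin (Fintype.card (SeedT L M))) :
    (phi L M ε).estimate h y
      = (if sliverbit L (extendH h) = true then ((istar L (extendH h) : ℝ)+1)/L - ε/2
         else ((istar L (extendH h) : ℝ) + lowsum (fun r => extendH h (2*L-1+r)) M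
             + ((1:ℝ)/2)^(M+1))/L) := by
  show (if _ then _ else _) = _
  rw [if_pos ⟨hL, hε, hεδ⟩]

variable (x : ℝ) (y : Fin (Fintype.card (SeedT L M)))

/-- the full response sequence of `(x,y)` under `phi` -/
noncomputable def GG : ℕ → Bool := extendH ((phi L M ε).resps x y (2*L-1+M))

lemma G_restrict {n : ℕ} (hn : n ≤ 2*L-1+M) {i : ℕ} (hi : i < n) :
    extendH ((phi L M ε).resps x y n) i = GG L M ε x y i := by
  unfold GG extendH
  rw [dif_pos hi, dif_pos (lt_of_lt_of_le hi hn)]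
  exact (resps_restrict (phi L M ε) x y hn ⟨i, hi⟩).symm

lemma G_eq_decide {k : ℕ} (hk : k < 2*L-1+M) :
    GG L M ε x y k
      = decide ((phi L M ε).query ⟨k, hk⟩ ((phi L M ε).resps x y k) y ≤ x) := by
  show extendH _ k = _
  unfold extendH
  rw [dif_pos hk]
  have h2 := resps_restrict (phi L M ε) x y (show k+1 ≤ 2*L-1+M from hk)
    ⟨k, Nat.lt_succ_self k⟩
  calc (phi L M ε).resps x y (2*L-1+M) ⟨k, hk⟩
      = (phi L M ε).resps x y (k+1) ⟨k, Nat.lt_succ_self k⟩ := h2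
    _ = _ := resps_self (phi L M ε) x y hk

lemma G_phase1 (hL : 3 ≤ L) (hε : 0 < ε) (hεδ : 2*ε < 1/L) {k : ℕ} (hk : k < L-1) :
    GG L M ε x y k = decide (((k:ℝ)+1)/L ≤ x) := by
  have hkN : k < 2*L-1+M := by omega
  rw [G_eq_decide L M ε x y hkN, phi_query L M ε hL hε hεδ,
    Tq_phase1 L ε _ _ hk]

lemma istar_exec (hL : 3 ≤ L) (hε : 0 < ε) (hεδ : 2*ε < 1/L)
    (hx : x ∈ Set.Ico (0:ℝ) 1) {n : ℕ} (hn1 : L-1 ≤ n) (hn2 : n ≤ 2*L-1+M) :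
    istar L (extendH ((phi L M ε).resps x y n)) = ⌊(L:ℝ)*x⌋₊ := by
  apply istar_floor L hL x hx
  intro i hi
  rw [G_restrict L M ε x y hn2 (by omega)]
  exact G_phase1 L M ε x y hL hε hεδ hi

lemma G_phase2 (hL : 3 ≤ L) (hε : 0 < ε) (hεδ : 2*ε < 1/L)
    {k : ℕ} (hk1 : ¬ k < L-1) (hk2 : k < 2*L-1) :
    GG L M ε x y k = decide ((((k-(L-1):ℕ):ℝ)+1)/L - ε ≤ x) := by
  have hkN : k < 2*L-1+M := by omega
  rw [G_eq_decide L M ε x y hkN, phi_query L M ε hL hε hεδ,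
    Tq_phase2 L ε _ _ hk1 hk2]

lemma floor_lt_L (hL : 3 ≤ L) (hx : x ∈ Set.Ico (0:ℝ) 1) : ⌊(L:ℝ)*x⌋₊ < L := by
  have hL0 : (0:ℝ) < L := by exact_mod_cast Nat.pos_of_ne_zero (by omega)
  apply (Nat.floor_lt (mul_nonneg hL0.le hx.1)).mpr
  have : (L:ℝ)*x < L := by nlinarith [hx.1, hx.2]
  exact_mod_cast this

lemma sliver_exec (hL : 3 ≤ L) (hε : 0 < ε) (hεδ : 2*ε < 1/L)
    (hx : x ∈ Set.Ico (0:ℝ) 1) {n : ℕ} (hn1 : 2*L-1 ≤ n) (hn2 : n ≤ 2*L-1+M) :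
    sliverbit L (extendH ((phi L M ε).resps x y n))
      = decide (((⌊(L:ℝ)*x⌋₊:ℝ)+1)/L - ε ≤ x) := by
  have hfl := floor_lt_L L x hL hx
  unfold sliverbit
  rw [istar_exec L M ε x y hL hε hεδ hx (by omega) hn2]
  rw [G_restrict L M ε x y hn2 (by omega)]
  rw [G_phase2 L M ε x y hL hε hεδ (by omega) (by omega)]
  have harith : L-1+⌊(L:ℝ)*x⌋₊ - (L-1) = ⌊(L:ℝ)*x⌋₊ := by omega
  rw [harith]

lemma queries_sliver (hL : 3 ≤ L) (hε : 0 < ε) (hεδ : 2*ε < 1/L)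
    (hx : x ∈ Set.Ico (0:ℝ) 1)
    (hsb : decide (((⌊(L:ℝ)*x⌋₊:ℝ)+1)/L - ε ≤ x) = true) :
    (phi L M ε).queries x y
      = fun k : Fin (2*L-1+M) => Tq L ε (jfY L M y) (wY L M y) (k:ℕ) := by
  funext k
  show (phi L M ε).query k ((phi L M ε).resps x y (k:ℕ)) y = _
  have hkN : (k:ℕ) < 2*L-1+M := k.isLt
  rw [phi_query L M ε hL hε hεδ]
  by_cases h2 : (k:ℕ) < 2*L-1
  · exact Tq_indep L ε _ _ _ _ h2
  · have hs : sliverbit L (extendH ((phi L M ε).resps x y (k:ℕ))) = true := by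
      rw [sliver_exec L M ε x y hL hε hεδ hx (by omega) (le_of_lt hkN)]
      exact hsb
    simp only [hs, if_true]

lemma queries_bisect (hL : 3 ≤ L) (hε : 0 < ε) (hεδ : 2*ε < 1/L)
    (hx : x ∈ Set.Ico (0:ℝ) 1)
    (hsb : decide (((⌊(L:ℝ)*x⌋₊:ℝ)+1)/L - ε ≤ x) = false) :
    (phi L M ε).queries x y
      = fun k : Fin (2*L-1+M) =>
          Tq L ε ⌊(L:ℝ)*x⌋₊ (fun r => GG L M ε x y (2*L-1+r)) (k:ℕ) := by
  funext k
  show (phi L M ε).query k ((phi L M ε).resps x y (k:ℕ)) y = _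
  have hkN : (k:ℕ) < 2*L-1+M := k.isLt
  rw [phi_query L M ε hL hε hεδ]
  by_cases h2 : (k:ℕ) < 2*L-1
  · exact Tq_indep L ε _ _ _ _ h2
  · have hs : sliverbit L (extendH ((phi L M ε).resps x y (k:ℕ))) = false := by
      rw [sliver_exec L M ε x y hL hε hεδ hx (by omega) (le_of_lt hkN)]
      exact hsb
    simp only [hs, Bool.false_eq_true, if_false]
    rw [istar_exec L M ε x y hL hε hεδ hx (by omega) (le_of_lt hkN)]
    apply Tq_congr_u
    intro r hr
    exact G_restrict L M ε x y (le_of_lt hkN) (by omega)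

lemma bisect_inv (hL : 3 ≤ L) (hε : 0 < ε) (hεδ : 2*ε < 1/L)
    (hx : x ∈ Set.Ico (0:ℝ) 1)
    (hsb : decide (((⌊(L:ℝ)*x⌋₊:ℝ)+1)/L - ε ≤ x) = false) :
    ∀ t, t ≤ M →
      ((⌊(L:ℝ)*x⌋₊:ℝ) + lowsum (fun r => GG L M ε x y (2*L-1+r)) t)/L ≤ x ∧
      x < ((⌊(L:ℝ)*x⌋₊:ℝ) + lowsum (fun r => GG L M ε x y (2*L-1+r)) t + ((1:ℝ)/2)^t)/L := by
  have hL0 : (0:ℝ) < L := by exact_mod_cast Nat.pos_of_ne_zero (by omega)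
  intro t
  induction t with
  | zero =>
      intro _
      constructor
      · simp only [lowsum, Finset.range_zero, Finset.sum_empty, add_zero]
        rw [div_le_iff₀ hL0]
        have := Nat.floor_le (mul_nonneg hL0.le hx.1)
        linarith
      · simp only [lowsum, Finset.range_zero, Finset.sum_empty, add_zero, pow_zero]
        rw [lt_div_iff₀ hL0]
        have := Nat.lt_succ_floor ((L:ℝ)*x)
        push_cast at this
        linarith
  | succ t ih =>
      intro htM
      have iht := ih (by omega)
      have hkN : 2*L-1+t < 2*L-1+M := by omega
      have hbit : GG L M ε x y (2*L-1+t)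
          = decide (((⌊(L:ℝ)*x⌋₊:ℝ) + lowsum (fun r => GG L M ε x y (2*L-1+r)) t
              + ((1:ℝ)/2)^(t+1))/L ≤ x) := by
        rw [G_eq_decide L M ε x y hkN, phi_query L M ε hL hε hεδ]
        have hs : sliverbit L (extendH ((phi L M ε).resps x y (2*L-1+t))) = false := by
          rw [sliver_exec L M ε x y hL hε hεδ hx (by omega) (le_of_lt hkN)]
          exact hsb
        simp only [hs, Bool.false_eq_true, if_false]
        rw [istar_exec L M ε x y hL hε hεδ hx (by omega) (le_of_lt hkN)]
        have hTq : Tq L ε ⌊(L:ℝ)*x⌋₊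
            (fun r => extendH ((phi L M ε).resps x y (2*L-1+t)) (2*L-1+r)) (2*L-1+t)
            = Tq L ε ⌊(L:ℝ)*x⌋₊ (fun r => GG L M ε x y (2*L-1+r)) (2*L-1+t) := by
          apply Tq_congr_u
          intro r hr
          exact G_restrict L M ε x y (le_of_lt hkN) (by omega)
        rw [hTq, Tq_phase3 L ε _ _ (by omega) hL]
        have harith : 2*L-1+t - (2*L-1) = t := by omega
        rw [harith]
      rw [lowsum_succ]
      rcases Bool.eq_false_or_eq_true (GG L M ε x y (2*L-1+t)) with hb | hb
      · -- responded 1: go up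
        have h' := hbit
        rw [hb] at h'
        have hxge : ((⌊(L:ℝ)*x⌋₊:ℝ) + lowsum (fun r => GG L M ε x y (2*L-1+r)) t
            + ((1:ℝ)/2)^(t+1))/L ≤ x := of_decide_eq_true h'.symm
        have h2 := iht.2
        have hpow : ((1:ℝ)/2)^t = ((1:ℝ)/2)^(t+1) + ((1:ℝ)/2)^(t+1) := by ring
        rw [hpow] at h2
        simp only [hb, eq_self_iff_true, if_true]
        constructor
        · rw [← add_assoc]
          exact hxge
        · rw [← add_assoc,
            add_assoc ((⌊(L:ℝ)*x⌋₊:ℝ) + lowsum (fun r => GG L M ε x y (2*L-1+r)) t)]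
          exact h2
      · -- responded 0: stay
        have h' := hbit
        rw [hb] at h'
        have hxlt : ¬ (((⌊(L:ℝ)*x⌋₊:ℝ) + lowsum (fun r => GG L M ε x y (2*L-1+r)) t
            + ((1:ℝ)/2)^(t+1))/L ≤ x) := of_decide_eq_false h'.symm
        push_neg at hxlt
        simp only [hb, Bool.false_eq_true, if_false, add_zero]
        exact ⟨iht.1, hxlt⟩

lemma phi_accurate (hL : 3 ≤ L) (hε : 0 < ε) (hεδ : 2*ε < 1/L)
    (hx : x ∈ Set.Ico (0:ℝ) 1) (hMle : (1:ℝ)/L ≤ ε * 2^M) :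
    |(phi L M ε).estim x y - x| ≤ ε/2 := by
  have hL0 : (0:ℝ) < L := by exact_mod_cast Nat.pos_of_ne_zero (by omega)
  have hfl := floor_lt_L L x hL hx
  show |(phi L M ε).estimate ((phi L M ε).resps x y (2*L-1+M)) y - x| ≤ ε/2
  rw [phi_estimate L M ε hL hε hεδ]
  rw [sliver_exec L M ε x y hL hε hεδ hx (by omega) (le_refl _)]
  rw [istar_exec L M ε x y hL hε hεδ hx (by omega) (le_refl _)]
  rcases Bool.eq_false_or_eq_true (decide (((⌊(L:ℝ)*x⌋₊:ℝ)+1)/L - ε ≤ x)) with hsb | hsb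
  · -- sliver case
    rw [hsb, if_pos rfl]
    have hge : ((⌊(L:ℝ)*x⌋₊:ℝ)+1)/L - ε ≤ x := of_decide_eq_true hsb
    have hlt : x < ((⌊(L:ℝ)*x⌋₊:ℝ)+1)/L := by
      rw [lt_div_iff₀ hL0]
      have := Nat.lt_succ_floor ((L:ℝ)*x)
      push_cast at this
      linarith
    rw [abs_le]
    constructor <;> [skip; skip] <;> linarith
  · -- bisection case
    simp only [hsb, Bool.false_eq_true, if_false]
    have hinv := bisect_inv L M ε x y hL hε hεδ hx hsb M (le_refl M)
    have hls : lowsum (fun r => extendH ((phi L M ε).resps x y (2*L-1+M)) (2*L-1+r)) M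
        = lowsum (fun r => GG L M ε x y (2*L-1+r)) M := rfl
    rw [hls]
    have h2M : (0:ℝ) < 2^M := by positivity
    have hbound : ((1:ℝ)/2)^(M+1)/L ≤ ε/2 := by
      have h1 : ((1:ℝ)/2)^(M+1) = 1/(2^M)/2 := by
        rw [pow_succ, div_pow, one_pow]; ring
      rw [h1, div_div, div_div]
      rw [div_le_div_iff₀ (by positivity) (by norm_num)]
      have h3 : (1:ℝ)*2 ≤ ε * (2^M*(L*2)) := by
        have h4 : (1:ℝ) ≤ ε * 2^M * L := by
          rw [div_le_iff₀ hL0] at hMle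
          linarith
        nlinarith
      linarith [h3]
    obtain ⟨hlo, hhi⟩ := hinv
    have e1 : ((⌊(L:ℝ)*x⌋₊:ℝ) + lowsum (fun r => GG L M ε x y (2*L-1+r)) M
        + ((1:ℝ)/2)^(M+1))/L
        = ((⌊(L:ℝ)*x⌋₊:ℝ) + lowsum (fun r => GG L M ε x y (2*L-1+r)) M)/L
          + ((1:ℝ)/2)^(M+1)/L := by ring
    have e2 : ((⌊(L:ℝ)*x⌋₊:ℝ) + lowsum (fun r => GG L M ε x y (2*L-1+r)) M
        + ((1:ℝ)/2)^M)/L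
        = ((⌊(L:ℝ)*x⌋₊:ℝ) + lowsum (fun r => GG L M ε x y (2*L-1+r)) M)/L
          + (((1:ℝ)/2)^(M+1)/L + ((1:ℝ)/2)^(M+1)/L) := by ring
    rw [abs_le, e1]
    rw [e2] at hhi
    constructor
    · linarith
    · linarith

end Execution

section Privacy

variable (L M : ℕ) (ε : ℝ)

lemma phi_transcript (hL : 3 ≤ L) (hε : 0 < ε) (hεδ : 2*ε < 1/L)
    (x : ℝ) (hx : x ∈ Set.Ico (0:ℝ) 1) (y : Fin (Fintype.card (SeedT L M))) :
    ∃ j₀ : ℕ, j₀ < L ∧ ∃ u : ℕ → Bool,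
      (phi L M ε).queries x y = fun k : Fin (2*L-1+M) => Tq L ε j₀ u (k:ℕ) := by
  rcases Bool.eq_false_or_eq_true (decide (((⌊(L:ℝ)*x⌋₊:ℝ)+1)/L - ε ≤ x)) with hsb | hsb
  · exact ⟨jfY L M y, jfY_lt L M y (by omega), wY L M y,
      queries_sliver L M ε x y hL hε hεδ hx hsb⟩
  · exact ⟨⌊(L:ℝ)*x⌋₊, floor_lt_L L x hL hx, fun r => GG L M ε x y (2*L-1+r),
      queries_bisect L M ε x y hL hε hεδ hx hsb⟩

lemma sliver_pt_mem (hL : 3 ≤ L) (hε : 0 < ε) (hεδ : 2*ε < 1/L)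
    {j : ℕ} (hj : j < L) {γ : ℝ} (hγ0 : 0 < γ) (hγε : γ ≤ ε) :
    ((j:ℝ)+1)/L - γ ∈ Set.Ico (0:ℝ) 1 := by
  have hL0 : (0:ℝ) < L := by exact_mod_cast Nat.pos_of_ne_zero (by omega)
  constructor
  · have h1 : (1:ℝ)/L ≤ ((j:ℝ)+1)/L := by
      gcongr
      have := Nat.cast_nonneg (α := ℝ) j
      linarith
    linarith
  · have h2 : ((j:ℝ)+1)/L ≤ 1 := by
      rw [div_le_one hL0]
      exact_mod_cast hj
    linarith

lemma sliver_floor (hL : 3 ≤ L) (hε : 0 < ε) (hεδ : 2*ε < 1/L)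
    {j : ℕ} (hj : j < L) {γ : ℝ} (hγ0 : 0 < γ) (hγε : γ ≤ ε) :
    ⌊(L:ℝ)*(((j:ℝ)+1)/L - γ)⌋₊ = j := by
  have hL0 : (0:ℝ) < L := by exact_mod_cast Nat.pos_of_ne_zero (by omega)
  have hmem := sliver_pt_mem L ε hL hε hεδ hj hγ0 hγε
  have hεL : ε * L < 1/2 := by
    have h5 : (2*ε)*L < (1/L)*L := mul_lt_mul_of_pos_right hεδ hL0
    rw [one_div, inv_mul_cancel₀ (ne_of_gt hL0)] at h5
    linarith
  have hexp : (L:ℝ)*(((j:ℝ)+1)/L - γ) = ((j:ℝ)+1) - L*γ := by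
    field_simp
  rw [Nat.floor_eq_iff (mul_nonneg hL0.le hmem.1)]
  constructor
  · rw [hexp]
    have : (L:ℝ)*γ ≤ L*ε := by nlinarith
    nlinarith
  · rw [hexp]
    have : (0:ℝ) < L*γ := by positivity
    push_cast
    linarith

lemma sliver_consistent (hL : 3 ≤ L) (hε : 0 < ε) (hεδ : 2*ε < 1/L)
    (j₀ : ℕ) (hj₀ : j₀ < L) (u : ℕ → Bool)
    {j : ℕ} (hj : j < L) {γ : ℝ} (hγ0 : 0 < γ) (hγε : γ ≤ ε) :
    ∃ y' : Fin (Fintype.card (SeedT L M)),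
      (phi L M ε).queries (((j:ℝ)+1)/L - γ) y'
        = fun k : Fin (2*L-1+M) => Tq L ε j₀ u (k:ℕ) := by
  have hL0 : (0:ℝ) < L := by exact_mod_cast Nat.pos_of_ne_zero (by omega)
  have hx' := sliver_pt_mem L ε hL hε hεδ hj hγ0 hγε
  set x' : ℝ := ((j:ℝ)+1)/L - γ with hx'def
  set y' : Fin (Fintype.card (SeedT L M))
    := seedEquiv L M (⟨j₀, hj₀⟩, fun t : Fin M => u (t:ℕ)) with hy'def
  have hdec : (seedEquiv L M).symm y' = (⟨j₀,hj₀⟩, fun t : Fin M => u (t:ℕ)) :=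
    Equiv.symm_apply_apply _ _
  have hfl' : ⌊(L:ℝ)*x'⌋₊ = j := sliver_floor L ε hL hε hεδ hj hγ0 hγε
  have hsb' : decide (((⌊(L:ℝ)*x'⌋₊:ℝ)+1)/L - ε ≤ x') = true := by
    rw [hfl']
    apply decide_eq_true
    rw [hx'def]
    linarith
  refine ⟨y', ?_⟩
  rw [queries_sliver L M ε x' y' hL hε hεδ hx' hsb']
  funext k
  have hjf : jfY L M y' = j₀ := by
    unfold jfY
    rw [hdec]
  rw [hjf]
  by_cases h2 : (k:ℕ) < 2*L-1
  · exact Tq_indep L ε _ _ _ _ h2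
  · apply Tq_congr_u
    intro r hr
    have hrM : r < M := by
      have := k.isLt
      omega
    unfold wY
    rw [hdec, dif_pos hrM]

theorem phi_private (hL : 3 ≤ L) (hε : 0 < ε) (hεδ : 2*ε < 1/L)
    (hMle : (1:ℝ)/L ≤ ε * 2^M) :
    IsPrivate ε (1/(L:ℝ)) L (phi L M ε) := by
  constructor
  · intro x hx y
    exact phi_accurate L M ε x y hL hε hεδ hx hMle
  · intro x hx q hq
    obtain ⟨y, hy⟩ := hq
    obtain ⟨j₀, hj₀, u, hT⟩ := phi_transcript L M ε hL hε hεδ x hx y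
    have hq' : q = fun k : Fin (2*L-1+M) => Tq L ε j₀ u (k:ℕ) := by rw [← hy, hT]
    apply le_coverNumber_of_slivers (show 0 < L by omega) hε
    · intro z hz
      exact hz.1
    · intro j hj γ hγ0 hγε
      obtain ⟨y', hy'⟩ := sliver_consistent L M ε hL hε hεδ j₀ hj₀ u hj hγ0 hγε
      refine ⟨sliver_pt_mem L ε hL hε hεδ hj hγ0 hγε, ⟨y', ?_⟩⟩
      rw [hy', ← hq']

theorem exists_private (hL : 3 ≤ L) (hε : 0 < ε) (hεδ : 2*ε < 1/L)
    (hMle : (1:ℝ)/L ≤ ε * 2^M) :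
    ∃ Y : ℕ, 0 < Y ∧ ∃ φ : Strategy (2*L-1+M) Y, IsPrivate ε (1/(L:ℝ)) L φ :=
  ⟨_, Fintype.card_pos_iff.mpr ⟨(⟨0, by omega⟩, fun _ => false)⟩, phi L M ε,
    phi_private L M ε hL hε hεδ hMle⟩

end Privacy

section Lower

variable {N Y : ℕ} (φ : Strategy N Y)

lemma resps_restrict_succ {x : ℝ} {y : Fin Y} {k : ℕ} {hist : Fin k → Bool} {b : Bool}
    (h : φ.resps x y (k+1) = Fin.snoc hist b) : φ.resps x y k = hist := by
  funext i
  have h1 := congrFun h (Fin.castSucc i)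
  rw [resps_succ] at h1
  rwa [Fin.snoc_castSucc, Fin.snoc_castSucc] at h1

lemma resps_bit {x : ℝ} {y : Fin Y} {k : ℕ} {hist : Fin k → Bool} {b : Bool}
    (h : φ.resps x y (k+1) = Fin.snoc hist b) (hk : k < N) :
    decide (φ.query ⟨k, hk⟩ (φ.resps x y k) y ≤ x) = b := by
  have h1 := congrFun h (Fin.last k)
  rw [resps_succ] at h1
  rw [Fin.snoc_last, Fin.snoc_last, dif_pos hk] at h1
  exact h1

lemma resps_snoc_self (x : ℝ) (y : Fin Y) {k : ℕ} (hk : k < N) :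
    φ.resps x y (k+1)
      = Fin.snoc (φ.resps x y k) (decide (φ.query ⟨k, hk⟩ (φ.resps x y k) y ≤ x)) := by
  rw [resps_succ, dif_pos hk]

/-- Convexity: a point between two points with equal executions has the same execution. -/
lemma resps_convex {x x' z : ℝ} {y : Fin Y} (hxz : x ≤ z) (hzx' : z ≤ x') :
    ∀ k, φ.resps x y k = φ.resps x' y k → φ.resps z y k = φ.resps x y k := by
  intro k
  induction k with
  | zero => intro _; funext i; exact i.elim0
  | succ m ih =>
      intro h
      have hrest : φ.resps x y m = φ.resps x' y m := by
        funext i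
        have h1 := congrFun h (Fin.castSucc i)
        rw [resps_succ, resps_succ, Fin.snoc_castSucc, Fin.snoc_castSucc] at h1
        exact h1
      have ihm := ih hrest
      rw [resps_succ, resps_succ, ihm]
      by_cases hm : m < N
      · rw [dif_pos hm, dif_pos hm]
        have hbit : decide (φ.query ⟨m, hm⟩ (φ.resps x y m) y ≤ x)
            = decide (φ.query ⟨m, hm⟩ (φ.resps x y m) y ≤ x') := by
          have h1 := congrFun h (Fin.last m)
          rw [resps_succ, resps_succ, Fin.snoc_last, Fin.snoc_last,
            dif_pos hm, dif_pos hm, ← hrest] at h1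
          exact h1
        have hgoal : decide (φ.query ⟨m, hm⟩ (φ.resps x y m) y ≤ z)
            = decide (φ.query ⟨m, hm⟩ (φ.resps x y m) y ≤ x) := by
          rcases Bool.eq_false_or_eq_true
              (decide (φ.query ⟨m, hm⟩ (φ.resps x y m) y ≤ x)) with hb | hb
          · rw [hb]
            exact decide_eq_true (le_trans (of_decide_eq_true hb) hxz)
          · rw [hb]
            have hx'n : ¬ φ.query ⟨m, hm⟩ (φ.resps x y m) y ≤ x' :=
              of_decide_eq_false (hbit.symm.trans hb)
            apply decide_eq_false
            intro hc
            exact hx'n (le_trans hc hzx')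
        rw [hgoal]
      · rw [dif_neg hm, dif_neg hm]

/-- Future in-window query count. -/
noncomputable def FutQ (L : ℕ) (x : ℝ) (y : Fin Y) (k : ℕ) : Finset (Fin N) :=
  Finset.univ.filter
    (fun j : Fin N => k ≤ (j:ℕ) ∧ φ.queries x y j ∈ Set.Ioo (1-(1:ℝ)/L) 1)

/-- The main accuracy/counting induction: if along every continuation at most `m`
in-window queries remain, the consistent set has diameter at most `2^m * ε`. -/
lemma cell_diam {L : ℕ} {ε : ℝ} (hL : 3 ≤ L) (hε : 0 < ε)
    (hacc : φ.Accurate ε) (y : Fin Y) :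
    ∀ d k, k + d = N → ∀ hist : Fin k → Bool, ∀ m : ℕ,
    (∀ z, z ∈ Set.Ico (1-(1:ℝ)/L) 1 → φ.resps z y k = hist →
      (FutQ φ L z y k).card ≤ m) →
    ∀ x x', x ∈ Set.Ico (1-(1:ℝ)/L) 1 → x' ∈ Set.Ico (1-(1:ℝ)/L) 1 →
      φ.resps x y k = hist → φ.resps x' y k = hist →
      |x - x'| ≤ 2^m * ε := by
  have hIsub : Set.Ico (1-(1:ℝ)/L) 1 ⊆ Set.Ico (0:ℝ) 1 := by
    intro z hz
    have hL0 : (0:ℝ) < L := by exact_mod_cast Nat.pos_of_ne_zero (by omega)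
    have h1 : (1:ℝ)/L ≤ 1 := by
      rw [div_le_one hL0]; exact_mod_cast by omega
    exact ⟨by linarith [hz.1], hz.2⟩
  intro d
  induction d with
  | zero =>
      intro k hk hist m hcount x x' hxI hx'I hx hx'
      have hkN : k = N := by omega
      subst hkN
      have hest : φ.estim x y = φ.estim x' y := by
        unfold Strategy.estim
        rw [hx, hx']
      have h1 := hacc x (hIsub hxI) y
      have h2 := hacc x' (hIsub hx'I) y
      have hm1 : (1:ℝ) ≤ 2^m := one_le_pow₀ (by norm_num)
      rw [abs_le] at h1 h2 ⊢
      rw [hest] at h1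
      constructor <;> nlinarith [h1.1, h1.2, h2.1, h2.2]
  | succ d ihd =>
      intro k hk hist m hcount x x' hxI hx'I hx hx'
      have hkN : k < N := by omega
      set q : ℝ := φ.query ⟨k, hkN⟩ hist y with hqdef
      have hqmem := φ.query_mem ⟨k, hkN⟩ hist y
      -- responses at step k
      have hbitx : φ.resps x y (k+1)
          = Fin.snoc hist (decide (q ≤ x)) := by
        rw [resps_snoc_self φ x y hkN, hx]
      have hbitx' : φ.resps x' y (k+1)
          = Fin.snoc hist (decide (q ≤ x')) := by
        rw [resps_snoc_self φ x' y hkN, hx']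
      -- value of the query along any consistent z
      have hqz : ∀ z, φ.resps z y k = hist → φ.queries z y ⟨k, hkN⟩ = q := by
        intro z hz
        have h0 : φ.queries z y ⟨k, hkN⟩ = φ.query ⟨k, hkN⟩ (φ.resps z y k) y := rfl
        rw [h0, hz]
      by_cases hqin : q ∈ Set.Ioo (1-(1:ℝ)/L) 1
      · -- informative query: both subcells have count ≤ m-1
        have hm1 : 1 ≤ m := by
          have := hcount x hxI hx
          have hmem : (⟨k, hkN⟩ : Fin N) ∈ FutQ φ L x y k := by
            unfold FutQ
            rw [Finset.mem_filter]
            exact ⟨Finset.mem_univ _, le_refl k, by rw [hqz x hx]; exact hqin⟩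
          have hpos : 0 < (FutQ φ L x y k).card := Finset.card_pos.mpr ⟨_, hmem⟩
          omega
        have hsub : ∀ b : Bool, ∀ z, z ∈ Set.Ico (1-(1:ℝ)/L) 1 →
            φ.resps z y (k+1) = Fin.snoc hist b → (FutQ φ L z y (k+1)).card ≤ m - 1 := by
          intro b z hzI hz
          have hzk : φ.resps z y k = hist := resps_restrict_succ φ hz
          have h1 := hcount z hzI hzk
          have hss : FutQ φ L z y (k+1) ⊂ FutQ φ L z y k := by
            constructor
            · intro j hj
              unfold FutQ at hj ⊢
              rw [Finset.mem_filter] at hj ⊢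
              exact ⟨hj.1, by omega, hj.2.2⟩
            · intro hcon
              have hmem : (⟨k, hkN⟩ : Fin N) ∈ FutQ φ L z y k := by
                unfold FutQ
                rw [Finset.mem_filter]
                exact ⟨Finset.mem_univ _, le_refl k, by rw [hqz z hzk]; exact hqin⟩
              have h9 := hcon hmem
              unfold FutQ at h9
              rw [Finset.mem_filter] at h9
              exact Nat.not_succ_le_self k h9.2.1
          have := Finset.card_lt_card hss
          omega
        rcases eq_or_ne (decide (q ≤ x)) (decide (q ≤ x')) with heq | hne
        · -- same subcell
          have := ihd (k+1) (by omega) (Fin.snoc hist (decide (q ≤ x))) (m-1)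
            (hsub _) x x' hxI hx'I hbitx (by rw [hbitx', ← heq])
          have hple : (2:ℝ)^(m-1) ≤ 2^m := by
            apply pow_le_pow_right₀ (by norm_num) (by omega)
          nlinarith [abs_nonneg (x - x')]
        · -- split: wlog x < q ≤ x'
          have key : ∀ a b : ℝ, a ∈ Set.Ico (1-(1:ℝ)/L) 1 → b ∈ Set.Ico (1-(1:ℝ)/L) 1 →
              φ.resps a y k = hist → φ.resps b y k = hist →
              ¬ (q ≤ a) → (q ≤ b) → b - a ≤ 2^m * ε := by
            intro a b haI hbI ha hb hqa hqb
            have hab : a < b := lt_of_lt_of_le (lt_of_not_ge hqa) hqb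
            -- q is in the cell
            have hqI : q ∈ Set.Ico (1-(1:ℝ)/L) 1 := by
              constructor
              · linarith [haI.1, le_of_not_ge hqa]
              · exact hqmem.2
            have hqcell : φ.resps q y k = hist := by
              have := resps_convex φ (le_of_not_ge hqa) hqb k (ha.trans hb.symm)
              rw [this, ha]
            have hbitq : φ.resps q y (k+1) = Fin.snoc hist true := by
              rw [resps_snoc_self φ q y hkN, hqcell, ← hqdef,
                decide_eq_true (le_refl q)]
            have hbitb : φ.resps b y (k+1) = Fin.snoc hist true := by
              rw [resps_snoc_self φ b y hkN, hb, ← hqdef, decide_eq_true hqb]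
            have hqb2 := ihd (k+1) (by omega) (Fin.snoc hist true) (m-1)
              (hsub _) q b hqI hbI hbitq hbitb
            -- lower part: approach q from below
            have hlow : ∀ γ, 0 < γ → q - a ≤ 2^(m-1) * ε + γ := by
              intro γ hγ
              set z : ℝ := max a (q - γ) with hz
              have hza : a ≤ z := le_max_left _ _
              have hzq : z < q := by
                apply max_lt (lt_of_not_ge hqa)
                linarith
              have hzb : z ≤ b := le_trans (le_of_lt hzq) hqb
              have hzI : z ∈ Set.Ico (1-(1:ℝ)/L) 1 := by
                constructor
                · linarith [haI.1]
                · exact lt_of_lt_of_le (lt_of_lt_of_le hzq hqb) (le_of_lt hbI.2)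
              have hzcell : φ.resps z y k = hist := by
                have := resps_convex φ hza hzb k (ha.trans hb.symm)
                rw [this, ha]
              have hbitz : φ.resps z y (k+1) = Fin.snoc hist false := by
                rw [resps_snoc_self φ z y hkN, hzcell, ← hqdef,
                  decide_eq_false (not_le_of_gt hzq)]
              have hbita : φ.resps a y (k+1) = Fin.snoc hist false := by
                rw [resps_snoc_self φ a y hkN, ha, ← hqdef, decide_eq_false hqa]
              have haz := ihd (k+1) (by omega) (Fin.snoc hist false) (m-1)
                (hsub _) a z haI hzI hbita hbitz
              rw [abs_le] at haz
              have : q - γ ≤ z := le_max_right _ _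
              linarith [haz.1, haz.2]
            have hlow2 : q - a ≤ 2^(m-1) * ε :=
              le_of_forall_pos_le_add (fun γ hγ => hlow γ hγ)
            rw [abs_le] at hqb2
            have hsplit : (2:ℝ)^m = 2^(m-1) + 2^(m-1) := by
              have hm' : m - 1 + 1 = m := by omega
              conv_lhs => rw [← hm']
              rw [pow_succ]
              ring
            nlinarith [hqb2.1, hqb2.2]
          rcases Bool.eq_false_or_eq_true (decide (q ≤ x)) with hb | hb
          · -- q ≤ x, so not q ≤ x'
            have hb' : decide (q ≤ x') = false := by
              rcases Bool.eq_false_or_eq_true (decide (q ≤ x')) with hb2 | hb2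
              · exact absurd (hb.trans hb2.symm) hne
              · exact hb2
            have hk2 := key x' x hx'I hxI hx' hx (of_decide_eq_false hb')
              (of_decide_eq_true hb)
            have hxx : x' < x := lt_of_lt_of_le (lt_of_not_ge (of_decide_eq_false hb'))
              (of_decide_eq_true hb)
            rw [abs_le]
            constructor
            · nlinarith [pow_pos (show (0:ℝ) < 2 by norm_num) m]
            · nlinarith [pow_pos (show (0:ℝ) < 2 by norm_num) m]
          · -- not q ≤ x, so q ≤ x'
            have hb' : decide (q ≤ x') = true := by
              rcases Bool.eq_false_or_eq_true (decide (q ≤ x')) with hb2 | hb2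
              · exact hb2
              · exact absurd (hb.trans hb2.symm) hne
            have hk2 := key x x' hxI hx'I hx hx' (of_decide_eq_false hb)
              (of_decide_eq_true hb')
            have hxx : x < x' := lt_of_lt_of_le (lt_of_not_ge (of_decide_eq_false hb))
              (of_decide_eq_true hb')
            rw [abs_le]
            constructor
            · nlinarith [pow_pos (show (0:ℝ) < 2 by norm_num) m]
            · nlinarith [pow_pos (show (0:ℝ) < 2 by norm_num) m]
      · -- uninformative query: response is constant on the window
        have hq1 : q ≤ 1-(1:ℝ)/L := by
          by_contra hcon
          push_neg at hcon
          exact hqin ⟨hcon, hqmem.2⟩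
        have hbtrue : ∀ z : ℝ, z ∈ Set.Ico (1-(1:ℝ)/L) 1 → decide (q ≤ z) = true := by
          intro z hz
          exact decide_eq_true (le_trans hq1 hz.1)
        have hsub : ∀ z, z ∈ Set.Ico (1-(1:ℝ)/L) 1 →
            φ.resps z y (k+1) = Fin.snoc hist true → (FutQ φ L z y (k+1)).card ≤ m := by
          intro z hzI hz
          have hzk : φ.resps z y k = hist := resps_restrict_succ φ hz
          have h1 := hcount z hzI hzk
          have hss : FutQ φ L z y (k+1) ⊆ FutQ φ L z y k := by
            intro j hj
            unfold FutQ at hj ⊢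
            rw [Finset.mem_filter] at hj ⊢
            exact ⟨hj.1, by omega, hj.2.2⟩
          exact le_trans (Finset.card_le_card hss) h1
        apply ihd (k+1) (by omega) (Fin.snoc hist true) m hsub x x' hxI hx'I
        · rw [hbitx, hbtrue x hxI]
        · rw [hbitx', hbtrue x' hx'I]

end Lower

section Deep

variable {N Y : ℕ} (φ : Strategy N Y)

/-- Existence of a value forcing many in-window queries. -/
lemma exists_deep {L M : ℕ} {ε : ℝ} (hL : 3 ≤ L) (hε : 0 < ε)
    (hacc : φ.Accurate ε) (y : Fin Y) (hM : (2:ℝ)^(M-1) * ε < 1/L) :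
    ∃ x, x ∈ Set.Ico (1-(1:ℝ)/L) 1 ∧
      M ≤ (Finset.univ.filter
        (fun j : Fin N => φ.queries x y j ∈ Set.Ioo (1-(1:ℝ)/L) 1)).card := by
  have hL0 : (0:ℝ) < L := by exact_mod_cast Nat.pos_of_ne_zero (by omega)
  by_contra hcon
  push_neg at hcon
  have hcount : ∀ z, z ∈ Set.Ico (1-(1:ℝ)/L) 1 → φ.resps z y 0 = Fin.elim0 →
      (FutQ φ L z y 0).card ≤ M - 1 := by
    intro z hz _
    have h1 := hcon z hz
    have h2 : FutQ φ L z y 0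
        = Finset.univ.filter
          (fun j : Fin N => φ.queries z y j ∈ Set.Ioo (1-(1:ℝ)/L) 1) := by
      unfold FutQ
      apply Finset.filter_congr
      intro j _
      simp [Nat.zero_le]
    rw [h2]
    omega
  have hdiam := cell_diam φ hL hε hacc y N 0 (by omega) Fin.elim0 (M-1) hcount
  set η : ℝ := ((1:ℝ)/L - 2^(M-1)*ε)/2 with hη
  have hηpos : 0 < η := by
    rw [hη]
    have := hM
    linarith
  have hη2 : η < 1/L := by
    rw [hη]
    have hp : (0:ℝ) < 2^(M-1)*ε := by positivity
    linarith
  have hx1 : (1-(1:ℝ)/L) ∈ Set.Ico (1-(1:ℝ)/L) 1 := by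
    constructor
    · exact le_refl _
    · linarith [div_pos (show (0:ℝ) < 1 by norm_num) hL0]
  have hx2 : (1-η) ∈ Set.Ico (1-(1:ℝ)/L) 1 := by
    constructor
    · linarith
    · linarith
  have helim : ∀ z : ℝ, φ.resps z y 0 = Fin.elim0 := by
    intro z
    funext i
    exact i.elim0
  have := hdiam (1-(1:ℝ)/L) (1-η) hx1 hx2 (helim _) (helim _)
  rw [abs_le] at this
  have h3 := this.1
  rw [hη] at h3
  linarith [h3]

end Deep

noncomputable def gre (δ : ℝ) (E : Set ℝ) : ℕ → ℝ
  | 0 => sInf E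
  | (t+1) => sInf (E ∩ Set.Ioi (gre δ E t + δ))

lemma gre_zero (δ : ℝ) (E : Set ℝ) : gre δ E 0 = sInf E := rfl

lemma gre_succ (δ : ℝ) (E : Set ℝ) (t : ℕ) :
    gre δ E (t+1) = sInf (E ∩ Set.Ioi (gre δ E t + δ)) := rfl

lemma greedy_struct {E : Set ℝ} {L : ℕ} (hL : 3 ≤ L) (hEne : E.Nonempty)
    (hBB : BddBelow E) (hcov : L ≤ coverNumber ((1:ℝ)/L) E) :
    ∀ t, t ≤ L-1 →
      (∀ γ : ℝ, 0 < γ →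
        (E ∩ Set.Ico (gre ((1:ℝ)/L) E t) (gre ((1:ℝ)/L) E t + γ)).Nonempty) ∧
      (∀ s, s < t → gre ((1:ℝ)/L) E s + (1:ℝ)/L ≤ gre ((1:ℝ)/L) E (s+1)) := by
  intro t
  induction t with
  | zero =>
      intro _
      constructor
      · intro γ hγ
        obtain ⟨a, haE, halt⟩ := Real.lt_sInf_add_pos hEne hγ
        exact ⟨a, haE, csInf_le hBB haE, halt⟩
      · intro s hs
        omega
  | succ t ih =>
      intro ht
      have iht := ih (by omega)
      have hne2 : (E ∩ Set.Ioi (gre ((1:ℝ)/L) E t + (1:ℝ)/L)).Nonempty := by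
        by_contra hemp
        rw [Set.not_nonempty_iff_eq_empty] at hemp
        have haux : ∀ s : ℕ, ∀ x ∈ E, x ≤ gre ((1:ℝ)/L) E s + (1:ℝ)/L →
            ∃ r, r ≤ s ∧ gre ((1:ℝ)/L) E r ≤ x ∧ x ≤ gre ((1:ℝ)/L) E r + (1:ℝ)/L := by
          intro s
          induction s with
          | zero =>
              intro x hx hle
              exact ⟨0, le_refl 0, csInf_le hBB hx, hle⟩
          | succ s ihs =>
              intro x hx hle
              by_cases hcase : x ≤ gre ((1:ℝ)/L) E s + (1:ℝ)/L
              · obtain ⟨r, h1, h2, h3⟩ := ihs x hx hcase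
                exact ⟨r, by omega, h2, h3⟩
              · push_neg at hcase
                refine ⟨s+1, le_refl _, ?_, hle⟩
                rw [gre_succ]
                exact csInf_le (hBB.mono Set.inter_subset_left) ⟨hx, hcase⟩
        have hcover : Coverable ((1:ℝ)/L) (t+1) E := by
          refine ⟨fun r => gre ((1:ℝ)/L) E r, fun r => gre ((1:ℝ)/L) E r + (1:ℝ)/L,
            fun r => by ring_nf; exact le_refl _, ?_⟩
          intro x hx
          have hle : x ≤ gre ((1:ℝ)/L) E t + (1:ℝ)/L := by
            by_contra hc
            push_neg at hc
            have : x ∈ E ∩ Set.Ioi (gre ((1:ℝ)/L) E t + (1:ℝ)/L) := ⟨hx, hc⟩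
            rw [hemp] at this
            exact Set.notMem_empty x this
          obtain ⟨r, h1, h2, h3⟩ := haux t x hx hle
          exact Set.mem_iUnion.mpr ⟨⟨r, by omega⟩, h2, h3⟩
        have hfin := le_of_coverable hcov (by omega : 0 < t+1) hcover
        omega
      constructor
      · intro γ hγ
        obtain ⟨a, haE, halt⟩ := Real.lt_sInf_add_pos hne2 hγ
        refine ⟨a, haE.1, ?_, ?_⟩
        · rw [gre_succ]
          exact csInf_le (hBB.mono Set.inter_subset_left) haE
        · rw [gre_succ]
          exact halt
      · intro s hs
        rcases Nat.lt_succ_iff_lt_or_eq.mp hs with h1 | h1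
        · exact iht.2 s h1
        · subst h1
          rw [gre_succ]
          apply le_csInf hne2
          intro b hb
          exact le_of_lt hb.2

set_option maxHeartbeats 1000000 in
lemma cell_around {N Y : ℕ} (φ : Strategy N Y) {ε : ℝ} (hε : 0 < ε)
    (hacc : φ.Accurate ε) {q : Fin N → ℝ} {e : ℝ}
    (he01 : e ∈ Set.Ico (0:ℝ) 1) {yt : Fin Y} (hyt : φ.queries e yt = q) :
    ∃ u v : ℝ,
      (u = 0 ∨ u ∈ Finset.image q Finset.univ) ∧
      (v = 1 ∨ v ∈ Finset.image q Finset.univ) ∧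
      0 ≤ u ∧ u ≤ e ∧ e < v ∧ v ≤ 1 ∧ v - u ≤ ε := by
  classical
  set V : Finset ℝ := Finset.image q Finset.univ with hV
  set U0 : Finset ℝ := insert (0:ℝ) (V.filter (fun w => w ≤ e)) with hU0
  set V1 : Finset ℝ := insert (1:ℝ) (V.filter (fun w => e < w)) with hV1
  have hU0ne : U0.Nonempty := ⟨0, Finset.mem_insert_self _ _⟩
  have hV1ne : V1.Nonempty := ⟨1, Finset.mem_insert_self _ _⟩
  set u : ℝ := U0.max' hU0ne with hu
  set v : ℝ := V1.min' hV1ne with hv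
  have hu_le_e : u ≤ e := by
    apply Finset.max'_le
    intro w hw
    rcases Finset.mem_insert.mp hw with h | h
    · rw [h]; exact he01.1
    · exact (Finset.mem_filter.mp h).2
  have hv_gt : e < v := by
    rw [hv]
    rw [Finset.lt_min'_iff]
    intro w hw
    rcases Finset.mem_insert.mp hw with h | h
    · rw [h]; exact he01.2
    · exact (Finset.mem_filter.mp h).2
  have hu0 : 0 ≤ u := Finset.le_max' _ _ (Finset.mem_insert_self _ _)
  have hv1 : v ≤ 1 := Finset.min'_le _ _ (Finset.mem_insert_self _ _)
  have humem : u = 0 ∨ u ∈ V := by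
    have := Finset.max'_mem U0 hU0ne
    rcases Finset.mem_insert.mp this with h | h
    · exact Or.inl h
    · exact Or.inr (Finset.mem_filter.mp h).1
  have hvmem : v = 1 ∨ v ∈ V := by
    have := Finset.min'_mem V1 hV1ne
    rcases Finset.mem_insert.mp this with h | h
    · exact Or.inl h
    · exact Or.inr (Finset.mem_filter.mp h).1
  have hexec : ∀ x', u ≤ x' → x' < v → ∀ k, φ.resps e yt k = φ.resps x' yt k := by
    intro x' h1 h2
    apply exec_eq_of_cell φ e x' u v yt ⟨hu_le_e, hv_gt⟩ ⟨h1, h2⟩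
    intro k
    have hqk : φ.queries e yt k = q k := by rw [hyt]
    have hqkV : q k ∈ V := Finset.mem_image.mpr ⟨k, Finset.mem_univ _, rfl⟩
    rcases le_or_gt (q k) e with h | h
    · left
      have hqmemU : q k ∈ U0 := by
        rw [hU0]
        exact Finset.mem_insert_of_mem (Finset.mem_filter.mpr ⟨hqkV, h⟩)
      calc φ.queries e yt k = q k := hqk
        _ ≤ u := Finset.le_max' U0 (q k) hqmemU
    · right
      have hqmemV : q k ∈ V1 := by
        rw [hV1]
        exact Finset.mem_insert_of_mem (Finset.mem_filter.mpr ⟨hqkV, h⟩)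
      calc v ≤ q k := Finset.min'_le V1 (q k) hqmemV
        _ = φ.queries e yt k := hqk.symm
  have hest : ∀ x', u ≤ x' → x' < v → |φ.estim e yt - x'| ≤ ε/2 := by
    intro x' h1 h2
    have hx'mem : x' ∈ Set.Ico (0:ℝ) 1 := ⟨le_trans hu0 h1, lt_of_lt_of_le h2 hv1⟩
    have hacc' := hacc x' hx'mem yt
    have heq : φ.estim e yt = φ.estim x' yt := estim_eq_of_exec φ _ _ _ (hexec x' h1 h2)
    rwa [heq]
  refine ⟨u, v, humem, hvmem, hu0, hu_le_e, hv_gt, hv1, ?_⟩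
  apply le_of_forall_pos_le_add
  intro γ hγ
  by_cases hc : v - γ ≤ u
  · linarith
  · push_neg at hc
    have h1 := hest u (le_refl u) (lt_of_le_of_lt hu_le_e hv_gt)
    have h2 := hest (v - γ) (le_of_lt hc) (by linarith)
    rw [abs_le] at h1 h2
    linarith [h1.1, h1.2, h2.1, h2.2]

set_option maxHeartbeats 1000000 in
theorem lower_bound {N Y : ℕ} (φ : Strategy N Y) {L M : ℕ} {ε : ℝ}
    (hL : 3 ≤ L) (hε : 0 < ε) (hεδ : 2*ε < 1/(L:ℝ)) (hY : 0 < Y)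
    (hM : (2:ℝ)^(M-1) * ε < 1/L)
    (hpriv : IsPrivate ε (1/(L:ℝ)) L φ) :
    M + (2*L - 4) ≤ N := by
  classical
  have hL0 : (0:ℝ) < L := by exact_mod_cast Nat.pos_of_ne_zero (by omega)
  have hδpos : (0:ℝ) < 1/L := div_pos one_pos hL0
  set y₀ : Fin Y := ⟨0, hY⟩ with hy₀
  obtain ⟨xs, hxsI, hxs⟩ := exists_deep φ hL hε hpriv.1 y₀ hM
  set q : Fin N → ℝ := φ.queries xs y₀ with hq
  set E : Set ℝ := φ.infoSet q with hEd
  have hxs01 : xs ∈ Set.Ico (0:ℝ) 1 := by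
    have h1 : (1:ℝ)/L ≤ 1 := by rw [div_le_one hL0]; exact_mod_cast by omega
    exact ⟨by linarith [hxsI.1], hxsI.2⟩
  have hcov : L ≤ coverNumber ((1:ℝ)/L) E := hpriv.2 xs hxs01 q ⟨y₀, rfl⟩
  have hEsub : E ⊆ Set.Ico (0:ℝ) 1 := fun z hz => hz.1
  have hEne : E.Nonempty := ⟨xs, hxs01, ⟨y₀, rfl⟩⟩
  have hBB : BddBelow E := ⟨0, fun z hz => hz.1.1⟩
  have hmain := greedy_struct hL hEne hBB hcov
  have hgaps : ∀ s, s < L-1 →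
      gre ((1:ℝ)/L) E s + (1:ℝ)/L ≤ gre ((1:ℝ)/L) E (s+1) :=
    (hmain (L-1) (le_refl _)).2
  have happrox : ∀ t, t ≤ L-1 → ∀ γ : ℝ, 0 < γ →
      (E ∩ Set.Ico (gre ((1:ℝ)/L) E t) (gre ((1:ℝ)/L) E t + γ)).Nonempty :=
    fun t ht => (hmain t ht).1
  set g : ℕ → ℝ := gre ((1:ℝ)/L) E with hgd
  have hmono : ∀ s d : ℕ, s + d ≤ L-1 → g s + (d:ℝ)*((1:ℝ)/L) ≤ g (s+d) := by
    intro s d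
    induction d with
    | zero => intro _; simp
    | succ d ihd =>
        intro hsd
        have h1 := ihd (by omega)
        have h2 := hgaps (s+d) (by omega)
        have h3 : s + (d+1) = (s+d)+1 := by omega
        rw [h3]
        push_cast
        push_cast at h1
        linarith
  have hg0 : 0 ≤ g 0 := le_csInf hEne (fun e he => he.1.1)
  have hglt1 : ∀ t, t ≤ L-1 → g t < 1 := by
    intro t ht
    obtain ⟨e, heE, he1, _⟩ := happrox t ht 1 one_pos
    exact lt_of_le_of_lt he1 (hEsub heE).2
  have hg1δ : ∀ t, t ≤ L-2 → g t < 1 - (1:ℝ)/L := by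
    intro t ht
    have h1 := hmono t (L-1-t) (by omega)
    have h2 : t + (L-1-t) = L-1 := by omega
    rw [h2] at h1
    have h3 := hglt1 (L-1) (le_refl _)
    have h4 : (1:ℝ) ≤ ((L-1-t : ℕ):ℝ) := by exact_mod_cast (by omega : 1 ≤ L-1-t)
    nlinarith
  set γb : ℝ := ((1:ℝ)/L - 2*ε)/2 with hγb
  have hγbpos : 0 < γb := by rw [hγb]; linarith
  have hγbe : γb + ε < (1:ℝ)/L - ε := by rw [hγb]; linarith
  have hsel : ∀ t, ∃ e, t ≤ L-1 →
      (e ∈ E ∧ g t ≤ e ∧ e < g t + γb ∧ (t ≤ L-2 → e < 1 - (1:ℝ)/L)) := by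
    intro t
    by_cases ht : t ≤ L-1
    · by_cases ht2 : t ≤ L-2
      · have hpos : 0 < min γb (1 - (1:ℝ)/L - g t) := by
          apply lt_min hγbpos
          have := hg1δ t ht2
          linarith
        obtain ⟨e, heE, he1, he2⟩ := happrox t ht _ hpos
        refine ⟨e, fun _ => ⟨heE, he1, ?_, fun _ => ?_⟩⟩
        · exact lt_of_lt_of_le he2
            (by linarith [min_le_left γb (1 - (1:ℝ)/L - g t)])
        · have := min_le_right γb (1 - (1:ℝ)/L - g t)
          linarith
      · obtain ⟨e, heE, he1, he2⟩ := happrox t ht γb hγbpos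
        exact ⟨e, fun _ => ⟨heE, he1, he2, fun hc => absurd hc ht2⟩⟩
    · exact ⟨0, fun hc => absurd hc ht⟩
  choose ee hee using hsel
  have hcellsel : ∀ t, ∃ uvp : ℝ × ℝ, t ≤ L-1 →
      ((uvp.1 = 0 ∨ uvp.1 ∈ Finset.image q Finset.univ) ∧
       (uvp.2 = 1 ∨ uvp.2 ∈ Finset.image q Finset.univ) ∧
       0 ≤ uvp.1 ∧ uvp.1 ≤ ee t ∧ ee t < uvp.2 ∧ uvp.2 ≤ 1 ∧ uvp.2 - uvp.1 ≤ ε) := by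
    intro t
    by_cases ht : t ≤ L-1
    · obtain ⟨heE, _, _, _⟩ := hee t ht
      obtain ⟨y_t, hy_t⟩ := heE.2
      obtain ⟨u, v, h1, h2, h3, h4, h5, h6, h7⟩ :=
        cell_around φ hε hpriv.1 heE.1 hy_t
      exact ⟨(u, v), fun _ => ⟨h1, h2, h3, h4, h5, h6, h7⟩⟩
    · exact ⟨(0,1), fun hc => absurd hc ht⟩
  choose uv huv using hcellsel
  have hupper : ∀ t, t ≤ L-1 → (uv t).1 < g t + γb ∧ (uv t).2 ≤ g t + γb + ε := by
    intro t ht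
    obtain ⟨heE, hge, hlt, _⟩ := hee t ht
    obtain ⟨_, _, _, h4, h5, _, h7⟩ := huv t ht
    exact ⟨lt_of_le_of_lt h4 hlt, by linarith⟩
  have hlower : ∀ t, t ≤ L-1 → g t - ε < (uv t).1 ∧ g t < (uv t).2 := by
    intro t ht
    obtain ⟨heE, hge, hlt, _⟩ := hee t ht
    obtain ⟨_, _, _, h4, h5, _, h7⟩ := huv t ht
    exact ⟨by linarith, by linarith⟩
  have hsep : ∀ s t, s < t → t ≤ L-1 → g s + (1:ℝ)/L ≤ g t := by
    intro s t hst htL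
    have h1 := hmono s (t-s) (by omega)
    have h2 : s + (t-s) = t := by omega
    rw [h2] at h1
    have h4 : (1:ℝ) ≤ ((t-s : ℕ):ℝ) := by exact_mod_cast (by omega : 1 ≤ t-s)
    nlinarith
  have hcross : ∀ s t, s < t → t ≤ L-1 →
      (uv s).2 < (uv t).1 ∧ (uv s).2 < (uv t).2 ∧ (uv s).1 < (uv t).1 := by
    intro s t hst htL
    have hA := hupper s (by omega)
    have hB := hlower t htL
    have hC := hsep s t hst htL
    exact ⟨by linarith [hA.2, hB.1, hγbe], by linarith [hA.2, hB.2, hγbe],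
      by linarith [hA.1, hB.1, hγbe]⟩
  have hVmemu : ∀ t, 1 ≤ t → t ≤ L-2 →
      (uv t).1 ∈ Finset.image q Finset.univ ∧ (uv t).1 ≤ 1 - (1:ℝ)/L := by
    intro t h1 h2
    obtain ⟨hm1, _, _, h4, h5, _, h7⟩ := huv t (by omega)
    obtain ⟨heE, hge, hlt, hlast⟩ := hee t (by omega)
    have hs := hsep 0 t (by omega) (by omega)
    constructor
    · rcases hm1 with h | h
      · exfalso
        have hupos : (0:ℝ) < (uv t).1 := by linarith [hg0, hεδ]
        rw [h] at hupos
        exact lt_irrefl 0 hupos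
      · exact h
    · have := hlast h2
      linarith
  have hVmemv : ∀ t, t ≤ L-3 →
      (uv t).2 ∈ Finset.image q Finset.univ ∧ (uv t).2 ≤ 1 - (1:ℝ)/L := by
    intro t ht
    obtain ⟨_, hm2, _, h4, h5, _, h7⟩ := huv t (by omega)
    have hvbound : (uv t).2 ≤ 1 - (1:ℝ)/L := by
      have h1 := (hupper t (by omega)).2
      have h2 := hmono t (L-1-t) (by omega)
      have h3 : t + (L-1-t) = L-1 := by omega
      rw [h3] at h2
      have h4' : (2:ℝ) ≤ ((L-1-t : ℕ):ℝ) := by exact_mod_cast (by omega : 2 ≤ L-1-t)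
      have h5' := hglt1 (L-1) (le_refl _)
      nlinarith [hγbe]
    constructor
    · rcases hm2 with h | h
      · exfalso
        rw [h] at hvbound
        linarith
      · exact h
    · exact hvbound
  -- assemble the counting
  set V : Finset ℝ := Finset.image q Finset.univ with hVd
  set A : Finset ℝ := Finset.image (fun t => (uv t).2) (Finset.range (L-2)) with hA
  set B : Finset ℝ := Finset.image (fun t => (uv (t+1)).1) (Finset.range (L-2)) with hB
  have hAcard : A.card = L-2 := by
    rw [hA, Finset.card_image_of_injOn, Finset.card_range]
    intro a ha b hb hab
    simp only [Finset.coe_range, Set.mem_Iio] at ha hb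
    have hab' : (uv a).2 = (uv b).2 := hab
    by_contra hne
    rcases Nat.lt_or_ge a b with h | h
    · have := (hcross a b h (by omega)).2.1
      rw [hab'] at this
      exact lt_irrefl _ this
    · have hba : b < a := by omega
      have := (hcross b a hba (by omega)).2.1
      rw [hab'] at this
      exact lt_irrefl _ this
  have hBcard : B.card = L-2 := by
    rw [hB, Finset.card_image_of_injOn, Finset.card_range]
    intro a ha b hb hab
    simp only [Finset.coe_range, Set.mem_Iio] at ha hb
    have hab' : (uv (a+1)).1 = (uv (b+1)).1 := hab
    by_contra hne
    rcases Nat.lt_or_ge a b with h | h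
    · have := (hcross (a+1) (b+1) (by omega) (by omega)).2.2
      rw [hab'] at this
      exact lt_irrefl _ this
    · have hba : b < a := by omega
      have := (hcross (b+1) (a+1) (by omega) (by omega)).2.2
      rw [hab'] at this
      exact lt_irrefl _ this
  have hdisj : Disjoint A B := by
    rw [Finset.disjoint_left]
    intro w hwA hwB
    rw [hA, Finset.mem_image] at hwA
    rw [hB, Finset.mem_image] at hwB
    obtain ⟨a, ha, haw⟩ := hwA
    obtain ⟨b, hb, hbw⟩ := hwB
    rw [Finset.mem_range] at ha hb
    have haw' : (uv a).2 = w := haw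
    have hbw' : (uv (b+1)).1 = w := hbw
    rcases Nat.lt_trichotomy a (b+1) with h | h | h
    · have hlt := (hcross a (b+1) h (by omega)).1
      rw [haw', hbw'] at hlt
      exact lt_irrefl w hlt
    · obtain ⟨_, _, _, h4, h5, _, _⟩ := huv a (by omega)
      have hlt : (uv a).1 < (uv a).2 := lt_of_le_of_lt h4 h5
      have hbw'' : (uv a).1 = w := by rw [h]; exact hbw'
      rw [hbw'', haw'] at hlt
      exact lt_irrefl w hlt
    · have hlt := (hcross (b+1) a h (by omega)).2.2
      obtain ⟨_, _, _, h4, h5, _, _⟩ := huv a (by omega)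
      have hlt2 : (uv (b+1)).1 < (uv a).2 := lt_trans hlt (lt_of_le_of_lt h4 h5)
      rw [haw', hbw'] at hlt2
      exact lt_irrefl w hlt2
  set Vout : Finset ℝ := V.filter (fun w => ¬ (w ∈ Set.Ioo (1-(1:ℝ)/L) 1)) with hVout
  have hsubA : A ⊆ Vout := by
    intro w hw
    rw [hA, Finset.mem_image] at hw
    obtain ⟨a, ha, haw⟩ := hw
    rw [Finset.mem_range] at ha
    obtain ⟨hmem, hle⟩ := hVmemv a (by omega)
    rw [hVout, Finset.mem_filter]
    rw [← haw]
    exact ⟨hmem, fun hc => by linarith [hc.1]⟩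
  have hsubB : B ⊆ Vout := by
    intro w hw
    rw [hB, Finset.mem_image] at hw
    obtain ⟨b, hb, hbw⟩ := hw
    rw [Finset.mem_range] at hb
    obtain ⟨hmem, hle⟩ := hVmemu (b+1) (by omega) (by omega)
    rw [hVout, Finset.mem_filter]
    rw [← hbw]
    exact ⟨hmem, fun hc => by linarith [hc.1]⟩
  have hcardout : 2*L-4 ≤ Vout.card := by
    have h1 := Finset.card_le_card (Finset.union_subset hsubA hsubB)
    rw [Finset.card_union_of_disjoint hdisj, hAcard, hBcard] at h1
    omega
  set Pout : Finset (Fin N) :=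
    Finset.univ.filter (fun k : Fin N => ¬ (q k ∈ Set.Ioo (1-(1:ℝ)/L) 1)) with hPout
  set Pin : Finset (Fin N) :=
    Finset.univ.filter (fun k : Fin N => q k ∈ Set.Ioo (1-(1:ℝ)/L) 1) with hPin
  have himg : Vout ⊆ Finset.image q Pout := by
    intro w hw
    rw [hVout, Finset.mem_filter] at hw
    obtain ⟨k, _, hkw⟩ := Finset.mem_image.mp hw.1
    refine Finset.mem_image.mpr ⟨k, ?_, hkw⟩
    rw [hPout, Finset.mem_filter]
    exact ⟨Finset.mem_univ _, by rw [hkw]; exact hw.2⟩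
  have hPoutcard : 2*L-4 ≤ Pout.card :=
    le_trans hcardout (le_trans (Finset.card_le_card himg) Finset.card_image_le)
  have hPincard : M ≤ Pin.card := hxs
  have hsum : Pin.card + Pout.card = N := by
    have h := Finset.card_filter_add_card_filter_not
      (s := (Finset.univ : Finset (Fin N)))
      (p := fun k => q k ∈ Set.Ioo (1-(1:ℝ)/L) 1)
    rw [Finset.card_univ, Fintype.card_fin] at h
    exact h
  omega

end PrivLearn

/-- for `L ≥ 3` and `δ = 1/L`,
`⌈log₂(1/(Lε))⌉ + 2L − 4 ≤ N*(ε, 1/L, L) ≤ ⌈log₂(1/(Lε))⌉ + 2L`. -/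
theorem query_complexity_L_ge_three (ε : ℝ) (L : ℕ) (hL : 3 ≤ L)
    (hε : 0 < ε) (h : 2 * ε < 1 / (L : ℝ)) :
    ⌈Real.logb 2 (1 / ((L : ℝ) * ε))⌉ + 2 * (L : ℤ) - 4 ≤ (Nstar ε (1 / (L : ℝ)) L : ℤ) ∧
    (Nstar ε (1 / (L : ℝ)) L : ℤ) ≤ ⌈Real.logb 2 (1 / ((L : ℝ) * ε))⌉ + 2 * (L : ℤ) := by
  classical
  have hL0 : (0:ℝ) < L := by exact_mod_cast Nat.pos_of_ne_zero (by omega)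
  set c : ℝ := Real.logb 2 (1 / ((L : ℝ) * ε)) with hc
  set M : ℕ := (⌈c⌉).toNat with hMdef
  set X : ℝ := 1 / ((L : ℝ) * ε) with hX
  have hXpos : 0 < X := by rw [hX]; positivity
  have hXeq : X = (1/(L:ℝ))/ε := by rw [hX, div_div]
  have h2X : (2:ℝ) < X := by
    rw [hXeq, lt_div_iff₀ hε]
    linarith
  have hc1 : (1:ℝ) < c := by
    rw [hc]
    rw [show (1:ℝ) = Real.logb 2 2 by simp]
    apply Real.logb_lt_logb (by norm_num) (by norm_num) h2X
  have hceil2 : (2:ℤ) ≤ ⌈c⌉ := by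
    have := Int.lt_ceil.mpr (show ((1:ℤ):ℝ) < c by exact_mod_cast hc1)
    omega
  have hMc : (M:ℤ) = ⌈c⌉ := by
    rw [hMdef]
    exact Int.toNat_of_nonneg (by omega)
  have hM2 : 2 ≤ M := by omega
  have hcM : c ≤ (M:ℝ) := by
    have h1 := Int.le_ceil c
    have h2 : ((⌈c⌉:ℤ):ℝ) = (M:ℝ) := by exact_mod_cast hMc.symm
    linarith
  have hMc1 : (M:ℝ) - 1 < c := by
    have h1 := Int.ceil_lt_add_one c
    have h2 : ((⌈c⌉:ℤ):ℝ) = (M:ℝ) := by exact_mod_cast hMc.symm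
    linarith
  -- 2^c = X
  have hrpow : (2:ℝ) ^ c = X := Real.rpow_logb (by norm_num) (by norm_num) hXpos
  have hMle : (1:ℝ)/L ≤ ε * 2^M := by
    have h1 : (2:ℝ) ^ (M:ℝ) ≥ X := by
      rw [← hrpow]
      exact Real.rpow_le_rpow_left_iff (by norm_num) |>.mpr hcM
    rw [← Real.rpow_natCast (2:ℝ) M]
    rw [hXeq, ge_iff_le, div_le_iff₀ hε] at h1
    linarith
  have hMlow : (2:ℝ)^(M-1) * ε < 1/L := by
    have h1 : (2:ℝ) ^ ((M:ℝ) - 1) < X := by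
      rw [← hrpow]
      exact Real.rpow_lt_rpow_left_iff (by norm_num) |>.mpr hMc1
    have h2 : ((M - 1 : ℕ):ℝ) = (M:ℝ) - 1 := by
      have : 1 ≤ M := by omega
      push_cast [this]
      ring
    have h3 : (2:ℝ) ^ (M-1 : ℕ) < X := by
      rw [← Real.rpow_natCast (2:ℝ) (M-1), h2]
      exact h1
    rw [hXeq, lt_div_iff₀ hε] at h3
    exact h3
  have hupper := PrivLearn.exists_private L M ε hL hε h hMle
  have hub : Nstar ε (1/(L:ℝ)) L ≤ 2*L-1+M := Nat.sInf_le hupper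
  have hmem := Nat.sInf_mem (⟨2*L-1+M, hupper⟩ :
    {N : ℕ | ∃ Y : ℕ, 0 < Y ∧ ∃ φ : Strategy N Y, IsPrivate ε (1/(L:ℝ)) L φ}.Nonempty)
  obtain ⟨Y, hY, φ, hφ⟩ := hmem
  have hlb := PrivLearn.lower_bound φ hL hε h hY hMlow hφ
  constructor
  · have h1 : (M:ℤ) + (2*(L:ℤ) - 4) ≤ (Nstar ε (1/(L:ℝ)) L : ℤ) := by
      have h2 : ((M + (2*L-4) : ℕ):ℤ) ≤ ((Nstar ε (1/(L:ℝ)) L : ℕ):ℤ) := by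
        exact_mod_cast hlb
      push_cast at h2
      omega
    omega
  · have h1 : ((Nstar ε (1/(L:ℝ)) L : ℕ):ℤ) ≤ ((2*L-1+M : ℕ):ℤ) := by exact_mod_cast hub
    have h2 : ((2*L-1+M : ℕ):ℤ) = 2*(L:ℤ) - 1 + (M:ℤ) := by
      push_cast
      omega
    omega
end

section
/- Let ε > 0 and let φ be a learner strategy of length N satisfying the accuracy constraint with parameter ε. Then for every x ∈ [0,1) and every q̄ ∈ Q(x), the information set I(q̄) is contained in the union of the special intervals of q̄; in particular, every element of I(q̄) lies in some interval [q^i, q^{i+1}) between consecutive sorted augmented queries of q̄ whose length is at most ε. -/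
open Set

theorem Strategy.resps_eq_aux {N Y : ℕ} (φ : Strategy N Y) (y : Fin Y) (x x' : ℝ)
    (h : ∀ k : ℕ, ∀ hk : k < N,
      (φ.query ⟨k, hk⟩ (φ.resps x y k) y ≤ x ↔ φ.query ⟨k, hk⟩ (φ.resps x y k) y ≤ x')) :
    ∀ k : ℕ, φ.resps x y k = φ.resps x' y k := by
  intro k
  induction k with
  | zero => funext i; exact i.elim0
  | succ k ih =>
    funext i
    simp only [Strategy.resps]
    split_ifs with h1 hk
    · rw [ih]
    · rw [← ih]
      simp only [decide_eq_decide]; exact h k hk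
    · rfl

/-- for an accurate strategy, the information set `I(q̄)` is contained in the
union of the special intervals of `q̄`: every `z ∈ I(q̄)` lies in an interval `[a, b)`
between consecutive values of the augmented query set `{0, 1} ∪ {q_k}` with `b − a ≤ ε`. -/
theorem infoSet_subset_special_intervals {N Y : ℕ} (ε : ℝ) (hε : 0 < ε)
    (φ : Strategy N Y) (hacc : φ.Accurate ε) :
    ∀ x ∈ Set.Ico (0 : ℝ) 1, ∀ q ∈ φ.Q x, ∀ z ∈ φ.infoSet q,
      ∃ a ∈ insert (0 : ℝ) (insert 1 (Set.range q)),
      ∃ b ∈ insert (0 : ℝ) (insert 1 (Set.range q)),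
        a ≤ z ∧ z < b ∧ b - a ≤ ε ∧
        ∀ c ∈ insert (0 : ℝ) (insert 1 (Set.range q)), c ≤ a ∨ b ≤ c := by
  intro x _hx q _hq z hz
  obtain ⟨⟨hz0, hz1⟩, y, hqy⟩ := hz
  -- the augmented query set as a Finset
  set S : Finset ℝ := insert (0 : ℝ) (insert 1 (Finset.image q Finset.univ)) with hSdef
  have hS : (↑S : Set ℝ) = insert (0 : ℝ) (insert 1 (Set.range q)) := by
    simp [hSdef]
  have hA : (S.filter (fun c => c ≤ z)).Nonempty :=
    ⟨0, by simp [hSdef, hz0]⟩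
  have hB : (S.filter (fun c => z < c)).Nonempty :=
    ⟨1, by simp [hSdef, hz1]⟩
  set a := (S.filter (fun c => c ≤ z)).max' hA with ha_def
  set b := (S.filter (fun c => z < c)).min' hB with hb_def
  have haS : a ∈ S := (Finset.mem_filter.mp ((S.filter (fun c => c ≤ z)).max'_mem hA)).1
  have hbS : b ∈ S := (Finset.mem_filter.mp ((S.filter (fun c => z < c)).min'_mem hB)).1
  have haz : a ≤ z := (Finset.mem_filter.mp ((S.filter (fun c => c ≤ z)).max'_mem hA)).2
  have hzb : z < b := (Finset.mem_filter.mp ((S.filter (fun c => z < c)).min'_mem hB)).2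
  have hsep : ∀ c ∈ S, c ≤ a ∨ b ≤ c := by
    intro c hc
    by_cases h : c ≤ z
    · exact Or.inl ((S.filter (fun c => c ≤ z)).le_max' c (Finset.mem_filter.mpr ⟨hc, h⟩))
    · exact Or.inr ((S.filter (fun c => z < c)).min'_le c (Finset.mem_filter.mpr ⟨hc, not_le.mp h⟩))
  have ha0 : (0 : ℝ) ≤ a :=
    (S.filter (fun c => c ≤ z)).le_max' 0 (Finset.mem_filter.mpr ⟨by simp [hSdef], hz0⟩)
  have hb1 : b ≤ 1 :=
    (S.filter (fun c => z < c)).min'_le 1 (Finset.mem_filter.mpr ⟨by simp [hSdef], hz1⟩)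
  -- key: for any x' ∈ [a, b), the responses (hence the estimate) agree with those for z
  have key : ∀ x' : ℝ, a ≤ x' → x' < b → φ.estim x' y = φ.estim z y := by
    intro x' hax' hx'b
    have hre : ∀ k : ℕ, φ.resps z y k = φ.resps x' y k := by
      apply Strategy.resps_eq_aux
      intro k hk
      have hqk : φ.query ⟨k, hk⟩ (φ.resps z y k) y = q ⟨k, hk⟩ := by
        have := congrFun hqy ⟨k, hk⟩
        simpa [Strategy.queries] using this
      rw [hqk]
      have hqS : q ⟨k, hk⟩ ∈ S := by
        simp [hSdef]
      rcases hsep _ hqS with h | h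
      · constructor <;> intro _ <;> linarith
      · constructor <;> intro h' <;> [linarith; linarith]
    unfold Strategy.estim
    rw [hre N]
  -- estimates: let e be the common estimate
  set e := φ.estim z y with he_def
  have hacc' : ∀ x' : ℝ, a ≤ x' → x' < b → |e - x'| ≤ ε / 2 := by
    intro x' hax' hx'b
    have hx'01 : x' ∈ Set.Ico (0 : ℝ) 1 := ⟨le_trans ha0 hax', lt_of_lt_of_le hx'b hb1⟩
    have := hacc x' hx'01 y
    rwa [key x' hax' hx'b] at this
  have hae : a ≥ e - ε / 2 := by
    have := abs_le.mp (hacc' a le_rfl (lt_of_le_of_lt haz hzb))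
    linarith [this.1, this.2]
  have hbe : b ≤ e + ε / 2 := by
    by_contra hcon
    push_neg at hcon
    have hale : a ≤ e + ε / 2 := by
      have := abs_le.mp (hacc' a le_rfl (lt_of_le_of_lt haz hzb))
      linarith [this.1]
    set x' := (e + ε / 2 + b) / 2 with hx'
    have h1 : a ≤ x' := by
      have : e + ε / 2 < x' := by rw [hx']; linarith
      linarith
    have h2 : x' < b := by rw [hx']; linarith
    have := abs_le.mp (hacc' x' h1 h2)
    have : x' ≤ e + ε / 2 := by linarith [this.1]
    rw [hx'] at this; linarith
  refine ⟨a, ?_, b, ?_, haz, hzb, by linarith, ?_⟩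
  · rw [← hS]; exact_mod_cast haS
  · rw [← hS]; exact_mod_cast hbS
  · intro c hc
    rw [← hS] at hc
    exact hsep c (by exact_mod_cast hc)
end

section
/- Let 0 < ε < δ ≤ 1 and let φ be a learner strategy of length N satisfying the accuracy constraint with parameter ε. Then for every seed y ∈ {1,…,𝒴} there exists x ∈ (0,δ) such that at least ⌈log(δ/ε)⌉ of the queries q_1(x,y),…,q_N(x,y) belong to the interval (0,δ). -/
open Set

/-- for any accurate strategy and any seed `y`, there is a true value
`x ∈ (0,δ)` for which at least `⌈log₂(δ/ε)⌉` of the queries `q_1(x,y),…,q_N(x,y)`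
lie in `(0,δ)`. -/
theorem many_queries_in_small_interval {N Y : ℕ} (ε δ : ℝ)
    (hε : 0 < ε) (h1 : ε < δ) (h2 : δ ≤ 1)
    (φ : Strategy N Y) (hacc : φ.Accurate ε) :
    ∀ y : Fin Y, ∃ x ∈ Set.Ioo (0 : ℝ) δ,
      ⌈Real.logb 2 (δ / ε)⌉ ≤
        (((Finset.univ.filter fun k : Fin N => φ.queries x y k ∈ Set.Ioo (0 : ℝ) δ).card : ℤ)) := by
  intro y
  by_contra hcon
  push_neg at hcon
  have hδ : (0:ℝ) < δ := hε.trans h1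
  have key : ∀ k, k ≤ N → ∃ a b : ℝ, 0 ≤ a ∧ b ≤ δ ∧ a < b ∧
      (∀ x ∈ Set.Ioo a b, ∀ x' ∈ Set.Ioo a b, φ.resps x y k = φ.resps x' y k) ∧
      (∀ x ∈ Set.Ioo a b,
        δ / 2 ^ (Finset.univ.filter fun i : Fin N =>
          (i:ℕ) < k ∧ φ.queries x y i ∈ Set.Ioo (0:ℝ) δ).card ≤ b - a) := by
    intro k
    induction k with
    | zero =>
      intro _
      refine ⟨0, δ, le_refl _, le_refl _, hδ, ?_, ?_⟩
      · intro x _ x' _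
        funext i
        exact i.elim0
      · intro x _
        simp
    | succ k IH =>
      intro hk1
      have hkN : k < N := lt_of_lt_of_le (Nat.lt_succ_self k) hk1
      obtain ⟨a, b, ha, hb, hab, hres, hcnt⟩ := IH (Nat.le_of_succ_le hk1)
      set x₀ := (a + b) / 2 with hx₀def
      have hx₀ : x₀ ∈ Set.Ioo a b := ⟨by simp only [hx₀def]; linarith, by simp only [hx₀def]; linarith⟩
      set q := φ.query ⟨k, hkN⟩ (φ.resps x₀ y k) y with hqdef
      have hq : ∀ x ∈ Set.Ioo a b, φ.queries x y ⟨k, hkN⟩ = q := by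
        intro x hx
        show φ.query ⟨k, hkN⟩ (φ.resps x y k) y = q
        rw [hres x hx x₀ hx₀]
      have resps_succ : ∀ x : ℝ, ∀ i : Fin (k+1), φ.resps x y (k+1) i =
          if h : (i:ℕ) < k then φ.resps x y k ⟨i, h⟩
          else decide (φ.query ⟨k, hkN⟩ (φ.resps x y k) y ≤ x) := by
        intro x i
        simp only [Strategy.resps, hkN, dif_pos]
      -- generic builder
      have build : ∀ a' b' : ℝ, 0 ≤ a' → b' ≤ δ → a' < b' → Set.Ioo a' b' ⊆ Set.Ioo a b →
          (∀ x ∈ Set.Ioo a' b', ∀ x' ∈ Set.Ioo a' b',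
            decide (q ≤ x) = decide (q ≤ x')) →
          (∀ x ∈ Set.Ioo a' b', ∀ x' ∈ Set.Ioo a' b',
            φ.resps x y (k+1) = φ.resps x' y (k+1)) := by
        intro a' b' _ _ _ hsub hdec x hx x' hx'
        funext i
        rw [resps_succ x i, resps_succ x' i]
        by_cases h : (i:ℕ) < k
        · rw [dif_pos h, dif_pos h, hres x (hsub hx) x' (hsub hx')]
        · rw [dif_neg h, dif_neg h, hres x (hsub hx) x₀ hx₀, hres x' (hsub hx') x₀ hx₀]
          exact hdec x hx x' hx'
      rcases le_or_gt q a with hqa | hqa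
      · -- query below interval: response always true, interval unchanged
        refine ⟨a, b, ha, hb, hab, ?_, ?_⟩
        · refine build a b ha hb hab (fun x hx => hx) ?_
          intro x hx x' hx'
          have h1' : q ≤ x := hqa.trans hx.1.le
          have h2' : q ≤ x' := hqa.trans hx'.1.le
          simp [h1', h2']
        · intro x hx
          refine le_trans ?_ (hcnt x hx)
          gcongr
          · norm_num
          · omega
      · rcases le_or_gt b q with hqb | hqb
        · -- query above interval: response always false
          refine ⟨a, b, ha, hb, hab, ?_, ?_⟩
          · refine build a b ha hb hab (fun x hx => hx) ?_
            intro x hx x' hx'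
            have h1' : ¬ q ≤ x := not_le.mpr (hx.2.trans_le hqb)
            have h2' : ¬ q ≤ x' := not_le.mpr (hx'.2.trans_le hqb)
            simp [h1', h2']
          · intro x hx
            refine le_trans ?_ (hcnt x hx)
            gcongr
            · norm_num
            · omega
        · -- a < q < b : query inside
          have hqIoo : q ∈ Set.Ioo (0:ℝ) δ := ⟨ha.trans_lt hqa, hqb.trans_le hb⟩
          -- count lemma for x in any subinterval
          have hcount : ∀ x ∈ Set.Ioo a b,
              (Finset.univ.filter fun i : Fin N =>
                (i:ℕ) < k ∧ φ.queries x y i ∈ Set.Ioo (0:ℝ) δ).card + 1 ≤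
              (Finset.univ.filter fun i : Fin N =>
                (i:ℕ) < k + 1 ∧ φ.queries x y i ∈ Set.Ioo (0:ℝ) δ).card := by
            intro x hx
            have hmemk : (⟨k, hkN⟩ : Fin N) ∉ (Finset.univ.filter fun i : Fin N =>
                (i:ℕ) < k ∧ φ.queries x y i ∈ Set.Ioo (0:ℝ) δ) := by
              simp
            have hins : insert (⟨k, hkN⟩ : Fin N) (Finset.univ.filter fun i : Fin N =>
                (i:ℕ) < k ∧ φ.queries x y i ∈ Set.Ioo (0:ℝ) δ) ⊆
                (Finset.univ.filter fun i : Fin N =>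
                (i:ℕ) < k + 1 ∧ φ.queries x y i ∈ Set.Ioo (0:ℝ) δ) := by
              intro i hi
              rcases Finset.mem_insert.mp hi with rfl | hi
              · simp only [Finset.mem_filter, Finset.mem_univ, true_and]
                refine ⟨Nat.lt_succ_self k, ?_⟩
                rw [hq x hx]; exact hqIoo
              · simp only [Finset.mem_filter, Finset.mem_univ, true_and] at hi ⊢
                exact ⟨Nat.lt_succ_of_lt hi.1, hi.2⟩
            calc _ = (insert (⟨k, hkN⟩ : Fin N) (Finset.univ.filter fun i : Fin N =>
                    (i:ℕ) < k ∧ φ.queries x y i ∈ Set.Ioo (0:ℝ) δ)).card := by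
                  rw [Finset.card_insert_of_notMem hmemk]
              _ ≤ _ := Finset.card_le_card hins
          have hlen : ∀ x ∈ Set.Ioo a b, δ / 2 ^ (Finset.univ.filter fun i : Fin N =>
              (i:ℕ) < k + 1 ∧ φ.queries x y i ∈ Set.Ioo (0:ℝ) δ).card ≤ (b - a) / 2 := by
            intro x hx
            have h2' := hcount x hx
            have h3' := hcnt x hx
            calc δ / 2 ^ (Finset.univ.filter fun i : Fin N =>
                  (i:ℕ) < k + 1 ∧ φ.queries x y i ∈ Set.Ioo (0:ℝ) δ).card
                ≤ δ / 2 ^ ((Finset.univ.filter fun i : Fin N =>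
                  (i:ℕ) < k ∧ φ.queries x y i ∈ Set.Ioo (0:ℝ) δ).card + 1) := by
                  gcongr
                  norm_num
              _ = (δ / 2 ^ (Finset.univ.filter fun i : Fin N =>
                  (i:ℕ) < k ∧ φ.queries x y i ∈ Set.Ioo (0:ℝ) δ).card) / 2 := by
                  rw [pow_succ]; ring
              _ ≤ (b - a) / 2 := by linarith
          rcases le_or_gt q x₀ with hmid | hmid
          · -- take upper half (q, b); response true
            refine ⟨q, b, hqIoo.1.le, hb, hqb, ?_, ?_⟩
            · refine build q b hqIoo.1.le hb hqb
                (fun x hx => ⟨hqa.trans hx.1, hx.2⟩) ?_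
              intro x hx x' hx'
              simp [hx.1.le, hx'.1.le]
            · intro x hx
              have hx' : x ∈ Set.Ioo a b := ⟨hqa.trans hx.1, hx.2⟩
              refine le_trans (hlen x hx') ?_
              have : q ≤ (a + b) / 2 := hmid
              linarith
          · -- take lower half (a, q); response false
            refine ⟨a, q, ha, hqIoo.2.le, hqa, ?_, ?_⟩
            · refine build a q ha hqIoo.2.le hqa
                (fun x hx => ⟨hx.1, hx.2.trans hqb⟩) ?_
              intro x hx x' hx'
              have h1' : ¬ q ≤ x := not_le.mpr hx.2
              have h2' : ¬ q ≤ x' := not_le.mpr hx'.2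
              simp [h1', h2']
            · intro x hx
              have hx' : x ∈ Set.Ioo a b := ⟨hx.1, hx.2.trans hqb⟩
              refine le_trans (hlen x hx') ?_
              have : (a + b) / 2 < q := hmid
              linarith
  obtain ⟨a, b, ha, hb, hab, hres, hcnt⟩ := key N le_rfl
  have hsub : Set.Ioo a b ⊆ Set.Ioo (0:ℝ) δ :=
    fun x hx => ⟨ha.trans_lt hx.1, hx.2.trans_le hb⟩
  have hceq : ∀ x : ℝ, (Finset.univ.filter fun i : Fin N =>
      (i:ℕ) < N ∧ φ.queries x y i ∈ Set.Ioo (0:ℝ) δ) =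
      (Finset.univ.filter fun i : Fin N => φ.queries x y i ∈ Set.Ioo (0:ℝ) δ) := by
    intro x
    apply Finset.filter_congr
    intro i _
    simp [i.isLt]
  have hx₀ : (a + b) / 2 ∈ Set.Ioo a b := ⟨by linarith, by linarith⟩
  have h1' := hcnt _ hx₀
  rw [hceq] at h1'
  have h2' := hcon _ (hsub hx₀)
  set c := (Finset.univ.filter fun i : Fin N =>
      φ.queries ((a+b)/2) y i ∈ Set.Ioo (0:ℝ) δ).card with hcdef
  have hc : (c:ℝ) < Real.logb 2 (δ/ε) := by exact_mod_cast Int.lt_ceil.mp h2'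
  have hpow : (2:ℝ) ^ c < δ / ε := by
    have h3' : (2:ℝ) ^ (c:ℝ) < 2 ^ Real.logb 2 (δ/ε) :=
      (Real.rpow_lt_rpow_left_iff one_lt_two).mpr hc
    rwa [Real.rpow_logb (by positivity) (by norm_num) (by positivity),
      Real.rpow_natCast] at h3'
  have hεlt : ε < δ / 2 ^ c := by
    rw [lt_div_iff₀ (by positivity)]
    rw [lt_div_iff₀ hε] at hpow
    linarith [mul_comm ε ((2:ℝ)^c)]
  have hba : ε < b - a := hεlt.trans_le h1'
  set x₁ := a + (b - a - ε) / 4 with hx₁def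
  set x₂ := b - (b - a - ε) / 4 with hx₂def
  have hx₁ : x₁ ∈ Set.Ioo a b := ⟨by rw [hx₁def]; linarith, by rw [hx₁def]; linarith⟩
  have hx₂ : x₂ ∈ Set.Ioo a b := ⟨by rw [hx₂def]; linarith, by rw [hx₂def]; linarith⟩
  have hrr : φ.resps x₁ y N = φ.resps x₂ y N := hres x₁ hx₁ x₂ hx₂
  have hest : φ.estim x₁ y = φ.estim x₂ y := by
    unfold Strategy.estim
    rw [hrr]
  have hA1 := hacc x₁ ⟨by linarith [hx₁.1], by linarith [hx₁.2]⟩ y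
  have hA2 := hacc x₂ ⟨by linarith [hx₂.1], by linarith [hx₂.2]⟩ y
  rw [abs_le] at hA1 hA2
  rw [hest] at hA1
  have : x₂ - x₁ ≤ ε := by linarith [hA1.1, hA1.2, hA2.1, hA2.2]
  rw [hx₁def, hx₂def] at this
  linarith
end

section
/- Let ε > 0, δ > 0 and let L ≥ 2 be an integer with 2ε < δ ≤ 1/L. Let φ be an (ε,δ,L)-private learner strategy of length N. Then for every x ∈ [0,1) and every seed y, the set consisting of the queries q_1(x,y),…,q_N(x,y) together with the point 1 contains at least 2L − 3 points that lie in [δ,1] and are endpoints of some special interval of q̄(x,y). -/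
open Set

lemma chain_or_cover (δ : ℝ) (hδ : 0 < δ) : ∀ (n : ℕ) (E : Set ℝ), E ⊆ Set.Ico 0 1 →
    Coverable δ n E ∨ ∃ e : Fin (n+1) → ℝ, (∀ i, e i ∈ E) ∧
      ∀ i j : Fin (n+1), i < j → e i + δ < e j := by
  intro n
  induction n with
  | zero =>
    intro E hE
    rcases E.eq_empty_or_nonempty with h | ⟨z, hz⟩
    · left
      exact ⟨Fin.elim0, Fin.elim0, fun j => j.elim0, by simp [h]⟩
    · right
      refine ⟨fun _ => z, fun _ => hz, fun i j hij => ?_⟩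
      have := Fin.lt_def.1 hij
      omega
  | succ n ih =>
    intro E hE
    rcases E.eq_empty_or_nonempty with h | hne
    · left
      exact ⟨fun _ => 0, fun _ => 0, fun j => by simp [hδ.le], by simp [h]⟩
    have hbdd : BddBelow E := ⟨0, fun z hz => (hE hz).1⟩
    set a0 := sInf E with ha0
    set E' : Set ℝ := {z ∈ E | a0 + δ < z} with hE'
    have hE'sub : E' ⊆ E := fun z hz => hz.1
    rcases ih E' (hE'sub.trans hE) with ⟨a', b', hlen, hcov⟩ | ⟨e, he, hchain⟩
    · left
      refine ⟨Fin.cons a0 a', Fin.cons (a0 + δ) b', ?_, ?_⟩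
      · intro j
        refine Fin.cases ?_ ?_ j
        · simp
        · intro j'; simpa using hlen j'
      · intro z hz
        rcases le_or_gt z (a0 + δ) with h | h
        · exact Set.mem_iUnion.2 ⟨0, by simp only [Fin.cons_zero, Set.mem_Icc]; exact ⟨csInf_le hbdd hz, h⟩⟩
        · rcases Set.mem_iUnion.1 (hcov ⟨hz, h⟩) with ⟨j, hj⟩
          exact Set.mem_iUnion.2 ⟨j.succ, by simpa using hj⟩
    · right
      have h0 : a0 + δ < e 0 := (he 0).2
      have : a0 < e 0 - δ := by linarith
      rcases (csInf_lt_iff hbdd hne).1 this with ⟨e0, he0, he0lt⟩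
      refine ⟨Fin.cons e0 e, ?_, ?_⟩
      · intro i
        refine Fin.cases ?_ ?_ i
        · exact he0
        · intro i'; exact (he i').1
      · intro i j
        induction j using Fin.cases with
        | zero => intro h; exact absurd h (Fin.not_lt_zero i)
        | succ j' =>
          induction i using Fin.cases with
          | zero =>
            intro _
            have h0le : e 0 ≤ e j' := by
              rcases eq_or_lt_of_le (Fin.zero_le j') with h | h
              · rw [← h]
              · linarith [hchain 0 j' h]
            simp only [Fin.cons_zero, Fin.cons_succ]
            linarith
          | succ i' =>
            intro hlt
            simp only [Fin.cons_succ]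
            exact hchain i' j' (by simpa using hlt)

lemma resps_congr {N Y : ℕ} (φ : Strategy N Y) (y : Fin Y) (t t' : ℝ)
    (H : ∀ k : Fin N, (φ.queries t y k ≤ t ↔ φ.queries t y k ≤ t')) :
    ∀ n, φ.resps t' y n = φ.resps t y n := by
  intro n
  induction n with
  | zero => funext i; exact i.elim0
  | succ k ih =>
    funext i
    simp only [Strategy.resps]
    split
    · rw [ih]
    · split
      · next hk =>
        rw [ih]
        have := H ⟨k, hk⟩
        simp only [Strategy.queries] at this
        exact decide_eq_decide.2 this.symm
      · rfl

lemma queries_congr {N Y : ℕ} (φ : Strategy N Y) (y : Fin Y) (t t' : ℝ)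
    (H : ∀ k : Fin N, (φ.queries t y k ≤ t ↔ φ.queries t y k ≤ t')) :
    φ.queries t' y = φ.queries t y ∧ φ.estim t' y = φ.estim t y := by
  constructor
  · funext k
    simp only [Strategy.queries]
    rw [resps_congr φ y t t' H]
  · simp only [Strategy.estim]
    rw [resps_congr φ y t t' H]

lemma S_bounds {N Y : ℕ} (φ : Strategy N Y) (x : ℝ) (y : Fin Y) :
    ∀ c ∈ insert (0:ℝ) (insert 1 (Set.range (φ.queries x y))), 0 ≤ c ∧ c ≤ 1 := by
  intro c hc
  rcases hc with rfl | rfl | ⟨k, rfl⟩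
  · norm_num
  · norm_num
  · have := φ.query_mem k (φ.resps x y k) y
    exact ⟨this.1, this.2.le⟩

lemma cell_lemma {N Y : ℕ} (φ : Strategy N Y) (ε : ℝ) (hε : 0 < ε)
    (hacc : φ.Accurate ε) (x : ℝ) (y : Fin Y) (t : ℝ)
    (ht : t ∈ φ.infoSet (φ.queries x y)) :
    ∃ A B : ℝ, A ∈ insert (0:ℝ) (insert 1 (Set.range (φ.queries x y))) ∧
      B ∈ insert (0:ℝ) (insert 1 (Set.range (φ.queries x y))) ∧
      A ≤ t ∧ t < B ∧ B - A ≤ ε ∧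
      ∀ c ∈ insert (0:ℝ) (insert 1 (Set.range (φ.queries x y))), c ≤ A ∨ B ≤ c := by
  set S : Set ℝ := insert (0:ℝ) (insert 1 (Set.range (φ.queries x y))) with hS
  have hSfin : S.Finite := ((Set.finite_range _).insert 1).insert 0
  obtain ⟨⟨ht0, ht1⟩, y', hy'⟩ := ht
  have h0S : (0:ℝ) ∈ S := Set.mem_insert _ _
  have h1S : (1:ℝ) ∈ S := Set.mem_insert_of_mem _ (Set.mem_insert _ _)
  have hAne : (S ∩ Set.Iic t).Nonempty := ⟨0, h0S, ht0⟩
  have hBne : (S ∩ Set.Ioi t).Nonempty := ⟨1, h1S, ht1⟩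
  set A := sSup (S ∩ Set.Iic t) with hA
  set B := sInf (S ∩ Set.Ioi t) with hB
  have hAmem : A ∈ S ∩ Set.Iic t := hAne.csSup_mem (hSfin.inter_of_left _)
  have hBmem : B ∈ S ∩ Set.Ioi t := hBne.csInf_mem (hSfin.inter_of_left _)
  have hAt : A ≤ t := hAmem.2
  have htB : t < B := hBmem.2
  have hsep : ∀ c ∈ S, c ≤ A ∨ B ≤ c := by
    intro c hc
    rcases le_or_gt c t with h | h
    · exact Or.inl (le_csSup (hSfin.inter_of_left _).bddAbove ⟨hc, h⟩)
    · exact Or.inr (csInf_le (hSfin.inter_of_left _).bddBelow ⟨hc, h⟩)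
  have hA0 : 0 ≤ A := (S_bounds φ x y A hAmem.1).1
  have hB1 : B ≤ 1 := (S_bounds φ x y B hBmem.1).2
  -- key claim
  have key : ∀ t' ∈ Set.Ico A B, |φ.estim t y' - t'| ≤ ε / 2 := by
    intro t' ht'
    have H : ∀ k : Fin N, (φ.queries t y' k ≤ t ↔ φ.queries t y' k ≤ t') := by
      intro k
      have hqS : φ.queries t y' k ∈ S := by
        rw [hy']
        exact Set.mem_insert_of_mem _ (Set.mem_insert_of_mem _ ⟨k, rfl⟩)
      rcases hsep _ hqS with h | h
      · constructor <;> intro _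
        · linarith [ht'.1]
        · exact le_trans h hAt
      · constructor <;> intro hc
        · linarith [htB]
        · linarith [ht'.2]
    obtain ⟨-, hest⟩ := queries_congr φ y' t t' H
    rw [← hest]
    exact hacc t' ⟨le_trans hA0 ht'.1, lt_of_lt_of_le ht'.2 hB1⟩ y'
  refine ⟨A, B, hAmem.1, hBmem.1, hAt, htB, ?_, hsep⟩
  by_contra hcon
  push_neg at hcon
  set t'' := (A + ε + B) / 2 with ht''
  have h1' : A ≤ t'' := by simp only [ht'']; linarith
  have h2' : t'' < B := by simp only [ht'']; linarith
  have h3' : A + ε < t'' := by simp only [ht'']; linarith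
  have k1 := key A ⟨le_refl A, lt_of_le_of_lt hAt htB⟩
  have k2 := key t'' ⟨h1', h2'⟩
  rw [abs_le] at k1 k2
  linarith [k1.1, k1.2, k2.1, k2.2]


/-- under an `(ε,δ,L)`-private strategy, for every true value `x ∈ [0,1)` and
seed `y`, the queries `q_1(x,y),…,q_N(x,y)` together with the point `1` contain at least
`2L − 3` points that lie in `[δ,1]` and are endpoints of special intervals of `q̄(x,y)`. -/
theorem many_special_queries {N Y : ℕ} (ε δ : ℝ) (L : ℕ) (hL : 2 ≤ L)
    (hε : 0 < ε) (h1 : 2 * ε < δ) (h2 : δ ≤ 1 / (L : ℝ))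
    (φ : Strategy N Y) (hpriv : IsPrivate ε δ L φ) :
    ∀ x ∈ Set.Ico (0 : ℝ) 1, ∀ y : Fin Y,
      2 * L - 3 ≤
        Set.ncard {s : ℝ | s ∈ Set.Icc δ 1 ∧ (s = 1 ∨ ∃ k, φ.queries x y k = s) ∧
          ∃ a ∈ insert (0 : ℝ) (insert 1 (Set.range (φ.queries x y))),
          ∃ b ∈ insert (0 : ℝ) (insert 1 (Set.range (φ.queries x y))),
            a < b ∧ b - a ≤ ε ∧
            (∀ c ∈ insert (0 : ℝ) (insert 1 (Set.range (φ.queries x y))), c ≤ a ∨ b ≤ c) ∧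
            (s = a ∨ s = b)} := by
  intro x hx y
  have hδ : 0 < δ := by linarith
  set S : Set ℝ := insert (0:ℝ) (insert 1 (Set.range (φ.queries x y))) with hS
  have hSfin : S.Finite := ((Set.finite_range _).insert 1).insert 0
  set T : Set ℝ := {s : ℝ | s ∈ Set.Icc δ 1 ∧ (s = 1 ∨ ∃ k, φ.queries x y k = s) ∧
          ∃ a ∈ S, ∃ b ∈ S, a < b ∧ b - a ≤ ε ∧
            (∀ c ∈ S, c ≤ a ∨ b ≤ c) ∧ (s = a ∨ s = b)} with hT
  show 2 * L - 3 ≤ T.ncard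
  -- step 1: chain of L points in the information set
  have hcn : L ≤ coverNumber δ (φ.infoSet (φ.queries x y)) :=
    hpriv.2 x hx _ ⟨y, rfl⟩
  have hIsub : φ.infoSet (φ.queries x y) ⊆ Set.Ico 0 1 := fun t ht => ht.1
  have hnotcov : ¬ Coverable δ (L-1) (φ.infoSet (φ.queries x y)) := by
    intro hc
    have : coverNumber δ (φ.infoSet (φ.queries x y)) ≤ L - 1 :=
      Nat.sInf_le ⟨by omega, hc⟩
    omega
  obtain ⟨e, he, hchain⟩ := (chain_or_cover δ hδ (L-1) _ hIsub).resolve_left hnotcov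
  set ee : ℕ → ℝ := fun i => e ⟨min i (L-1), by omega⟩ with hee
  have hmem : ∀ i : ℕ, ee i ∈ φ.infoSet (φ.queries x y) := fun i => he _
  have hgap : ∀ i j : ℕ, i < j → j ≤ L - 1 → ee i + δ < ee j := by
    intro i j hij hjL
    exact hchain ⟨min i (L-1), by omega⟩ ⟨min j (L-1), by omega⟩
      (Fin.mk_lt_mk.2 (by omega))
  have hee0 : ∀ i, 0 ≤ ee i := fun i => (hmem i).1.1
  have hee1 : ∀ i, ee i < 1 := fun i => (hmem i).1.2
  -- step 2: cells around each chain point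
  have H := fun i : ℕ => cell_lemma φ ε hε hpriv.1 x y (ee i) (hmem i)
  choose A B hAS hBS hAle hltB hlen hsep using H
  -- chain points beyond index 0 are ≥ δ, beyond index 1 are ≥ 2δ
  have heeδ : ∀ m : ℕ, 1 ≤ m → m ≤ L - 1 → δ < ee m := by
    intro m h1m h2m
    have := hgap 0 m h1m h2m
    linarith [hee0 0]
  have hee2δ : ∀ m : ℕ, 2 ≤ m → m ≤ L - 1 → 2*δ < ee m := by
    intro m h1m h2m
    have g1 := hgap 0 1 (by omega) (by omega)
    have g2 := hgap 1 m (by omega) h2m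
    linarith [hee0 0]
  -- step 3: the 2L-3 points
  set f : ℕ → ℝ := fun j => if Even j then B ((j+1)/2 + 1) else A ((j+1)/2 + 1) with hf
  have hwin : ∀ j, |f j - ee ((j+1)/2 + 1)| ≤ ε := by
    intro j
    set m := (j+1)/2 + 1 with hmd
    have q1 := hAle m; have q2 := hltB m; have q3 := hlen m
    rw [abs_le]
    by_cases h : Even j
    · simp only [hf, if_pos h, ← hmd]
      constructor <;> linarith
    · simp only [hf, if_neg h, ← hmd]
      constructor <;> linarith
  have hfT : ∀ j, j < 2*L-3 → f j ∈ T := by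
    intro j hj
    set m := (j+1)/2 + 1 with hm
    have hm1 : 1 ≤ m := by omega
    have hmL : m ≤ L - 1 := by omega
    have hδm : δ < ee m := heeδ m hm1 hmL
    have hcell : A m ≤ ee m ∧ ee m < B m ∧ B m - A m ≤ ε := ⟨hAle m, hltB m, hlen m⟩
    by_cases h : Even j
    · -- f j = B m
      have hfj : f j = B m := by simp [hf, h, hm]
      have hBδ : δ < B m := lt_trans hδm hcell.2.1
      have hB1 : B m ≤ 1 := (S_bounds φ x y _ (hBS m)).2
      refine ⟨⟨by rw [hfj]; exact hBδ.le, by rw [hfj]; exact hB1⟩, ?_, ?_⟩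
      · rw [hfj]
        rcases hBS m with h0 | h1 | ⟨k, hk⟩
        · exact absurd h0 (by intro h0; rw [h0] at hBδ; linarith)
        · exact Or.inl h1
        · exact Or.inr ⟨k, hk⟩
      · exact ⟨A m, hAS m, B m, hBS m, lt_of_le_of_lt hcell.1 hcell.2.1,
          hcell.2.2, hsep m, Or.inr hfj⟩
    · -- f j = A m, and here j is odd so m ≥ 2
      have hfj : f j = A m := by simp [hf, h, hm]
      have hm2 : 2 ≤ m := by
        have : j % 2 = 1 := Nat.odd_iff.1 (Nat.not_even_iff_odd.1 h)
        omega
      have h2δm : 2*δ < ee m := hee2δ m hm2 hmL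
      have hAδ : δ < A m := by linarith [hcell.2.1, hcell.2.2]
      have hA1 : A m ≤ 1 := (S_bounds φ x y _ (hAS m)).2
      refine ⟨⟨by rw [hfj]; exact hAδ.le, by rw [hfj]; exact hA1⟩, ?_, ?_⟩
      · rw [hfj]
        rcases hAS m with h0 | h1 | ⟨k, hk⟩
        · exact absurd h0 (by intro h0; rw [h0] at hAδ; linarith)
        · exact Or.inl h1
        · exact Or.inr ⟨k, hk⟩
      · exact ⟨A m, hAS m, B m, hBS m, lt_of_le_of_lt hcell.1 hcell.2.1,
          hcell.2.2, hsep m, Or.inl hfj⟩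
  -- injectivity
  have hinj : Set.InjOn f ↑(Finset.range (2*L-3)) := by
    intro j hj j' hj' hfe
    simp only [Finset.coe_range, Set.mem_Iio] at hj hj'
    set m := (j+1)/2 + 1 with hmdef
    set m' := (j'+1)/2 + 1 with hm'def
    have hmL : m ≤ L - 1 := by omega
    have hm'L : m' ≤ L - 1 := by omega
    have hw := hwin j
    have hw' := hwin j'
    rw [abs_le] at hw hw'
    have hmm' : m = m' := by
      by_contra hne
      rcases Nat.lt_or_ge m m' with h | h
      · have := hgap m m' h hm'L
        linarith [hw.1, hw.2, hw'.1, hw'.2]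
      · have h' : m' < m := by omega
        have := hgap m' m h' hmL
        linarith [hw.1, hw.2, hw'.1, hw'.2]
    by_cases hpar : Even j
    · by_cases hpar' : Even j'
      · have e1 : j % 2 = 0 := Nat.even_iff.1 hpar
        have e2 : j' % 2 = 0 := Nat.even_iff.1 hpar'
        omega
      · exfalso
        have : f j = B m := by simp [hf, hpar, hmdef]
        have h2 : f j' = A m' := by simp [hf, hpar', hm'def]
        rw [this, h2, hmm'] at hfe
        have := hAle m'
        have := hltB m'
        linarith
    · by_cases hpar' : Even j'
      · exfalso
        have : f j = A m := by simp [hf, hpar, hmdef]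
        have h2 : f j' = B m' := by simp [hf, hpar', hm'def]
        rw [this, h2, hmm'] at hfe
        have := hAle m'
        have := hltB m'
        linarith
      · have e1 : j % 2 = 1 := Nat.odd_iff.1 (Nat.not_even_iff_odd.1 hpar)
        have e2 : j' % 2 = 1 := Nat.odd_iff.1 (Nat.not_even_iff_odd.1 hpar')
        omega
  -- conclude
  set F : Finset ℝ := (Finset.range (2*L-3)).image f with hF
  have hcard : F.card = 2*L-3 := by
    rw [hF, Finset.card_image_of_injOn hinj, Finset.card_range]
  have hTsub : T ⊆ S := by
    intro s hs
    rcases hs.2.1 with rfl | ⟨k, hk⟩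
    · exact Set.mem_insert_of_mem _ (Set.mem_insert _ _)
    · exact Set.mem_insert_of_mem _ (Set.mem_insert_of_mem _ ⟨k, hk⟩)
  have hTfin : T.Finite := hSfin.subset hTsub
  have hFsub : ↑F ⊆ T := by
    intro s hs
    simp only [hF, Finset.coe_image, Finset.coe_range, Set.mem_image,
      Set.mem_Iio] at hs
    obtain ⟨j, hj, rfl⟩ := hs
    exact hfT j hj
  calc 2*L-3 = F.card := hcard.symm
    _ = (↑F : Set ℝ).ncard := (Set.ncard_coe_finset F).symm
    _ ≤ T.ncard := Set.ncard_le_ncard hFsub hTfin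
end

section
/- Fix ε > 0, δ > 0 and an integer L ≥ 2. A learner strategy φ of length N is (ε,δ,L)-secure if and only if it is (ε,δ,L)-private. -/
open Set

open MeasureTheory ENNReal in
/-- A strategy is `(ε,δ,L)`-secure if it is accurate and, for every possible query sequence
`q̄ ∈ Q = ⋃_x Q(x)`, no adversary estimator (a Borel probability measure on `[0,1)`) is
`(δ,L)`-correct with respect to `q̄`: every such measure puts mass at most `1/L` on the
`δ/2`-ball around some point of the information set `I(q̄)`. -/
def IsSecure (ε δ : ℝ) (L : ℕ) {N Y : ℕ} (φ : Strategy N Y) : Prop :=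
  φ.Accurate ε ∧
  ∀ x ∈ Set.Ico (0 : ℝ) 1, ∀ q ∈ φ.Q x,
    ∀ μ : Measure ℝ, IsProbabilityMeasure μ → μ (Set.Ico (0 : ℝ) 1)ᶜ = 0 →
      ∃ z ∈ φ.infoSet q, μ {w | |w - z| ≤ δ / 2} ≤ ((L : ℝ≥0∞))⁻¹

noncomputable def greedySet (δ : ℝ) (I : Set ℝ) : ℕ → Set ℝ
  | 0 => I
  | n + 1 => greedySet δ I n ∩ Set.Ioi (sInf (greedySet δ I n) + δ)

lemma greedySet_subset (δ : ℝ) (I : Set ℝ) : ∀ n, greedySet δ I n ⊆ I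
  | 0 => subset_rfl
  | n + 1 => (Set.inter_subset_left).trans (greedySet_subset δ I n)

lemma greedySet_cover (δ : ℝ) (I : Set ℝ) (hB : BddBelow I) :
    ∀ n, I ⊆ (⋃ i ∈ Finset.range n,
      Set.Icc (sInf (greedySet δ I i)) (sInf (greedySet δ I i) + δ)) ∪ greedySet δ I n := by
  intro n
  induction n with
  | zero => simp [greedySet]
  | succ n ih =>
    intro z hz
    rcases ih hz with h | h
    · left
      simp only [Set.mem_iUnion, Finset.mem_range] at h ⊢
      obtain ⟨i, hi, hmem⟩ := h
      exact ⟨i, by omega, hmem⟩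
    · by_cases hz2 : z ∈ Set.Ioi (sInf (greedySet δ I n) + δ)
      · right; exact ⟨h, hz2⟩
      · left
        simp only [Set.mem_iUnion, Finset.mem_range]
        refine ⟨n, by omega, ?_⟩
        have h1 : sInf (greedySet δ I n) ≤ z :=
          csInf_le (hB.mono (greedySet_subset δ I n)) h
        have h2 : z ≤ sInf (greedySet δ I n) + δ := by
          simpa [Set.mem_Ioi, not_lt] using hz2
        exact ⟨h1, h2⟩

lemma coverable_of_greedySet_empty (δ : ℝ) (I : Set ℝ) (hB : BddBelow I) (n : ℕ)
    (h : greedySet δ I n = ∅) : Coverable δ n I := by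
  refine ⟨fun i => sInf (greedySet δ I i), fun i => sInf (greedySet δ I i) + δ,
    fun i => by ring_nf; rfl, ?_⟩
  intro z hz
  rcases greedySet_cover δ I hB n hz with hmem | hmem
  · simp only [Set.mem_iUnion, Finset.mem_range] at hmem
    obtain ⟨i, hi, hmem⟩ := hmem
    exact Set.mem_iUnion.2 ⟨⟨i, hi⟩, hmem⟩
  · simp [h] at hmem

lemma greedySet_pick (δ : ℝ) (I : Set ℝ) (hB : BddBelow I) :
    ∀ n, ∀ w ∈ greedySet δ I n, ∃ z : ℕ → ℝ, z n = w ∧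
      (∀ i ≤ n, z i ∈ greedySet δ I i) ∧ (∀ i < n, z i + δ < z (i + 1)) := by
  intro n
  induction n with
  | zero =>
    intro w hw
    exact ⟨fun _ => w, rfl, fun i hi => by interval_cases i; exact hw, fun i hi => by omega⟩
  | succ n ih =>
    intro w hw
    have hw1 : w ∈ greedySet δ I n := hw.1
    have hw2 : sInf (greedySet δ I n) + δ < w := hw.2
    obtain ⟨w', hw', hlt⟩ := exists_lt_of_csInf_lt ⟨w, hw1⟩ (show sInf (greedySet δ I n) < w - δ by linarith)
    obtain ⟨z, hzn, hz1, hz2⟩ := ih w' hw'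
    refine ⟨Function.update z (n + 1) w, Function.update_self _ _ _, ?_, ?_⟩
    · intro i hi
      rcases Nat.lt_succ_iff_lt_or_eq.mp (Nat.lt_succ_of_le hi) with h | h
      · rw [Function.update_of_ne (by omega)]
        exact hz1 i (by omega)
      · subst h
        rw [Function.update_self]
        exact hw
    · intro i hi
      rcases Nat.lt_succ_iff_lt_or_eq.mp hi with h | h
      · rw [Function.update_of_ne (by omega), Function.update_of_ne (by omega)]
        exact hz2 i h
      · subst h
        rw [Function.update_of_ne (by omega), Function.update_self, hzn]
        linarith

lemma chain_gap {z : ℕ → ℝ} {δ : ℝ} (hδ : 0 < δ) {n : ℕ}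
    (hz : ∀ i < n, z i + δ < z (i + 1)) :
    ∀ j ≤ n, ∀ i < j, z i + δ < z j := by
  intro j
  induction j with
  | zero => intro _ i hi; omega
  | succ m ih =>
    intro hjn i hij
    rcases Nat.lt_succ_iff_lt_or_eq.mp hij with h | h
    · have h1 := ih (by omega) i h
      have h2 := hz m (by omega)
      linarith
    · subst h
      exact hz i (by omega)

lemma Coverable.mono_card {δ : ℝ} {m m' : ℕ} (hm : 0 < m) (h : m ≤ m') {E : Set ℝ}
    (hc : Coverable δ m E) : Coverable δ m' E := by
  obtain ⟨a, b, hlen, hcov⟩ := hc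
  refine ⟨fun j => a ⟨(j : ℕ) % m, Nat.mod_lt _ hm⟩, fun j => b ⟨(j : ℕ) % m, Nat.mod_lt _ hm⟩,
    fun j => hlen _, ?_⟩
  intro z hz
  obtain ⟨i, hi⟩ := Set.mem_iUnion.mp (hcov hz)
  refine Set.mem_iUnion.2 ⟨⟨(i : ℕ), lt_of_lt_of_le i.2 h⟩, ?_⟩
  have : (⟨(i : ℕ) % m, Nat.mod_lt _ hm⟩ : Fin m) = i := by
    ext; simp [Nat.mod_eq_of_lt i.2]
  simpa [this] using hi

lemma coverable_exists_of_subset_Ico {δ : ℝ} (hδ : 0 < δ) {E : Set ℝ}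
    (hE : E ⊆ Set.Ico 0 1) : ∃ M : ℕ, 0 < M ∧ Coverable δ M E := by
  refine ⟨⌈(1:ℝ)/δ⌉₊ + 1, Nat.succ_pos _, fun j => (j : ℕ) * δ, fun j => (j : ℕ) * δ + δ,
    fun j => by ring_nf; rfl, ?_⟩
  intro z hz
  obtain ⟨hz0, hz1⟩ := hE hz
  have hzd : (0:ℝ) ≤ z / δ := div_nonneg hz0 hδ.le
  have hlt : z / δ < (⌈(1:ℝ)/δ⌉₊ + 1 : ℕ) := by
    have h1 : z / δ < 1 / δ := (div_lt_div_iff_of_pos_right hδ).mpr hz1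
    have h2 : (1:ℝ)/δ ≤ ⌈(1:ℝ)/δ⌉₊ := Nat.le_ceil _
    push_cast
    linarith
  refine Set.mem_iUnion.2 ⟨⟨⌊z / δ⌋₊, (Nat.floor_lt hzd).mpr hlt⟩, ?_⟩
  constructor
  · have := Nat.floor_le hzd
    calc ((⌊z / δ⌋₊ : ℝ)) * δ ≤ (z / δ) * δ := by nlinarith
    _ = z := by field_simp
  · have := Nat.lt_floor_add_one (z / δ)
    have h3 : z < (⌊z / δ⌋₊ + 1 : ℝ) * δ := by
      calc z = (z / δ) * δ := by field_simp
      _ < (⌊z / δ⌋₊ + 1 : ℝ) * δ := by nlinarith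
    linarith [h3]


lemma ball_disjoint {s t δ : ℝ} (h : s + δ < t) :
    Disjoint {w : ℝ | |w - s| ≤ δ / 2} {w : ℝ | |w - t| ≤ δ / 2} := by
  rw [Set.disjoint_left]
  intro w hws hwt
  simp only [Set.mem_setOf_eq, abs_le] at hws hwt
  linarith [hws.2, hwt.1]

open MeasureTheory in
lemma ball_measurable (t r : ℝ) : MeasurableSet {w : ℝ | |w - t| ≤ r} :=
  measurableSet_le ((measurable_id.sub measurable_const).abs) measurable_const

open MeasureTheory ENNReal in
/-- a learner strategy is `(ε,δ,L)`-secure if and only if it is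
`(ε,δ,L)`-private. -/
theorem secure_iff_private (ε δ : ℝ) (L : ℕ) (hε : 0 < ε) (hδ : 0 < δ) (hL : 2 ≤ L)
    {N Y : ℕ} (hY : 0 < Y) (φ : Strategy N Y) :
    IsSecure ε δ L φ ↔ IsPrivate ε δ L φ := by
  constructor
  · -- secure → private
    rintro ⟨hacc, hsec⟩
    refine ⟨hacc, ?_⟩
    intro x hx q hq
    by_contra hlt
    push_neg at hlt
    set I := φ.infoSet q with hIdef
    have hIsub : I ⊆ Set.Ico (0:ℝ) 1 := fun z hz => hz.1
    obtain ⟨M, hM, hMc⟩ := coverable_exists_of_subset_Ico hδ hIsub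
    have hne : {m : ℕ | 0 < m ∧ Coverable δ m I}.Nonempty := ⟨M, hM, hMc⟩
    have hmem : 0 < coverNumber δ I ∧ Coverable δ (coverNumber δ I) I := Nat.sInf_mem hne
    have hK : Coverable δ (L - 1) I := Coverable.mono_card hmem.1 (by omega) hmem.2
    obtain ⟨a, b, hlen, hcov⟩ := hK
    classical
    set mid : Fin (L - 1) → ℝ := fun j =>
      if (Set.Icc (a j) (b j) ∩ I).Nonempty then (max (a j) 0 + min (b j) 1) / 2 else 0
      with hmiddef
    have hmid_mem : ∀ j, mid j ∈ Set.Ico (0:ℝ) 1 := by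
      intro j
      by_cases hc : (Set.Icc (a j) (b j) ∩ I).Nonempty
      · rw [hmiddef]
        simp only [hc, if_true]
        obtain ⟨w, hw1, hw2⟩ := hc
        obtain ⟨hw0, hw1'⟩ := hIsub hw2
        constructor
        · have h1 : (0:ℝ) ≤ max (a j) 0 := le_max_right _ _
          have h2 : (0:ℝ) ≤ min (b j) 1 := le_min (le_trans hw0 hw1.2) (by norm_num)
          linarith
        · have h1 : max (a j) 0 ≤ w := max_le hw1.1 hw0
          have h2 : min (b j) 1 ≤ 1 := min_le_right _ _
          have hw1' : w < 1 := (hIsub hw2).2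
          linarith
      · rw [hmiddef]
        simp only [hc, if_false]
        exact ⟨le_refl 0, by norm_num⟩
    have hmid_close : ∀ j, ∀ w ∈ Set.Icc (a j) (b j) ∩ I, |mid j - w| ≤ δ / 2 := by
      intro j w hw
      have hifc : (Set.Icc (a j) (b j) ∩ I).Nonempty := ⟨w, hw⟩
      rw [hmiddef]
      simp only [hifc, if_true]
      obtain ⟨hw0, hw1'⟩ := hIsub hw.2
      have hA : max (a j) 0 ≤ w := max_le hw.1.1 hw0
      have hB : w ≤ min (b j) 1 := le_min hw.1.2 hw1'.le
      have hBA : min (b j) 1 - max (a j) 0 ≤ δ := by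
        have := hlen j
        have h1 : min (b j) 1 ≤ b j := min_le_left _ _
        have h2 : a j ≤ max (a j) 0 := le_max_left _ _
        linarith
      rw [abs_le]
      constructor <;> [skip; skip] <;> linarith
    set ν : Measure ℝ :=
      (((L - 1 : ℕ) : ℝ≥0∞))⁻¹ • (∑ j : Fin (L - 1), Measure.dirac (mid j)) with hνdef
    have hL1ne0 : ((L - 1 : ℕ) : ℝ≥0∞) ≠ 0 := by
      simp only [ne_eq, Nat.cast_eq_zero]; omega
    have hL1netop : ((L - 1 : ℕ) : ℝ≥0∞) ≠ ⊤ := ENNReal.natCast_ne_top _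
    have hν_apply : ∀ s : Set ℝ, MeasurableSet s →
        ν s = (((L - 1 : ℕ) : ℝ≥0∞))⁻¹ * ∑ j : Fin (L - 1), Measure.dirac (mid j) s := by
      intro s hs
      rw [hνdef, Measure.smul_apply, Measure.finset_sum_apply]
      simp [smul_eq_mul]
    have hνprob : IsProbabilityMeasure ν := by
      constructor
      rw [hν_apply _ MeasurableSet.univ]
      simp only [measure_univ, Finset.sum_const, Finset.card_univ, Fintype.card_fin, nsmul_eq_mul,
        mul_one]
      exact ENNReal.inv_mul_cancel hL1ne0 hL1netop
    have hνsupp : ν (Set.Ico (0:ℝ) 1)ᶜ = 0 := by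
      rw [hν_apply _ measurableSet_Ico.compl]
      have : ∀ j : Fin (L - 1), Measure.dirac (mid j) (Set.Ico (0:ℝ) 1)ᶜ = 0 := by
        intro j
        rw [Measure.dirac_apply' _ measurableSet_Ico.compl]
        exact Set.indicator_of_notMem (by simpa using hmid_mem j) _
      simp [this]
    obtain ⟨z, hzI, hzle⟩ := hsec x hx q hq ν hνprob hνsupp
    obtain ⟨j, hj⟩ := Set.mem_iUnion.mp (hcov hzI)
    have hballz : mid j ∈ {w : ℝ | |w - z| ≤ δ / 2} := by
      have := hmid_close j z ⟨hj, hzI⟩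
      simpa only [Set.mem_setOf_eq] using this
    have hν_ge : (((L - 1 : ℕ) : ℝ≥0∞))⁻¹ ≤ ν {w : ℝ | |w - z| ≤ δ / 2} := by
      rw [hν_apply _ (ball_measurable z (δ/2))]
      have h1 : Measure.dirac (mid j) {w : ℝ | |w - z| ≤ δ / 2} = 1 :=
        Measure.dirac_apply_of_mem hballz
      have h2 : (1 : ℝ≥0∞) ≤ ∑ j' : Fin (L - 1), Measure.dirac (mid j') {w : ℝ | |w - z| ≤ δ / 2} := by
        rw [← h1]
        exact Finset.single_le_sum
          (f := fun j' => Measure.dirac (mid j') {w : ℝ | |w - z| ≤ δ / 2})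
          (fun _ _ => zero_le) (Finset.mem_univ j)
      calc (((L - 1 : ℕ) : ℝ≥0∞))⁻¹ = (((L - 1 : ℕ) : ℝ≥0∞))⁻¹ * 1 := by rw [mul_one]
      _ ≤ _ := by exact mul_le_mul_right h2 _
    have hcontr : (((L - 1 : ℕ) : ℝ≥0∞))⁻¹ ≤ ((L : ℝ≥0∞))⁻¹ := le_trans hν_ge hzle
    rw [ENNReal.inv_le_inv] at hcontr
    have : (L : ℝ≥0∞) = ((L : ℕ) : ℝ≥0∞) := by norm_cast
    rw [this, Nat.cast_le] at hcontr
    omega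
  · -- private → secure
    rintro ⟨hacc, hpriv⟩
    refine ⟨hacc, ?_⟩
    intro x hx q hq μ hμp hμs
    by_contra hno
    push_neg at hno
    set I := φ.infoSet q with hIdef
    have hIsub : I ⊆ Set.Ico (0:ℝ) 1 := fun z hz => hz.1
    have hB : BddBelow I := (bddBelow_Ico).mono hIsub
    have hLle : L ≤ coverNumber δ I := hpriv x hx q hq
    have hnc : ¬ Coverable δ (L - 1) I := by
      intro hc
      have : coverNumber δ I ≤ L - 1 := Nat.sInf_le ⟨by omega, hc⟩
      omega
    have hgne : (greedySet δ I (L - 1)).Nonempty := by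
      rcases Set.eq_empty_or_nonempty (greedySet δ I (L - 1)) with h | h
      · exact absurd (coverable_of_greedySet_empty δ I hB (L - 1) h) hnc
      · exact h
    obtain ⟨w, hw⟩ := hgne
    obtain ⟨z, _, hz1, hz2⟩ := greedySet_pick δ I hB (L - 1) w hw
    have hgap := chain_gap hδ hz2
    have hzI : ∀ i : Fin L, z (i : ℕ) ∈ I := fun i =>
      greedySet_subset δ I (i : ℕ) (hz1 (i : ℕ) (by omega))
    set f : Fin L → Set ℝ := fun i => {w : ℝ | |w - z (i : ℕ)| ≤ δ / 2} with hfdef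
    have hfmeas : ∀ i, MeasurableSet (f i) := fun i => ball_measurable _ _
    have hfpair : Pairwise (Function.onFun Disjoint f) := by
      intro i j hij
      have hij' : (i : ℕ) ≠ (j : ℕ) := fun h => hij (Fin.ext h)
      rcases lt_or_gt_of_ne hij' with h | h
      · exact ball_disjoint (hgap (j : ℕ) (by omega) (i : ℕ) h)
      · exact (ball_disjoint (hgap (i : ℕ) (by omega) (j : ℕ) h)).symm
    have hU : μ (⋃ i, f i) = ∑' i, μ (f i) := measure_iUnion hfpair hfmeas
    have hsum_le : ∑ i : Fin L, μ (f i) ≤ 1 := by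
      rw [← tsum_fintype (L := SummationFilter.unconditional _), ← hU]
      exact prob_le_one
    have hune : (Finset.univ : Finset (Fin L)).Nonempty :=
      ⟨⟨0, by omega⟩, Finset.mem_univ _⟩
    set m : ℝ≥0∞ := Finset.univ.inf' hune (fun i => μ (f i)) with hmdef
    have hm_lt : ((L : ℝ≥0∞))⁻¹ < m := by
      rw [hmdef, Finset.lt_inf'_iff]
      intro i _
      exact hno (z (i : ℕ)) (hzI i)
    have hm_le_sum : (L : ℝ≥0∞) * m ≤ ∑ i : Fin L, μ (f i) := by
      have h1 : Finset.univ.card • m ≤ ∑ i : Fin L, μ (f i) :=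
        Finset.card_nsmul_le_sum Finset.univ (fun i => μ (f i)) m
          (fun i _ => Finset.inf'_le _ (Finset.mem_univ i))
      rw [Finset.card_univ, Fintype.card_fin, nsmul_eq_mul] at h1
      exact_mod_cast h1
    have hLne0 : (L : ℝ≥0∞) ≠ 0 := by
      simp only [ne_eq, Nat.cast_eq_zero]; omega
    have hLnetop : (L : ℝ≥0∞) ≠ ⊤ := ENNReal.natCast_ne_top _
    have h1lt : (1 : ℝ≥0∞) < (L : ℝ≥0∞) * m := by
      have := (ENNReal.mul_lt_mul_iff_right hLne0 hLnetop).mpr hm_lt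
      rwa [ENNReal.mul_inv_cancel hLne0 hLnetop] at this
    exact absurd (le_trans hm_le_sum hsum_le) (by
      intro h
      exact absurd (lt_of_lt_of_le h1lt h) (lt_irrefl _))
end

section
/- Let ε > 0, δ > 0 and let L ≥ 2 be an integer with 2ε < δ ≤ 1/L. Suppose the true value v* is uniformly distributed on [0,1). Then the Bayesian private query complexity satisfies ⌈log(1/ε)⌉ ≤ N_B*(ε,δ,L) ≤ L·⌈log(1/(Lε))⌉ + L − 1. -/
open Set

open MeasureTheory ENNReal in
/-- Bayesian accuracy: with `v*` uniform on `[0,1)`, the estimate is within `ε/2` of the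
true value with probability one (for each realization of the seed). -/
def BAccurate (ε : ℝ) {N Y : ℕ} (φ : Strategy N Y) : Prop :=
  ∀ y : Fin Y,
    volume {x | x ∈ Set.Ico (0 : ℝ) 1 ∧ ¬ |φ.estim x y - x| ≤ ε / 2} = 0

open MeasureTheory ENNReal in
/-- An `(ε,δ,L)`-B-private strategy: Bayesian accuracy holds, and for every adversary
strategy — a kernel `ψ` assigning to each query sequence a Borel probability measure on
`[0,1)` — the probability (over `v*` uniform on `[0,1)`, the uniform seed `Y`, and the
adversary's randomization) that the adversary's estimate is within `δ/2` of `v*` is at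
most `1/L`. -/
def BPrivate (ε δ : ℝ) (L : ℕ) {N Y : ℕ} (φ : Strategy N Y) : Prop :=
  BAccurate ε φ ∧
  ∀ ψ : (Fin N → ℝ) → Measure ℝ,
    (∀ q, IsProbabilityMeasure (ψ q)) → (∀ q, ψ q (Set.Ico (0 : ℝ) 1)ᶜ = 0) →
    ∑ y : Fin Y, ∫⁻ x in Set.Ico (0 : ℝ) 1, ψ (φ.queries x y) {z | |z - x| ≤ δ / 2} ≤
      (Y : ℝ≥0∞) * ((L : ℝ≥0∞))⁻¹

/-- `N_B*(ε,δ,L)`: the least length for which an `(ε,δ,L)`-B-private strategy exists. -/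
noncomputable def NBstar (ε δ : ℝ) (L : ℕ) : ℕ :=
  sInf {N : ℕ | ∃ Y : ℕ, 0 < Y ∧ ∃ φ : Strategy N Y, BPrivate ε δ L φ}

/-! ### Auxiliary construction -/

section BQC

open MeasureTheory ENNReal

/-- total number of queries: `L-1` boundary queries plus `m` rounds of `L` queries. -/
def NN (L m : ℕ) : ℕ := L - 1 + m * L

/-- extend a finite history to `ℕ → Bool`. -/
def extH {k : ℕ} (h : Fin k → Bool) : ℕ → Bool := fun i => if hi : i < k then h ⟨i, hi⟩ else false

/-- the subinterval index read off from the first `L-1` responses. -/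
def jjf (L : ℕ) (g : ℕ → Bool) : ℕ := ((Finset.range (L - 1)).filter fun i => g i = true).card

/-- the bisection offset after `t` rounds, read off from the history. -/
noncomputable def offf (L : ℕ) (g : ℕ → Bool) (t : ℕ) : ℝ :=
  ∑ s ∈ Finset.range t, if g (L - 1 + s * L + jjf L g) = true then (1:ℝ) / 2 ^ (s+1) else 0

/-- the `k`-th query as a function of the history. -/
noncomputable def qvalf (L : ℕ) (g : ℕ → Bool) (k : ℕ) : ℝ :=
  if k < L - 1 then (k + 1 : ℝ) / L
  else ((k - (L-1)) % L : ℕ) / (L:ℝ) + offf L g ((k - (L-1)) / L) / L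
       + 1 / (2 ^ ((k - (L-1)) / L + 1) * (L:ℝ))

/-- the estimate as a function of the history. -/
noncomputable def evalf (L m : ℕ) (g : ℕ → Bool) : ℝ :=
  (jjf L g : ℝ) / L + offf L g m / L + 1 / (2 ^ (m+1) * (L:ℝ))

variable {L m : ℕ} {x : ℝ}

lemma hLpos (hL : 2 ≤ L) : (0:ℝ) < L := by
  have : (0:ℕ) < L := by omega
  exact_mod_cast this

lemma jjf_le (L : ℕ) (g : ℕ → Bool) : jjf L g ≤ L - 1 := by
  classical
  refine le_trans (Finset.card_filter_le _ _) ?_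
  simp

lemma geo_sum (t : ℕ) : ∑ s ∈ Finset.range t, (1:ℝ) / 2 ^ (s+1) = 1 - 1 / 2 ^ t := by
  induction t with
  | zero => simp
  | succ t ih =>
    rw [Finset.sum_range_succ, ih]
    have h : (2:ℝ) ^ t ≠ 0 := by positivity
    field_simp
    ring

lemma offf_nonneg (L : ℕ) (g : ℕ → Bool) (t : ℕ) : 0 ≤ offf L g t := by
  apply Finset.sum_nonneg
  intro s _
  split <;> positivity

lemma offf_le (L : ℕ) (g : ℕ → Bool) (t : ℕ) : offf L g t ≤ 1 - 1 / 2 ^ t := by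
  rw [← geo_sum]
  apply Finset.sum_le_sum
  intro s _
  split
  · exact le_refl _
  · positivity

lemma half_lt (t : ℕ) : (1:ℝ) / 2 ^ (t+1) < 1 / 2 ^ t := by
  apply div_lt_div_of_pos_left one_pos (by positivity)
  rw [pow_succ]
  nlinarith [pow_pos (show (0:ℝ) < 2 by norm_num) t]

lemma qvalf_mem (L : ℕ) (hL : 2 ≤ L) (g : ℕ → Bool) (k : ℕ) :
    qvalf L g k ∈ Set.Ico (0:ℝ) 1 := by
  have hL0 : (0:ℝ) < L := hLpos hL
  rw [qvalf]
  split
  · rename_i h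
    constructor
    · positivity
    · rw [div_lt_one hL0]
      have : k + 1 < L := by omega
      exact_mod_cast this
  · set t := (k - (L-1)) / L with ht
    have hi : ((k - (L-1)) % L : ℕ) < L := Nat.mod_lt _ (by omega)
    have hiR : (((k - (L-1)) % L : ℕ) : ℝ) ≤ (L:ℝ) - 1 := by
      have : ((k - (L-1)) % L : ℕ) + 1 ≤ L := hi
      have := (Nat.cast_le (α := ℝ)).mpr this
      push_cast at this
      linarith
    have hof0 := offf_nonneg L g t
    have hof1 := offf_le L g t
    have h2t : (0:ℝ) < 2 ^ t := by positivity
    have h2t1 : (0:ℝ) < 2 ^ (t+1) := by positivity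
    have hh := half_lt t
    constructor
    · positivity
    · have key : (((k - (L-1)) % L : ℕ) : ℝ) / L + offf L g t / L + 1 / (2 ^ (t+1) * L)
          = ((((k - (L-1)) % L : ℕ) : ℝ) + offf L g t + 1 / 2 ^ (t+1)) / L := by
        field_simp
      rw [key, div_lt_one hL0]
      linarith

lemma evalf_mem (L m : ℕ) (hL : 2 ≤ L) (g : ℕ → Bool) :
    evalf L m g ∈ Set.Ico (0:ℝ) 1 := by
  have hL0 : (0:ℝ) < L := hLpos hL
  have hjR : (jjf L g : ℝ) ≤ (L:ℝ) - 1 := by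
    have : jjf L g + 1 ≤ L := by have := jjf_le L g; omega
    have := (Nat.cast_le (α := ℝ)).mpr this
    push_cast at this
    linarith
  have hof0 := offf_nonneg L g m
  have hof1 := offf_le L g m
  have h2t : (0:ℝ) < 2 ^ m := by positivity
  have h2t1 : (0:ℝ) < 2 ^ (m+1) := by positivity
  have hh := half_lt m
  rw [evalf]
  constructor
  · positivity
  · have key : (jjf L g : ℝ) / L + offf L g m / L + 1 / (2 ^ (m+1) * L)
        = ((jjf L g : ℝ) + offf L g m + 1 / 2 ^ (m+1)) / L := by
      field_simp
    rw [key, div_lt_one hL0]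
    linarith

/-- the strategy. -/
noncomputable def phi (L m : ℕ) (hL : 2 ≤ L) : Strategy (NN L m) 1 where
  query k h _ := qvalf L (extH h) k
  estimate r _ := evalf L m (extH r)
  query_mem k h y := qvalf_mem L hL _ k
  estimate_mem r y := evalf_mem L m hL _

/-- subinterval index of `x`. -/
noncomputable def j0 (L : ℕ) (x : ℝ) : ℕ := ⌊x * L⌋₊

/-- relative coordinate of `x` in its subinterval. -/
noncomputable def uu (L : ℕ) (x : ℝ) : ℝ := x * L - j0 L x

/-- dyadic approximation of the relative coordinate. -/
noncomputable def flr (L : ℕ) (x : ℝ) (t : ℕ) : ℕ := ⌊uu L x * 2 ^ t⌋₊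

/-- closed form of the realized queries. -/
noncomputable def Gq (L : ℕ) (x : ℝ) (k : ℕ) : ℝ :=
  if k < L - 1 then (k + 1 : ℝ) / L
  else ((k - (L-1)) % L : ℕ) / (L:ℝ) + ((flr L x ((k-(L-1))/L) : ℝ) / 2 ^ ((k-(L-1))/L)) / L
       + 1 / (2 ^ ((k-(L-1))/L + 1) * (L:ℝ))

/-- closed form of the realized responses. -/
noncomputable def Bf (L : ℕ) (x : ℝ) (k : ℕ) : Bool := decide (Gq L x k ≤ x)

lemma j0_lt (hL : 2 ≤ L) (hx : x ∈ Set.Ico (0:ℝ) 1) : j0 L x < L := by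
  have h0 : (0:ℝ) ≤ x * L := mul_nonneg hx.1 (hLpos hL).le
  rw [j0, Nat.floor_lt h0]
  calc x * L < 1 * L := mul_lt_mul_of_pos_right hx.2 (hLpos hL)
  _ = L := one_mul _

lemma uu_nonneg (hL : 2 ≤ L) (hx : x ∈ Set.Ico (0:ℝ) 1) : 0 ≤ uu L x := by
  have h0 : (0:ℝ) ≤ x * L := mul_nonneg hx.1 (hLpos hL).le
  have := Nat.floor_le h0
  rw [uu, j0]; linarith

lemma uu_lt_one : uu L x < 1 := by
  have := Nat.lt_floor_add_one (x * L)
  rw [uu, j0]; linarith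

lemma x_eq (hL : 2 ≤ L) : x = ((j0 L x : ℝ) + uu L x) / L := by
  rw [uu]
  field_simp
  ring

lemma flr_le (hL : 2 ≤ L) (hx : x ∈ Set.Ico (0:ℝ) 1) (t : ℕ) :
    (flr L x t : ℝ) ≤ uu L x * 2 ^ t :=
  Nat.floor_le (mul_nonneg (uu_nonneg hL hx) (by positivity))

lemma flr_lt_add (t : ℕ) : uu L x * 2 ^ t < flr L x t + 1 :=
  Nat.lt_floor_add_one _

lemma flr_lt_pow (hL : 2 ≤ L) (hx : x ∈ Set.Ico (0:ℝ) 1) (t : ℕ) : flr L x t < 2 ^ t := by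
  rw [flr, Nat.floor_lt (mul_nonneg (uu_nonneg hL hx) (by positivity))]
  push_cast
  calc uu L x * 2 ^ t < 1 * 2 ^ t := mul_lt_mul_of_pos_right uu_lt_one (by positivity)
  _ = 2 ^ t := one_mul _

lemma flr_zero (hL : 2 ≤ L) (hx : x ∈ Set.Ico (0:ℝ) 1) : flr L x 0 = 0 := by
  rw [flr, Nat.floor_eq_zero]
  simpa using uu_lt_one (L := L) (x := x)

lemma flr_succ (hL : 2 ≤ L) (hx : x ∈ Set.Ico (0:ℝ) 1) (t : ℕ) :
    flr L x (t+1) = 2 * flr L x t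
      + (if (flr L x t : ℝ) / 2 ^ t + 1 / 2 ^ (t+1) ≤ uu L x then 1 else 0) := by
  have hu0 := uu_nonneg hL hx
  have h1 := flr_le hL hx t
  have h2 := flr_lt_add (L := L) (x := x) t
  have hp : (0:ℝ) < 2 ^ t := by positivity
  have hps : ((2:ℝ)) ^ (t+1) = 2 ^ t * 2 := pow_succ 2 t
  have h0' : (0:ℝ) ≤ uu L x * 2 ^ (t+1) := by positivity
  split
  · rename_i hbit
    rw [flr, Nat.floor_eq_iff h0']
    constructor
    · push_cast
      rw [hps]
      rw [div_add_div _ _ (ne_of_gt hp) (by positivity), div_le_iff₀ (by positivity)] at hbit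
      nlinarith
    · push_cast
      rw [hps]
      nlinarith
  · rename_i hbit
    push_neg at hbit
    rw [flr, Nat.floor_eq_iff h0']
    constructor
    · push_cast
      rw [hps]
      nlinarith
    · push_cast
      rw [div_add_div _ _ (ne_of_gt hp) (by positivity), lt_div_iff₀ (by positivity)] at hbit
      rw [hps]
      nlinarith

lemma sum_bits (hL : 2 ≤ L) (hx : x ∈ Set.Ico (0:ℝ) 1) (t : ℕ) :
    (∑ s ∈ Finset.range t,
        if (flr L x s : ℝ) / 2 ^ s + 1 / 2 ^ (s+1) ≤ uu L x then (1:ℝ) / 2 ^ (s+1) else 0)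
      = (flr L x t : ℝ) / 2 ^ t := by
  induction t with
  | zero => simp [flr_zero hL hx]
  | succ t ih =>
    rw [Finset.sum_range_succ, ih, flr_succ hL hx t]
    have hp : ((2:ℝ)) ^ t ≠ 0 := by positivity
    split
    · push_cast
      rw [pow_succ]
      field_simp
    · push_cast
      rw [pow_succ]
      field_simp
      ring
lemma Bf_lt (hk : k < L - 1) : Bf L x k = decide ((k + 1 : ℝ) / L ≤ x) := by
  rw [Bf, Gq, if_pos hk]

lemma Bf_idx (hL : 2 ≤ L) (hx : x ∈ Set.Ico (0:ℝ) 1) (s : ℕ) :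
    Bf L x (L - 1 + s * L + j0 L x)
      = decide ((flr L x s : ℝ) / 2 ^ s + 1 / 2 ^ (s+1) ≤ uu L x) := by
  have hL0 : (0:ℝ) < L := hLpos hL
  have hj : j0 L x < L := j0_lt hL hx
  have hnot : ¬ (L - 1 + s * L + j0 L x < L - 1) := by omega
  have hsub : L - 1 + s * L + j0 L x - (L - 1) = j0 L x + L * s := by
    rw [Nat.add_assoc, Nat.add_sub_cancel_left]
    ring
  have hdiv : (j0 L x + L * s) / L = s := by
    rw [Nat.add_mul_div_left _ _ (show 0 < L by omega), Nat.div_eq_of_lt hj]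
    omega
  have hmod : (j0 L x + L * s) % L = j0 L x := by
    rw [Nat.add_mul_mod_self_left, Nat.mod_eq_of_lt hj]
  rw [Bf, Gq, if_neg hnot, hsub, hdiv, hmod]
  rw [decide_eq_decide]
  rw [show (j0 L x : ℝ) / L + (flr L x s : ℝ) / 2 ^ s / L + 1 / (2 ^ (s+1) * L)
      = ((j0 L x : ℝ) + ((flr L x s : ℝ) / 2 ^ s + 1 / 2 ^ (s+1))) / L by field_simp; ring]
  have hxe : x = ((j0 L x : ℝ) + uu L x) / L := x_eq hL
  generalize hJ : (j0 L x : ℝ) = J at hxe ⊢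
  generalize hF : (flr L x s : ℝ) = F
  generalize hU : uu L x = U at hxe ⊢
  rw [hxe, div_le_div_iff_of_pos_right hL0, add_le_add_iff_left]

lemma jjf_agree (hL : 2 ≤ L) (hx : x ∈ Set.Ico (0:ℝ) 1) {g : ℕ → Bool}
    (hg : ∀ i, i < L - 1 → g i = Bf L x i) : jjf L g = j0 L x := by
  classical
  have hL0 : (0:ℝ) < L := hLpos hL
  have h0 : (0:ℝ) ≤ x * L := mul_nonneg hx.1 hL0.le
  have hj : j0 L x < L := j0_lt hL hx
  rw [jjf]
  have : (Finset.range (L - 1)).filter (fun i => g i = true) = Finset.range (j0 L x) := by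
    ext i
    simp only [Finset.mem_filter, Finset.mem_range]
    constructor
    · rintro ⟨hi, hgi⟩
      rw [hg i hi, Bf_lt hi, decide_eq_true_eq, div_le_iff₀ hL0] at hgi
      have : (i + 1 : ℕ) ≤ j0 L x := by
        rw [j0, Nat.le_floor_iff h0]
        push_cast
        linarith
      omega
    · intro hi
      have hiL : i < L - 1 := by omega
      refine ⟨hiL, ?_⟩
      rw [hg i hiL, Bf_lt hiL, decide_eq_true_eq, div_le_iff₀ hL0]
      have : (i + 1 : ℕ) ≤ j0 L x := by omega
      rw [j0] at this
      rw [Nat.le_floor_iff h0] at this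
      push_cast at this
      linarith
  rw [this, Finset.card_range]

lemma offf_agree (hL : 2 ≤ L) (hx : x ∈ Set.Ico (0:ℝ) 1) {g : ℕ → Bool} {t K0 : ℕ}
    (hK : L - 1 + t * L ≤ K0) (hg : ∀ i, i < K0 → g i = Bf L x i) :
    offf L g t = (flr L x t : ℝ) / 2 ^ t := by
  have hjle : j0 L x < L := j0_lt hL hx
  have hgL : ∀ i, i < L - 1 → g i = Bf L x i := fun i hi => hg i (by omega)
  rw [offf, jjf_agree hL hx hgL]
  rw [← sum_bits hL hx t]
  apply Finset.sum_congr rfl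
  intro s hs
  rw [Finset.mem_range] at hs
  have h1 : s * L + j0 L x < (s+1) * L := by
    rw [Nat.succ_mul]
    exact Nat.add_lt_add_left hjle _
  have h2 : (s+1) * L ≤ t * L := Nat.mul_le_mul_right _ (by omega)
  have h3 : L - 1 + s * L + j0 L x < K0 := by
    rw [Nat.add_assoc]
    calc L - 1 + (s * L + j0 L x) < L - 1 + t * L :=
          Nat.add_lt_add_left (lt_of_lt_of_le h1 h2) _
    _ ≤ K0 := hK
  rw [hg _ h3, Bf_idx hL hx s]
  simp only [decide_eq_true_eq]

lemma qval_of (hL : 2 ≤ L) (hx : x ∈ Set.Ico (0:ℝ) 1) {g : ℕ → Bool} {k : ℕ}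
    (hg : ∀ i, i < k → g i = Bf L x i) : qvalf L g k = Gq L x k := by
  rw [qvalf, Gq]
  by_cases h : k < L - 1
  · rw [if_pos h, if_pos h]
  · rw [if_neg h, if_neg h]
    have h4 : (k - (L-1)) / L * L ≤ k - (L-1) := Nat.div_mul_le_self _ _
    have hK : L - 1 + (k - (L-1)) / L * L ≤ k := by
      have := Nat.add_le_add_left h4 (L - 1)
      rwa [show L - 1 + (k - (L-1)) = k by omega] at this
    rw [offf_agree hL hx hK hg]

lemma resps_eq (hL : 2 ≤ L) (hx : x ∈ Set.Ico (0:ℝ) 1) (y : Fin 1) :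
    ∀ (k : ℕ), k ≤ NN L m → ∀ (i : ℕ) (hi : i < k),
      (phi L m hL).resps x y k ⟨i, hi⟩ = Bf L x i := by
  intro k
  induction k with
  | zero => intro _ i hi; omega
  | succ k ih =>
    intro hk i hi
    simp only [Strategy.resps]
    by_cases h : i < k
    · rw [dif_pos h]
      exact ih (by omega) i h
    · rw [dif_neg h]
      have hik : i = k := by omega
      subst hik
      have hkN : i < NN L m := by omega
      rw [dif_pos hkN]
      have : (phi L m hL).query ⟨i, hkN⟩ ((phi L m hL).resps x y i) y
          = qvalf L (extH ((phi L m hL).resps x y i)) i := rfl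
      rw [this, qval_of hL hx (g := extH ((phi L m hL).resps x y i))]
      · rw [Bf]
      · intro j hj
        rw [extH, dif_pos hj]
        exact ih (by omega) j hj

lemma queries_eq (hL : 2 ≤ L) (hx : x ∈ Set.Ico (0:ℝ) 1) (y : Fin 1) :
    (phi L m hL).queries x y = fun k : Fin (NN L m) => Gq L x (k : ℕ) := by
  funext k
  show qvalf L (extH ((phi L m hL).resps x y (k:ℕ))) (k:ℕ) = _
  apply qval_of hL hx
  intro j hj
  rw [extH, dif_pos hj]
  exact resps_eq hL hx y (k:ℕ) k.isLt.le j hj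

lemma estim_eq (hL : 2 ≤ L) (hx : x ∈ Set.Ico (0:ℝ) 1) (y : Fin 1) :
    (phi L m hL).estim x y
      = ((j0 L x : ℝ) + ((flr L x m : ℝ) / 2 ^ m + 1 / 2 ^ (m+1))) / L := by
  have hg : ∀ i, i < NN L m → extH ((phi L m hL).resps x y (NN L m)) i = Bf L x i := by
    intro j hj
    rw [extH, dif_pos hj]
    exact resps_eq hL hx y _ le_rfl j hj
  show evalf L m (extH ((phi L m hL).resps x y (NN L m))) = _
  rw [evalf, jjf_agree hL hx (fun i hi => hg i (by rw [NN]; omega)),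
    offf_agree hL hx (show L - 1 + m * L ≤ NN L m from le_rfl) hg]
  field_simp
  ring
lemma phi_acc (hL : 2 ≤ L) {ε : ℝ} (hw : 1 / ((L:ℝ) * 2 ^ m) ≤ ε)
    (hx : x ∈ Set.Ico (0:ℝ) 1) (y : Fin 1) :
    |(phi L m hL).estim x y - x| ≤ ε / 2 := by
  have hL0 : (0:ℝ) < L := hLpos hL
  have h1 := flr_le hL hx m
  have h2 := flr_lt_add (L := L) (x := x) m
  have hp : (0:ℝ) < 2 ^ m := by positivity
  have hps : ((2:ℝ)) ^ (m+1) = 2 ^ m * 2 := pow_succ 2 m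
  rw [estim_eq hL hx y]
  have hxe : x = ((j0 L x : ℝ) + uu L x) / L := x_eq hL
  set A : ℝ := (flr L x m : ℝ) / 2 ^ m + 1 / 2 ^ (m+1) with hA
  have keygen : ∀ J U B : ℝ, x = (J + U) / L → (J + B) / L - x = (B - U) / L := by
    intro J U B hxe'
    rw [hxe']
    field_simp
    ring
  have key : ((j0 L x : ℝ) + A) / L - x = (A - uu L x) / L := keygen _ _ _ hxe
  rw [key, abs_div, abs_of_pos hL0]
  have hA1 : A - uu L x ≤ 1 / 2 ^ (m+1) := by
    rw [hA]
    have : (flr L x m : ℝ) / 2 ^ m ≤ uu L x := by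
      rw [div_le_iff₀ hp]
      linarith
    linarith
  have hA2 : -(1 / 2 ^ (m+1)) ≤ A - uu L x := by
    rw [hA]
    have : uu L x < (flr L x m : ℝ) / 2 ^ m + 1 / 2 ^ m := by
      rw [← add_div, lt_div_iff₀ hp]
      linarith
    have h12 : (1:ℝ) / 2 ^ m = 2 * (1 / 2 ^ (m+1)) := by
      rw [hps]; field_simp
    linarith [this, h12]
  have habs : |A - uu L x| ≤ 1 / 2 ^ (m+1) := abs_le.mpr ⟨hA2, hA1⟩
  calc |A - uu L x| / L ≤ (1 / 2 ^ (m+1)) / L := (div_le_div_iff_of_pos_right hL0).mpr habs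
  _ = (1 / ((L:ℝ) * 2 ^ m)) / 2 := by rw [hps]; field_simp
  _ ≤ ε / 2 := by linarith
/-- the realized query sequence as a function of the cell index only. -/
noncomputable def Gfun (L m c k : ℕ) : ℝ :=
  if k < L - 1 then (k + 1 : ℝ) / L
  else ((k - (L-1)) % L : ℕ) / (L:ℝ)
       + (((c / 2 ^ (m - (k-(L-1))/L) : ℕ) : ℝ) / 2 ^ ((k-(L-1))/L)) / L
       + 1 / (2 ^ ((k-(L-1))/L + 1) * (L:ℝ))

lemma flr_div (hL : 2 ≤ L) (hx : x ∈ Set.Ico (0:ℝ) 1) {t : ℕ} (ht : t ≤ m) :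
    flr L x t = flr L x m / 2 ^ (m - t) := by
  have hu0 := uu_nonneg hL hx
  have key : uu L x * 2 ^ t = uu L x * 2 ^ m / ((2 ^ (m - t) : ℕ) : ℝ) := by
    push_cast
    rw [_root_.eq_div_iff (by positivity), mul_assoc, ← pow_add]
    congr 2
    omega
  rw [flr, flr, key, Nat.floor_div_natCast]

lemma Gq_eq_Gfun (hL : 2 ≤ L) (hx : x ∈ Set.Ico (0:ℝ) 1) {k : ℕ} (hk : k < NN L m) :
    Gq L x k = Gfun L m (flr L x m) k := by
  rw [Gq, Gfun]
  by_cases h : k < L - 1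
  · rw [if_pos h, if_pos h]
  · rw [if_neg h, if_neg h]
    have ht : (k - (L-1)) / L < m := by
      apply Nat.div_lt_of_lt_mul
      rw [NN] at hk
      rw [Nat.mul_comm L m]
      omega
    rw [← flr_div hL hx ht.le]

/-- the fiber of the query map: those `x` with relative dyadic cell `c`. -/
def Acell (L m c : ℕ) : Set ℝ := {x | x ∈ Set.Ico (0:ℝ) 1 ∧ flr L x m = c}

lemma xL_eq (x : ℝ) : x * L = (j0 L x : ℝ) + uu L x := by rw [uu]; ring

lemma Acell_eq (hL : 2 ≤ L) {c : ℕ} (hc : c < 2 ^ m) :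
    Acell L m c = ⋃ j : Fin L,
      Set.Ico ((((j:ℕ):ℝ) + (c:ℝ) / 2 ^ m) / L) ((((j:ℕ):ℝ) + ((c:ℝ) + 1) / 2 ^ m) / L) := by
  have hL0 : (0:ℝ) < L := hLpos hL
  have hp : (0:ℝ) < 2 ^ m := by positivity
  have hcR : (c:ℝ) + 1 ≤ 2 ^ m := by
    have : (c + 1 : ℕ) ≤ 2 ^ m := hc
    have := (Nat.cast_le (α := ℝ)).mpr this
    push_cast at this
    linarith
  ext x
  simp only [Acell, Set.mem_setOf_eq, Set.mem_iUnion, Set.mem_Ico]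
  constructor
  · rintro ⟨hx, hflr⟩
    have h1 : (c : ℝ) ≤ uu L x * 2 ^ m := by
      rw [← hflr]; exact flr_le hL hx m
    have h2 : uu L x * 2 ^ m < (c : ℝ) + 1 := by
      rw [← hflr]; exact flr_lt_add m
    refine ⟨⟨j0 L x, j0_lt hL hx⟩, ?_, ?_⟩
    · show (((j0 L x : ℕ):ℝ) + (c:ℝ) / 2 ^ m) / L ≤ x
      rw [div_le_iff₀ hL0, xL_eq, add_le_add_iff_left, div_le_iff₀ hp]
      exact h1
    · show x < (((j0 L x : ℕ):ℝ) + ((c:ℝ) + 1) / 2 ^ m) / L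
      rw [lt_div_iff₀ hL0, xL_eq, add_lt_add_iff_left, lt_div_iff₀ hp]
      exact h2
  · rintro ⟨j, hj1, hj2⟩
    have hjL : (j:ℕ) < L := j.isLt
    have hjL' : ((j:ℕ) : ℝ) ≤ (L:ℝ) - 1 := by
      have : (j:ℕ) + 1 ≤ L := hjL
      have := (Nat.cast_le (α := ℝ)).mpr this
      push_cast at this
      linarith
    have hc0 : (0:ℝ) ≤ (c:ℝ) / 2 ^ m := by positivity
    have hxL1 : ((j:ℕ):ℝ) + (c:ℝ) / 2 ^ m ≤ x * L := (div_le_iff₀ hL0).mp hj1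
    have hxL2 : x * L < ((j:ℕ):ℝ) + ((c:ℝ) + 1) / 2 ^ m := (lt_div_iff₀ hL0).mp hj2
    have hcd : ((c:ℝ) + 1) / 2 ^ m ≤ 1 := by rw [div_le_one hp]; linarith
    have hx : x ∈ Set.Ico (0:ℝ) 1 := by
      constructor
      · have h0 : (0:ℝ) ≤ (((j:ℕ):ℝ) + (c:ℝ) / 2 ^ m) / L := by positivity
        linarith [hj1]
      · have hhi : ((((j:ℕ):ℝ)) + ((c:ℝ) + 1) / 2 ^ m) / L ≤ 1 := by
          rw [div_le_one hL0]
          linarith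
        linarith [hj2]
    have h0xL : (0:ℝ) ≤ x * L := mul_nonneg hx.1 hL0.le
    have hj0 : j0 L x = (j:ℕ) := by
      rw [j0, Nat.floor_eq_iff h0xL]
      constructor
      · linarith
      · linarith
    have huu : uu L x = x * L - ((j:ℕ):ℝ) := by rw [uu, hj0]
    refine ⟨hx, ?_⟩
    rw [flr, Nat.floor_eq_iff (by nlinarith [hxL1] : (0:ℝ) ≤ uu L x * 2 ^ m)]
    constructor
    · rw [huu]
      have : (c:ℝ) / 2 ^ m ≤ x * L - ((j:ℕ):ℝ) := by linarith
      calc (c:ℝ) = (c:ℝ) / 2 ^ m * 2 ^ m := by field_simp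
      _ ≤ (x * L - ((j:ℕ):ℝ)) * 2 ^ m := by
            apply mul_le_mul_of_nonneg_right this hp.le
    · rw [huu]
      have : x * L - ((j:ℕ):ℝ) < ((c:ℝ) + 1) / 2 ^ m := by linarith
      calc (x * L - ((j:ℕ):ℝ)) * 2 ^ m < ((c:ℝ) + 1) / 2 ^ m * 2 ^ m := by
            apply mul_lt_mul_of_pos_right this hp
      _ = (c:ℝ) + 1 := by field_simp

lemma Acell_measurable (hL : 2 ≤ L) {c : ℕ} (hc : c < 2 ^ m) :
    MeasurableSet (Acell L m c) := by
  rw [Acell_eq hL hc]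
  exact MeasurableSet.iUnion fun j => measurableSet_Ico

lemma Ico_eq_union (hL : 2 ≤ L) :
    Set.Ico (0:ℝ) 1 = ⋃ c ∈ Finset.range (2 ^ m), Acell L m c := by
  ext x
  simp only [Set.mem_iUnion, Finset.mem_range, exists_prop]
  constructor
  · intro hx
    exact ⟨flr L x m, flr_lt_pow hL hx m, hx, rfl⟩
  · rintro ⟨c, _, hx, _⟩
    exact hx

lemma Acell_disjoint :
    (↑(Finset.range (2 ^ m)) : Set ℕ).PairwiseDisjoint (Acell L m) := by
  intro a _ b _ hab
  rw [Function.onFun, Set.disjoint_left]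
  rintro x ⟨_, ha⟩ ⟨_, hb⟩
  exact hab (ha ▸ hb ▸ rfl)

lemma two_cells {w Li a b l1 : ℝ} (hw : 0 < w) (hwL : w ≤ Li) (hab : b - a ≤ Li) :
    max (min b (l1 + w) - max a l1) 0 + max (min b (l1 + Li + w) - max a (l1 + Li)) 0 ≤ w := by
  rcases le_or_gt (min b (l1 + Li + w) - max a (l1 + Li)) 0 with h2 | h2
  · rw [max_eq_right h2]
    have e1 := min_le_right b (l1 + w)
    have e2 := le_max_right a l1
    have : min b (l1 + w) - max a l1 ≤ w := by linarith
    rw [add_zero]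
    exact max_le this hw.le
  · rcases le_or_gt (min b (l1 + w) - max a l1) 0 with h1 | h1
    · rw [max_eq_right h1, zero_add]
      have e1 := min_le_right b (l1 + Li + w)
      have e2 := le_max_right a (l1 + Li)
      have : min b (l1 + Li + w) - max a (l1 + Li) ≤ w := by linarith
      exact max_le this hw.le
    · rw [max_eq_left h1.le, max_eq_left h2.le]
      have e1 := min_le_right b (l1 + w)
      have e2 := le_max_left a l1
      have e3 := min_le_left b (l1 + Li + w)
      have e4 := le_max_right a (l1 + Li)
      linarith

lemma Acell_inter_le (hL : 2 ≤ L) {c : ℕ} (hc : c < 2 ^ m) (a b : ℝ)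
    (hab : b - a ≤ 1 / L) :
    MeasureTheory.volume (Acell L m c ∩ Set.Icc a b)
      ≤ ENNReal.ofReal (1 / ((L:ℝ) * 2 ^ m)) := by
  classical
  have hL0 : (0:ℝ) < L := hLpos hL
  have hp : (0:ℝ) < 2 ^ m := by positivity
  set w : ℝ := 1 / ((L:ℝ) * 2 ^ m) with hwdef
  have hw : 0 < w := by positivity
  have h2m1 : (1:ℝ) ≤ 2 ^ m := one_le_pow₀ one_le_two
  have hwL : w ≤ 1 / L := by
    rw [hwdef, div_le_div_iff₀ (by positivity) hL0]
    nlinarith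
  set q : ℝ := (c:ℝ) / ((L:ℝ) * 2 ^ m) with hq
  set J : ℤ := ⌊(a - q) * L⌋ with hJdef
  set lJ : ℝ := (J:ℝ) / L + q with hlJ
  have hJ1 : (J:ℝ) ≤ (a - q) * L := Int.floor_le _
  have hJ2 : (a - q) * L < J + 1 := Int.lt_floor_add_one _
  have hwl1 : w * L ≤ 1 := by
    have : w * L = 1 / 2 ^ m := by rw [hwdef]; field_simp
    rw [this, div_le_one hp]
    exact h2m1
  have hcov : Acell L m c ∩ Set.Icc a b ⊆
      Set.Icc (max a lJ) (min b (lJ + w)) ∪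
        Set.Icc (max a (lJ + 1/L)) (min b (lJ + 1/L + w)) := by
    rintro x ⟨hxA, hxa, hxb⟩
    rw [Acell_eq hL hc] at hxA
    obtain ⟨j, hj⟩ := Set.mem_iUnion.mp hxA
    rw [Set.mem_Ico] at hj
    set D : ℝ := ((j:ℕ):ℝ) with hD
    have hx1 : D / L + q ≤ x := by
      refine le_trans (le_of_eq ?_) hj.1
      rw [hq]
      field_simp
    have hx2 : x < D / L + q + w := by
      refine lt_of_lt_of_le hj.2 (le_of_eq ?_)
      rw [hq, hwdef]
      field_simp
      ring
    have hlow : (J:ℝ) - 1 < D := by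
      have h1 : a - q - w < D / L := by linarith
      have h2 : (a - q - w) * L < D := (lt_div_iff₀ hL0).mp h1
      have h3 : (a - q - w) * L = (a - q) * L - w * L := by ring
      linarith
    have hhigh : D < (J:ℝ) + 2 := by
      have h1 : D / L ≤ a + 1/L - q := by linarith
      have h2 : D ≤ (a + 1/L - q) * L := (div_le_iff₀ hL0).mp h1
      have h3 : (a + 1/L - q) * L = (a - q) * L + 1 := by field_simp; ring
      linarith
    have hji : (((j:ℕ):ℤ) = J) ∨ (((j:ℕ):ℤ) = J + 1) := by
      have l1 : J - 1 < ((j:ℕ):ℤ) := by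
        have := hlow; rw [hD] at this; exact_mod_cast this
      have l2 : ((j:ℕ):ℤ) < J + 2 := by
        have := hhigh; rw [hD] at this; exact_mod_cast this
      omega
    rcases hji with hji | hji
    · left
      have hDJ : D = (J:ℝ) := by rw [hD]; exact_mod_cast hji
      rw [Set.mem_Icc]
      constructor
      · exact max_le hxa (by rw [hlJ, ← hDJ]; exact hx1)
      · exact le_min hxb (by rw [hlJ, ← hDJ]; exact hx2.le)
    · right
      have hDJ : D = (J:ℝ) + 1 := by rw [hD]; exact_mod_cast hji
      have e1 : lJ + 1/L = D / L + q := by rw [hlJ, hDJ]; field_simp; ring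
      rw [Set.mem_Icc]
      constructor
      · exact max_le hxa (by rw [e1]; exact hx1)
      · exact le_min hxb (by rw [e1]; exact hx2.le)
  calc MeasureTheory.volume (Acell L m c ∩ Set.Icc a b)
      ≤ MeasureTheory.volume (Set.Icc (max a lJ) (min b (lJ + w)) ∪
          Set.Icc (max a (lJ + 1/L)) (min b (lJ + 1/L + w))) :=
        MeasureTheory.measure_mono hcov
  _ ≤ MeasureTheory.volume (Set.Icc (max a lJ) (min b (lJ + w)))
        + MeasureTheory.volume (Set.Icc (max a (lJ + 1/L)) (min b (lJ + 1/L + w))) :=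
        MeasureTheory.measure_union_le _ _
  _ = ENNReal.ofReal (min b (lJ + w) - max a lJ)
        + ENNReal.ofReal (min b (lJ + 1/L + w) - max a (lJ + 1/L)) := by
        rw [Real.volume_Icc, Real.volume_Icc]
  _ ≤ ENNReal.ofReal (max (min b (lJ + w) - max a lJ) 0)
        + ENNReal.ofReal (max (min b (lJ + 1/L + w) - max a (lJ + 1/L)) 0) :=
        add_le_add (ENNReal.ofReal_le_ofReal (le_max_left _ _))
          (ENNReal.ofReal_le_ofReal (le_max_left _ _))
  _ = ENNReal.ofReal (max (min b (lJ + w) - max a lJ) 0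
        + max (min b (lJ + 1/L + w) - max a (lJ + 1/L)) 0) :=
        (ENNReal.ofReal_add (le_max_right _ _) (le_max_right _ _)).symm
  _ ≤ ENNReal.ofReal w := ENNReal.ofReal_le_ofReal (two_cells hw hwL hab)
lemma ballz (x d : ℝ) : {z : ℝ | |z - x| ≤ d} = Set.Icc (x - d) (x + d) := by
  ext z'
  simp only [Set.mem_setOf_eq, Set.mem_Icc, abs_le]
  constructor <;> intro h <;> constructor <;> linarith [h.1, h.2]

lemma ballx (z d : ℝ) : {x : ℝ | |z - x| ≤ d} = Set.Icc (z - d) (z + d) := by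
  ext x
  simp only [Set.mem_setOf_eq, Set.mem_Icc, abs_le]
  constructor <;> intro h <;> constructor <;> linarith [h.1, h.2]

lemma phi_private (hL : 2 ≤ L) {ε δ : ℝ} (hδ0 : 0 < δ) (hδL : δ ≤ 1 / (L:ℝ))
    (hw : 1 / ((L:ℝ) * 2 ^ m) ≤ ε) :
    BPrivate ε δ L (phi L m hL) := by
  classical
  have hL0 : (0:ℝ) < L := hLpos hL
  have hp : (0:ℝ) < 2 ^ m := by positivity
  constructor
  · -- Bayesian accuracy
    intro y
    have : {x | x ∈ Set.Ico (0:ℝ) 1 ∧ ¬ |(phi L m hL).estim x y - x| ≤ ε / 2} = ∅ := by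
      ext x
      simp only [Set.mem_setOf_eq, Set.mem_empty_iff_false, iff_false, not_and, not_not]
      intro hx
      exact phi_acc hL hw hx y
    rw [this]
    exact MeasureTheory.measure_empty
  · -- privacy
    intro ψ hprob hsupp
    rw [Fin.sum_univ_one]
    set y : Fin 1 := 0
    have hmeas : ∀ c ∈ Finset.range (2 ^ m), MeasurableSet (Acell L m c) := by
      intro c hc
      exact Acell_measurable hL (Finset.mem_range.mp hc)
    rw [show Set.Ico (0:ℝ) 1 = ⋃ c ∈ Finset.range (2 ^ m), Acell L m c from Ico_eq_union hL]
    rw [MeasureTheory.lintegral_biUnion_finset Acell_disjoint hmeas]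
    have hbound : ∀ c ∈ Finset.range (2 ^ m),
        (∫⁻ x in Acell L m c, ψ ((phi L m hL).queries x y) {z | |z - x| ≤ δ / 2})
          ≤ ENNReal.ofReal (1 / ((L:ℝ) * 2 ^ m)) := by
      intro c hcmem
      have hc : c < 2 ^ m := Finset.mem_range.mp hcmem
      set ν := ψ (fun k : Fin (NN L m) => Gfun L m c (k : ℕ)) with hν
      haveI : MeasureTheory.IsProbabilityMeasure ν := hprob _
      have hcongr : (∫⁻ x in Acell L m c, ψ ((phi L m hL).queries x y) {z | |z - x| ≤ δ / 2})
          = ∫⁻ x in Acell L m c, ν {z | |z - x| ≤ δ / 2} := by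
        apply MeasureTheory.setLIntegral_congr_fun (Acell_measurable hL hc)
        rintro x ⟨hx, hflr⟩
        beta_reduce
        rw [queries_eq hL hx y, hν]
        have heq : (fun k : Fin (NN L m) => Gq L x (k:ℕ))
            = fun k : Fin (NN L m) => Gfun L m c (k:ℕ) := by
          funext k
          rw [Gq_eq_Gfun hL hx k.isLt, hflr]
        rw [heq]
      rw [hcongr]
      -- Fubini
      set D : Set (ℝ × ℝ) := {p : ℝ × ℝ | |p.2 - p.1| ≤ δ / 2} with hD
      have hDmeas : MeasurableSet D := by
        apply measurableSet_le ((measurable_snd.sub measurable_fst).abs) measurable_const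
      have hswap : (∫⁻ x in Acell L m c, ν {z | |z - x| ≤ δ / 2})
          = ∫⁻ z, (MeasureTheory.volume.restrict (Acell L m c)) {x : ℝ | |z - x| ≤ δ / 2} ∂ν := by
        have e1 : (∫⁻ x in Acell L m c, ν {z | |z - x| ≤ δ / 2})
            = ∫⁻ x in Acell L m c, ∫⁻ z, D.indicator (fun _ => (1:ℝ≥0∞)) (x, z) ∂ν := by
          apply MeasureTheory.lintegral_congr
          intro x
          have : (fun z => D.indicator (fun _ => (1:ℝ≥0∞)) (x, z))
              = ({z : ℝ | |z - x| ≤ δ / 2}).indicator (1 : ℝ → ℝ≥0∞) := by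
            funext z
            simp only [Set.indicator_apply, hD, Set.mem_setOf_eq, Pi.one_apply]
          rw [this]
          exact (MeasureTheory.lintegral_indicator_one
            (by rw [ballz]; exact measurableSet_Icc)).symm
        rw [e1]
        rw [MeasureTheory.lintegral_lintegral_swap]
        · apply MeasureTheory.lintegral_congr
          intro z
          have : (fun x => D.indicator (fun _ => (1:ℝ≥0∞)) (x, z))
              = ({x : ℝ | |z - x| ≤ δ / 2}).indicator (1 : ℝ → ℝ≥0∞) := by
            funext x
            simp only [Set.indicator_apply, hD, Set.mem_setOf_eq, Pi.one_apply]
          rw [this]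
          exact MeasureTheory.lintegral_indicator_one
            (by rw [ballx]; exact measurableSet_Icc)
        · exact (Measurable.indicator measurable_const hDmeas).aemeasurable
      rw [hswap]
      calc ∫⁻ z, (MeasureTheory.volume.restrict (Acell L m c)) {x : ℝ | |z - x| ≤ δ / 2} ∂ν
          ≤ ∫⁻ _, ENNReal.ofReal (1 / ((L:ℝ) * 2 ^ m)) ∂ν := by
            apply MeasureTheory.lintegral_mono
            intro z
            dsimp only
            rw [ballx, MeasureTheory.Measure.restrict_apply' (Acell_measurable hL hc)]
            rw [Set.inter_comm]
            apply Acell_inter_le hL hc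
            linarith
      _ = ENNReal.ofReal (1 / ((L:ℝ) * 2 ^ m)) := by
            rw [MeasureTheory.lintegral_const, MeasureTheory.measure_univ, mul_one]
    calc (∑ c ∈ Finset.range (2 ^ m),
          ∫⁻ x in Acell L m c, ψ ((phi L m hL).queries x y) {z | |z - x| ≤ δ / 2})
        ≤ ∑ c ∈ Finset.range (2 ^ m), ENNReal.ofReal (1 / ((L:ℝ) * 2 ^ m)) :=
          Finset.sum_le_sum hbound
    _ = (2 ^ m : ℕ) • ENNReal.ofReal (1 / ((L:ℝ) * 2 ^ m)) := by
          rw [Finset.sum_const, Finset.card_range]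
    _ = ((2 ^ m : ℕ) : ℝ≥0∞) * ENNReal.ofReal (1 / ((L:ℝ) * 2 ^ m)) := by
          rw [nsmul_eq_mul]
    _ = ENNReal.ofReal (((2 ^ m : ℕ) : ℝ) * (1 / ((L:ℝ) * 2 ^ m))) := by
          rw [ENNReal.ofReal_mul (by positivity), ENNReal.ofReal_natCast]
    _ = ENNReal.ofReal (((L:ℝ))⁻¹) := by
          congr 1
          push_cast
          field_simp
    _ = ((1:ℕ) : ℝ≥0∞) * ((L : ℝ≥0∞))⁻¹ := by
          rw [ENNReal.ofReal_inv_of_pos hL0, ENNReal.ofReal_natCast, Nat.cast_one, one_mul]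
end BQC

open MeasureTheory ENNReal

/-- with `v*` uniform on `[0,1)`,
`⌈log₂(1/ε)⌉ ≤ N_B*(ε,δ,L) ≤ L·⌈log₂(1/(Lε))⌉ + L − 1`. -/
theorem bayesian_query_complexity (ε δ : ℝ) (L : ℕ) (hL : 2 ≤ L)
    (hε : 0 < ε) (hδ : 0 < δ) (h1 : 2 * ε < δ) (h2 : δ ≤ 1 / (L : ℝ)) :
    ⌈Real.logb 2 (1 / ε)⌉ ≤ (NBstar ε δ L : ℤ) ∧
    (NBstar ε δ L : ℤ) ≤ (L : ℤ) * ⌈Real.logb 2 (1 / ((L : ℝ) * ε))⌉ + (L : ℤ) - 1 := by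
  classical
  have hL0 : (0:ℝ) < L := hLpos hL
  set lb := Real.logb 2 (1 / ((L:ℝ) * ε)) with hlb
  set m : ℕ := (⌈lb⌉).toNat with hm
  have h2e : 2 * ε < 1 / (L:ℝ) := lt_of_lt_of_le h1 h2
  have hinv : (1 / (L:ℝ)) * L = 1 := by field_simp
  have hLε : (L:ℝ) * ε < 1/2 := by nlinarith [mul_lt_mul_of_pos_right h2e hL0]
  have h2lt : (2:ℝ) < 1 / ((L:ℝ) * ε) := by
    rw [lt_div_iff₀ (by positivity)]
    nlinarith
  have hlb1 : 1 < lb := by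
    rw [hlb]
    calc (1:ℝ) = Real.logb 2 2 := (Real.logb_self_eq_one one_lt_two).symm
    _ < _ := Real.logb_lt_logb one_lt_two two_pos h2lt
  have hceil1 : 1 ≤ ⌈lb⌉ := by
    have h := Int.le_ceil lb
    have : (1:ℝ) < (⌈lb⌉:ℝ) := lt_of_lt_of_le hlb1 h
    exact_mod_cast this.le
  have hmZ : (m:ℤ) = ⌈lb⌉ := Int.toNat_of_nonneg (by omega)
  have hmR : lb ≤ (m:ℝ) := by
    have h := Int.le_ceil lb
    have h2' : ((⌈lb⌉:ℤ):ℝ) = (m:ℝ) := by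
      rw [← hmZ]
      push_cast
      ring
    linarith
  have hw : 1 / ((L:ℝ) * 2 ^ m) ≤ ε := by
    have hx0 : (0:ℝ) < 1 / ((L:ℝ) * ε) := by positivity
    have hpow : 1 / ((L:ℝ) * ε) ≤ 2 ^ (m:ℝ) := by
      calc 1 / ((L:ℝ) * ε) = (2:ℝ) ^ lb := (Real.rpow_logb two_pos (by norm_num) hx0).symm
      _ ≤ (2:ℝ) ^ (m:ℝ) := Real.rpow_le_rpow_of_exponent_le one_le_two hmR
    rw [Real.rpow_natCast] at hpow
    have hpm : (0:ℝ) < 2 ^ m := by positivity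
    rw [div_le_iff₀ (by positivity)] at hpow ⊢
    nlinarith
  have hpriv := phi_private (m := m) hL hδ h2 hw
  have hmem : NN L m ∈ {N : ℕ | ∃ Y : ℕ, 0 < Y ∧ ∃ φ : Strategy N Y, BPrivate ε δ L φ} :=
    ⟨1, one_pos, phi L m hL, hpriv⟩
  have hub : NBstar ε δ L ≤ NN L m := Nat.sInf_le hmem
  constructor
  · -- lower bound
    have hne : {N : ℕ | ∃ Y, 0 < Y ∧ ∃ φ : Strategy N Y, BPrivate ε δ L φ}.Nonempty :=
      ⟨_, hmem⟩
    obtain ⟨Y, hY, φ, hφ⟩ := Nat.sInf_mem hne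
    set N := NBstar ε δ L with hN
    have y0 : Fin Y := ⟨0, hY⟩
    have hbad := hφ.1 y0
    have hsub : Set.Ico (0:ℝ) 1 ⊆
        {x | x ∈ Set.Ico (0:ℝ) 1 ∧ ¬ |φ.estim x y0 - x| ≤ ε/2} ∪
          ⋃ r : Fin N → Bool,
            Set.Icc (φ.estimate r y0 - ε/2) (φ.estimate r y0 + ε/2) := by
      intro x hx
      by_cases hgood : |φ.estim x y0 - x| ≤ ε/2
      · right
        refine Set.mem_iUnion.mpr ⟨φ.resps x y0 N, ?_⟩
        have h := abs_le.mp hgood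
        have he : φ.estim x y0 = φ.estimate (φ.resps x y0 N) y0 := rfl
        rw [Set.mem_Icc, ← he]
        constructor
        · linarith [h.1, h.2]
        · linarith [h.1, h.2]
      · left
        exact ⟨hx, hgood⟩
    have hvol : (1:ℝ≥0∞) ≤ ((2^N : ℕ) : ℝ≥0∞) * ENNReal.ofReal ε := by
      have h01 : MeasureTheory.volume (Set.Ico (0:ℝ) 1) = 1 := by
        rw [Real.volume_Ico]
        norm_num
      calc (1:ℝ≥0∞) = MeasureTheory.volume (Set.Ico (0:ℝ) 1) := h01.symm
      _ ≤ MeasureTheory.volume ({x | x ∈ Set.Ico (0:ℝ) 1 ∧ ¬ |φ.estim x y0 - x| ≤ ε/2} ∪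
            ⋃ r : Fin N → Bool,
              Set.Icc (φ.estimate r y0 - ε/2) (φ.estimate r y0 + ε/2)) :=
          MeasureTheory.measure_mono hsub
      _ ≤ MeasureTheory.volume {x | x ∈ Set.Ico (0:ℝ) 1 ∧ ¬ |φ.estim x y0 - x| ≤ ε/2}
            + MeasureTheory.volume (⋃ r : Fin N → Bool,
              Set.Icc (φ.estimate r y0 - ε/2) (φ.estimate r y0 + ε/2)) :=
          MeasureTheory.measure_union_le _ _
      _ ≤ 0 + ∑ r : Fin N → Bool,
            MeasureTheory.volume (Set.Icc (φ.estimate r y0 - ε/2) (φ.estimate r y0 + ε/2)) :=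
          add_le_add hbad.le (MeasureTheory.measure_iUnion_fintype_le _ _)
      _ = ∑ _r : Fin N → Bool, ENNReal.ofReal ε := by
          rw [zero_add]
          apply Finset.sum_congr rfl
          intro r _
          rw [Real.volume_Icc]
          congr 1
          ring
      _ = ((2^N : ℕ) : ℝ≥0∞) * ENNReal.ofReal ε := by
          rw [Finset.sum_const, nsmul_eq_mul]
          congr 2
          simp [Fintype.card_fun]
    have hreal : (1:ℝ) ≤ 2^N * ε := by
      rw [show ((2^N : ℕ) : ℝ≥0∞) * ENNReal.ofReal ε = ENNReal.ofReal ((2^N : ℕ) * ε) from by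
        rw [ENNReal.ofReal_mul (by positivity), ENNReal.ofReal_natCast]] at hvol
      have := ENNReal.one_le_ofReal.mp hvol
      push_cast at this
      linarith
    have hlogN : Real.logb 2 (1/ε) ≤ ((N:ℤ):ℝ) := by
      rw [Real.logb_le_iff_le_rpow one_lt_two (by positivity)]
      push_cast
      rw [Real.rpow_natCast, div_le_iff₀ hε]
      linarith
    exact Int.ceil_le.mpr hlogN
  · -- upper bound
    have hcast : ((NN L m : ℕ):ℤ) = (L:ℤ) * (m:ℤ) + (L:ℤ) - 1 := by
      rw [NN]
      push_cast [Nat.cast_sub (show 1 ≤ L by omega)]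
      ring
    calc (NBstar ε δ L : ℤ) ≤ ((NN L m : ℕ) : ℤ) := by exact_mod_cast hub
    _ = (L:ℤ) * (m:ℤ) + (L:ℤ) - 1 := hcast
    _ = (L:ℤ) * ⌈lb⌉ + (L:ℤ) - 1 := by rw [hmZ]
end
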